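/- arXiv:1602.08023 — 6 statements merged into one kernel-verified Lean document; each statement's English description precedes it below -/
import Mathlib

section
/- Let I be a facility assignment instance with n agents and facilities of total capacity at least n on a metric space. For any ordering of the agents and any tie-breaking, the assignment S produced by Serial Dictatorship on I satisfies SC(S, I) ≤ (2^n − 1) · SC_OPT(I), where SC_OPT(I) is the minimum social cost of any capacity-respecting assignment of agents to facilities on I. -/
/-- A facility assignment instance: `n` agents with most-preferred points `A`,
`m` facilities at points `F` with capacities `c`. -/
structure FAInstance (X : Type*) (n m : ℕ) where
  A : Fin n → X
  F : Fin m → X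
  c : Fin m → ℕ

/-- An assignment is valid if no facility receives more agents than its capacity. -/
def ValidAssignment {X : Type*} {n m : ℕ} (I : FAInstance X n m)
    (S : Fin n → Fin m) : Prop :=
  ∀ j : Fin m, (Finset.univ.filter (fun i => S i = j)).card ≤ I.c j

/-- The social cost of an assignment: the sum of agents' distances to their facilities. -/
noncomputable def socialCost {X : Type*} [MetricSpace X] {n m : ℕ}
    (I : FAInstance X n m) (S : Fin n → Fin m) : ℝ :=
  ∑ i, dist (I.A i) (I.F (S i))

/-- The `g`-augmented instance: every capacity is multiplied by `g`. -/
def FAInstance.augment {X : Type*} {n m : ℕ} (I : FAInstance X n m) (g : ℕ) :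
    FAInstance X n m :=
  ⟨I.A, I.F, fun j => g * I.c j⟩

/-- `S` is an outcome of Serial Dictatorship run with the ordering `σ`
(`σ t` is the agent served at time `t`): the assignment is valid, and each agent is
assigned to a facility at minimum distance among the facilities that still have
residual capacity when her turn comes. -/
def IsSDWithOrder {X : Type*} [MetricSpace X] {n m : ℕ} (I : FAInstance X n m)
    (σ : Equiv.Perm (Fin n)) (S : Fin n → Fin m) : Prop :=
  ValidAssignment I S ∧
  ∀ t : Fin n, ∀ j : Fin m,
    (Finset.univ.filter (fun s : Fin n => s < t ∧ S (σ s) = j)).card < I.c j →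
    dist (I.A (σ t)) (I.F (S (σ t))) ≤ dist (I.A (σ t)) (I.F j)

/-- `S` is an outcome of Serial Dictatorship for some ordering of the agents
and some tie-breaking. -/
def IsSDAssignment {X : Type*} [MetricSpace X] {n m : ℕ} (I : FAInstance X n m)
    (S : Fin n → Fin m) : Prop :=
  ∃ σ : Equiv.Perm (Fin n), IsSDWithOrder I σ S

open Finset

lemma card_filter_fin_succ {n : ℕ} (P : Fin (n+1) → Prop) [DecidablePred P] :
    (univ.filter P).card
      = (if P 0 then 1 else 0) + (univ.filter fun i : Fin n => P i.succ).card := by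
  rw [Finset.card_filter, Finset.card_filter, Fin.sum_univ_succ]

lemma sd_key : ∀ (n : ℕ) {X : Type*} [MetricSpace X] {m : ℕ} (I : FAInstance X n m)
    (S : Fin n → Fin m), IsSDWithOrder I 1 S → ∀ O : Fin n → Fin m, ValidAssignment I O →
    socialCost I S ≤ (2 ^ n - 1) * socialCost I O := by
  intro n
  induction n with
  | zero => intro X _ m I S _ O _; simp [socialCost]
  | succ n ih =>
    intro X _ m I S hS O hO
    -- notation
    have hcj : 1 ≤ I.c (S 0) := by
      have h1 : 1 ≤ (univ.filter (fun i => S i = S 0)).card :=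
        Finset.card_pos.mpr ⟨0, by simp⟩
      exact le_trans h1 (hS.1 (S 0))
    have hco : 1 ≤ I.c (O 0) := by
      have h1 : 1 ≤ (univ.filter (fun i => O i = O 0)).card :=
        Finset.card_pos.mpr ⟨0, by simp⟩
      exact le_trans h1 (hO (O 0))
    -- first agent optimality
    have hd1c1 : dist (I.A 0) (I.F (S 0)) ≤ dist (I.A 0) (I.F (O 0)) := by
      have hemp : (univ.filter fun s : Fin (n+1) =>
          s < 0 ∧ S ((1 : Equiv.Perm (Fin (n+1))) s) = O 0) = ∅ := by
        apply Finset.filter_false_of_mem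
        intro s _ h
        exact absurd h.1 (Fin.not_lt_zero s)
      have h := hS.2 0 (O 0) (by rw [hemp, Finset.card_empty]; omega)
      simpa using h
    -- reduced instance
    set J : FAInstance X n m :=
      ⟨fun i => I.A i.succ, I.F, fun j => if j = S 0 then I.c j - 1 else I.c j⟩ with hJ
    have hJS : IsSDWithOrder J 1 (fun i => S i.succ) := by
      constructor
      · intro j
        have h := hS.1 j
        rw [card_filter_fin_succ (fun i => S i = j)] at h
        show (univ.filter fun i : Fin n => S i.succ = j).card
          ≤ if j = S 0 then I.c j - 1 else I.c j
        by_cases hjj : j = S 0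
        · subst hjj
          rw [if_pos rfl] at h ⊢
          omega
        · rw [if_neg hjj]
          rw [if_neg (fun hh => hjj hh.symm)] at h
          omega
      · intro t j h
        simp only [Equiv.Perm.one_apply] at h ⊢
        have h2 := hS.2 t.succ j
        simp only [Equiv.Perm.one_apply] at h2
        apply h2
        refine lt_of_eq_of_lt (card_filter_fin_succ (fun s : Fin (n+1) => s < t.succ ∧ S s = j)) ?_
        simp only [Fin.succ_pos, true_and, Fin.succ_lt_succ_iff]
        show (if S 0 = j then 1 else 0) +
          (univ.filter fun s : Fin n => s < t ∧ S s.succ = j).card < I.c j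
        replace h : (univ.filter fun s : Fin n => s < t ∧ S s.succ = j).card
            < (if j = S 0 then I.c j - 1 else I.c j) := h
        by_cases hjj : j = S 0
        · subst hjj
          rw [if_pos rfl]
          rw [if_pos rfl] at h
          omega
        · rw [if_neg (fun hh => hjj hh.symm)]
          rw [if_neg hjj] at h
          omega
    -- counting facts about O
    have hfull := hO (S 0)
    rw [card_filter_fin_succ (fun i => O i = S 0)] at hfull
    -- construct O'
    have hexists : ∃ O' : Fin n → Fin m, ValidAssignment J O' ∧
        socialCost J O' ≤ socialCost I O + dist (I.A 0) (I.F (S 0)) := by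
      by_cases hlt : (univ.filter fun i : Fin n => O i.succ = S 0).card < I.c (S 0)
      · refine ⟨fun i => O i.succ, ?_, ?_⟩
        · intro j
          have h := hO j
          rw [card_filter_fin_succ (fun i => O i = j)] at h
          show (univ.filter fun i : Fin n => O i.succ = j).card
            ≤ if j = S 0 then I.c j - 1 else I.c j
          by_cases hjj : j = S 0
          · subst hjj
            rw [if_pos rfl]
            omega
          · rw [if_neg hjj]
            omega
        · have hsc : socialCost I O
              = dist (I.A 0) (I.F (O 0)) + ∑ i : Fin n, dist (I.A i.succ) (I.F (O i.succ)) := by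
            rw [socialCost, Fin.sum_univ_succ]
          have : socialCost J (fun i => O i.succ)
              = ∑ i : Fin n, dist (I.A i.succ) (I.F (O i.succ)) := rfl
          rw [this, hsc]
          have := dist_nonneg (x := I.A 0) (y := I.F (O 0))
          have := dist_nonneg (x := I.A 0) (y := I.F (S 0))
          linarith
      · -- rerouting case
        have hcnt : (univ.filter fun i : Fin n => O i.succ = S 0).card = I.c (S 0) := by
          omega
        have hO0 : O 0 ≠ S 0 := by
          intro h
          rw [if_pos h] at hfull
          omega
        obtain ⟨i0, hi0⟩ : ∃ i0 : Fin n, O i0.succ = S 0 := by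
          have hpos : 0 < (univ.filter fun i : Fin n => O i.succ = S 0).card := by omega
          obtain ⟨x, hx⟩ := Finset.card_pos.mp hpos
          exact ⟨x, (Finset.mem_filter.mp hx).2⟩
        refine ⟨fun i => if i = i0 then O 0 else O i.succ, ?_, ?_⟩
        · -- validity
          intro j
          have key : (univ.filter fun i : Fin n =>
                (if i = i0 then O 0 else O i.succ) = j).card + (if S 0 = j then 1 else 0)
              = (univ.filter fun i : Fin n => O i.succ = j).card + (if O 0 = j then 1 else 0) := by
            rw [Finset.card_filter, Finset.card_filter,
              ← Finset.sum_erase_add _ _ (Finset.mem_univ i0),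
              ← Finset.sum_erase_add _ _ (Finset.mem_univ i0)]
            have h1 : ∑ i ∈ univ.erase i0, (if (if i = i0 then O 0 else O i.succ) = j then 1 else 0)
                = ∑ i ∈ univ.erase i0, (if O i.succ = j then 1 else 0) := by
              refine Finset.sum_congr rfl (fun i hi => ?_)
              rw [if_neg (Finset.mem_erase.mp hi).1]
            rw [h1, if_pos rfl, hi0]
            omega
          have h := hO j
          rw [card_filter_fin_succ (fun i => O i = j)] at h
          show (univ.filter fun i : Fin n => (if i = i0 then O 0 else O i.succ) = j).card
            ≤ if j = S 0 then I.c j - 1 else I.c j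
          by_cases hjj : j = S 0
          · subst hjj
            rw [if_pos rfl]
            rw [if_pos rfl] at key
            rw [if_neg hO0] at key
            rw [if_neg hO0] at h
            omega
          · rw [if_neg hjj]
            rw [if_neg (fun hh => hjj hh.symm)] at key
            by_cases hjo : O 0 = j
            · rw [if_pos hjo] at key
              rw [if_pos hjo] at h
              omega
            · rw [if_neg hjo] at key
              rw [if_neg hjo] at h
              omega
        · -- cost
          have hsc : socialCost I O
              = dist (I.A 0) (I.F (O 0)) + ∑ i : Fin n, dist (I.A i.succ) (I.F (O i.succ)) := by
            rw [socialCost, Fin.sum_univ_succ]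
          have hcost : socialCost J (fun i => if i = i0 then O 0 else O i.succ)
              = ∑ i : Fin n, dist (I.A i.succ) (I.F (if i = i0 then O 0 else O i.succ)) := rfl
          rw [hcost, hsc]
          rw [← Finset.sum_erase_add _ _ (Finset.mem_univ i0),
            ← Finset.sum_erase_add _ (fun i : Fin n => dist (I.A i.succ) (I.F (O i.succ)))
              (Finset.mem_univ i0)]
          have h1 : ∑ i ∈ univ.erase i0, dist (I.A i.succ) (I.F (if i = i0 then O 0 else O i.succ))
              = ∑ i ∈ univ.erase i0, dist (I.A i.succ) (I.F (O i.succ)) := by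
            refine Finset.sum_congr rfl (fun i hi => ?_)
            rw [if_neg (Finset.mem_erase.mp hi).1]
          rw [h1, if_pos rfl, hi0]
          have htri : dist (I.A i0.succ) (I.F (O 0))
              ≤ dist (I.A i0.succ) (I.F (S 0)) + dist (I.F (S 0)) (I.A 0)
                + dist (I.A 0) (I.F (O 0)) := dist_triangle4 _ _ _ _
          rw [dist_comm (I.F (S 0)) (I.A 0)] at htri
          linarith
    obtain ⟨O', hO'v, hO'c⟩ := hexists
    -- combine
    have hstep := ih J (fun i => S i.succ) hJS O' hO'v
    have hSC : socialCost I S = dist (I.A 0) (I.F (S 0)) + socialCost J (fun i => S i.succ) := by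
      rw [socialCost, Fin.sum_univ_succ]; rfl
    have hc1le : dist (I.A 0) (I.F (O 0)) ≤ socialCost I O :=
      Finset.single_le_sum (f := fun i => dist (I.A i) (I.F (O i)))
        (fun i _ => dist_nonneg) (Finset.mem_univ 0)
    have hd1le : dist (I.A 0) (I.F (S 0)) ≤ socialCost I O := le_trans hd1c1 hc1le
    have h2 : (1:ℝ) ≤ 2 ^ n := one_le_pow₀ one_le_two
    have hmul : (2 ^ n - 1 : ℝ) * socialCost J O'
        ≤ (2 ^ n - 1) * (socialCost I O + dist (I.A 0) (I.F (S 0))) :=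
      mul_le_mul_of_nonneg_left hO'c (by linarith)
    have hmul2 : (2:ℝ) ^ n * dist (I.A 0) (I.F (S 0)) ≤ 2 ^ n * socialCost I O :=
      mul_le_mul_of_nonneg_left hd1le (by linarith)
    rw [hSC, pow_succ]
    nlinarith [hstep, hmul, hmul2]

/-- Serial Dictatorship without resource augmentation has approximation ratio at most
`2 ^ n − 1` on facility assignment instances with `n` agents. -/
theorem sd_approx_no_augmentation {X : Type*} [MetricSpace X] {n m : ℕ}
    (I : FAInstance X n m) (hcap : n ≤ ∑ j, I.c j)
    (S : Fin n → Fin m) (hS : IsSDAssignment I S)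
    (O : Fin n → Fin m) (hO : ValidAssignment I O) :
    socialCost I S ≤ (2 ^ n - 1) * socialCost I O := by
  obtain ⟨σ, hσ⟩ := hS
  have cardcomp : ∀ (f : Fin n → Fin m) (j : Fin m),
      (univ.filter fun i => f (σ i) = j).card = (univ.filter fun i => f i = j).card := by
    intro f j
    rw [Finset.card_filter, Finset.card_filter]
    exact Equiv.sum_comp σ (fun i => if f i = j then 1 else 0)
  have e1 : socialCost I S
      = socialCost ⟨fun i => I.A (σ i), I.F, I.c⟩ (fun i => S (σ i)) :=
    (Equiv.sum_comp σ (fun i => dist (I.A i) (I.F (S i)))).symm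
  have e2 : socialCost I O
      = socialCost ⟨fun i => I.A (σ i), I.F, I.c⟩ (fun i => O (σ i)) :=
    (Equiv.sum_comp σ (fun i => dist (I.A i) (I.F (O i)))).symm
  rw [e1, e2]
  apply sd_key n
  · constructor
    · intro j
      show (univ.filter fun i => S (σ i) = j).card ≤ I.c j
      rw [cardcomp]
      exact hσ.1 j
    · intro t j h
      simp only [Equiv.Perm.one_apply] at h ⊢
      exact hσ.2 t j h
  · intro j
    show (univ.filter fun i => O (σ i) = j).card ≤ I.c j
    rw [cardcomp]
    exact hO j
end

section
/- Let g ≥ 3 be an integer, let I be a facility assignment instance, and let I_g be the g-augmented instance obtained from I by multiplying every facility capacity by g. For any ordering of the agents and any tie-breaking, the assignment S produced by Serial Dictatorship on I_g satisfies SC(S, I_g) ≤ (g/(g−2)) · SC_OPT(I), where SC_OPT(I) is the minimum social cost of any assignment on the original instance I. -/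
open Finset

/-- Auxiliary time-free version: if the SD assignment is "globally greedy" in the sense
that every agent prefers her facility to any facility that is not full at the very end,
then the `g/(g-2)` bound holds. -/
private lemma sd_aux {X : Type*} [MetricSpace X] {n m : ℕ}
    (g : ℕ) (hg : 3 ≤ g)
    (A : Fin n → X) (F : Fin m → X) (c : Fin m → ℕ)
    (hn : 0 < n) (hcap : n ≤ ∑ j, c j)
    (S O : Fin n → Fin m)
    (hvS : ∀ j, (univ.filter (fun i => S i = j)).card ≤ g * c j)
    (hvO : ∀ j, (univ.filter (fun i => O i = j)).card ≤ c j)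
    (hgr : ∀ i k, (univ.filter (fun i' => S i' = k)).card < g * c k →
      dist (A i) (F (S i)) ≤ dist (A i) (F k)) :
    ∑ i, dist (A i) (F (S i)) ≤ ((g : ℝ) / ((g : ℝ) - 2)) * ∑ i, dist (A i) (F (O i)) := by
  classical
  have hgR : (3 : ℝ) ≤ (g : ℝ) := by exact_mod_cast hg
  -- counts of SD agents per facility
  have hsum_cnt : ∑ j, (univ.filter (fun i => S i = j)).card = n := by
    rw [← Finset.card_eq_sum_card_fiberwise (f := S) (fun x _ => mem_univ (S x))]
    simp
  -- the set of facilities that are not full at the end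
  set avail : Finset (Fin m) :=
    univ.filter (fun j => (univ.filter (fun i => S i = j)).card < g * c j) with havail
  have hav : avail.Nonempty := by
    by_contra hne
    rw [Finset.not_nonempty_iff_eq_empty] at hne
    have hall : ∀ j, (univ.filter (fun i => S i = j)).card = g * c j := by
      intro j
      refine le_antisymm (hvS j) (le_of_not_gt fun hlt => ?_)
      have : j ∈ avail := by rw [havail]; exact mem_filter.2 ⟨mem_univ j, hlt⟩
      rw [hne] at this; exact absurd this (Finset.notMem_empty j)
    have h1 : n = g * ∑ j, c j := by
      rw [← hsum_cnt, Finset.mul_sum]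
      exact Finset.sum_congr rfl fun j _ => hall j
    have h2 : 3 * ∑ j, c j ≤ g * ∑ j, c j := Nat.mul_le_mul_right _ hg
    omega
  -- escape cost
  set h : Fin n → ℝ := fun i => avail.inf' hav (fun k => dist (A i) (F k)) with hh
  have h_nonneg : ∀ i, 0 ≤ h i := fun i => Finset.le_inf' hav _ (fun k _ => dist_nonneg)
  have h_le : ∀ i k, k ∈ avail → h i ≤ dist (A i) (F k) :=
    fun i k hk => Finset.inf'_le _ hk
  have h_eq : ∀ i, ∃ k ∈ avail, h i = dist (A i) (F k) := by
    intro i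
    obtain ⟨k, hk, hke⟩ := Finset.exists_mem_eq_inf' hav (fun k => dist (A i) (F k))
    exact ⟨k, hk, hke⟩
  have d_le_h : ∀ i, dist (A i) (F (S i)) ≤ h i := by
    intro i
    obtain ⟨k, hk, hke⟩ := h_eq i
    rw [hke]
    exact hgr i k (mem_filter.1 ((havail ▸ hk : k ∈ univ.filter _))).2
  -- key averaging step for agents whose optimal facility is full
  have key : ∀ i : Fin n, O i ∉ avail →
      h i ≤ dist (A i) (F (O i)) +
        (∑ i' ∈ univ.filter (fun i' => S i' = O i),
          (dist (A i') (F (S i')) + h i')) / ((g : ℝ) * (c (O i) : ℝ)) := by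
    intro i hOi
    have hE : (univ.filter (fun i' => S i' = O i)).card = g * c (O i) := by
      refine le_antisymm (hvS _) (le_of_not_gt fun hlt => hOi ?_)
      rw [havail]; exact mem_filter.2 ⟨mem_univ _, hlt⟩
    have hc1 : 1 ≤ c (O i) := by
      have hmem : i ∈ univ.filter (fun i' => O i' = O i) :=
        mem_filter.2 ⟨mem_univ i, rfl⟩
      have h1 : 0 < (univ.filter (fun i' => O i' = O i)).card :=
        Finset.card_pos.2 ⟨i, hmem⟩
      have h2 := hvO (O i)
      omega
    have hN : (0 : ℝ) < (g : ℝ) * (c (O i) : ℝ) := by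
      have : (0:ℝ) < (g:ℝ) := by linarith
      have : (0:ℝ) < (c (O i) : ℝ) := by exact_mod_cast hc1
      positivity
    have hstep : ∀ i' ∈ univ.filter (fun i' => S i' = O i),
        h i - dist (A i) (F (O i)) ≤ dist (A i') (F (S i')) + h i' := by
      intro i' hi'
      have hSi' : S i' = O i := (mem_filter.1 hi').2
      obtain ⟨k', hk', hke⟩ := h_eq i'
      have h1 : h i ≤ dist (A i) (F k') := h_le i k' hk'
      have t1 := dist_triangle (A i) (A i') (F k')
      have t2 := dist_triangle (A i) (F (O i)) (A i')
      have h3 : dist (F (O i)) (A i') = dist (A i') (F (S i')) := by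
        rw [hSi', dist_comm]
      rw [hke]
      linarith
    have hsum := Finset.sum_le_sum hstep
    rw [Finset.sum_const, hE, nsmul_eq_mul] at hsum
    push_cast at hsum
    have hdiv : h i - dist (A i) (F (O i)) ≤
        (∑ i' ∈ univ.filter (fun i' => S i' = O i),
          (dist (A i') (F (S i')) + h i')) / ((g : ℝ) * (c (O i) : ℝ)) := by
      rw [le_div_iff₀ hN, mul_comm]
      exact hsum
    linarith
  -- the charge function per facility
  set φ : Fin m → ℝ := fun k => if k ∈ avail then 0 else
      (∑ i' ∈ univ.filter (fun i' => S i' = k),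
        (dist (A i') (F (S i')) + h i')) / ((g : ℝ) * (c k : ℝ)) with hφ
  have hEnn : ∀ k : Fin m,
      0 ≤ ∑ i' ∈ univ.filter (fun i' => S i' = k), (dist (A i') (F (S i')) + h i') :=
    fun k => Finset.sum_nonneg fun i' _ => add_nonneg dist_nonneg (h_nonneg i')
  have h_le_oφ : ∀ i, h i ≤ dist (A i) (F (O i)) + φ (O i) := by
    intro i
    by_cases hOi : O i ∈ avail
    · have : φ (O i) = 0 := by rw [hφ]; simp [hOi]
      rw [this, add_zero]
      exact h_le i (O i) hOi
    · have : φ (O i) = (∑ i' ∈ univ.filter (fun i' => S i' = O i),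
          (dist (A i') (F (S i')) + h i')) / ((g : ℝ) * (c (O i) : ℝ)) := by
        rw [hφ]; simp [hOi]
      rw [this]
      exact key i hOi
  have hg0 : (0:ℝ) < (g:ℝ) := by linarith
  have φstep : ∀ k : Fin m, ∑ i ∈ univ.filter (fun i => O i = k), φ (O i) ≤
      (1 / (g:ℝ)) * ∑ i' ∈ univ.filter (fun i' => S i' = k),
        (dist (A i') (F (S i')) + h i') := by
    intro k
    have hRHSnn : 0 ≤ (1 / (g:ℝ)) * ∑ i' ∈ univ.filter (fun i' => S i' = k),
        (dist (A i') (F (S i')) + h i') := by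
      apply mul_nonneg (by positivity) (hEnn k)
    have hLHS : ∑ i ∈ univ.filter (fun i => O i = k), φ (O i)
        = ((univ.filter (fun i => O i = k)).card : ℝ) * φ k := by
      rw [Finset.sum_congr rfl (fun i hi => by rw [(mem_filter.1 hi).2]),
        Finset.sum_const, nsmul_eq_mul]
    rw [hLHS]
    by_cases hk : k ∈ avail
    · have : φ k = 0 := by rw [hφ]; simp [hk]
      rw [this, mul_zero]; exact hRHSnn
    · have hφk : φ k = (∑ i' ∈ univ.filter (fun i' => S i' = k),
          (dist (A i') (F (S i')) + h i')) / ((g : ℝ) * (c k : ℝ)) := by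
        rw [hφ]; simp [hk]
      rcases Nat.eq_zero_or_pos ((univ.filter (fun i => O i = k)).card) with h0 | hpos
      · rw [h0]; simpa using hRHSnn
      · have hc1 : 1 ≤ c k := le_trans hpos (hvO k)
        have hck : (0:ℝ) < (c k : ℝ) := by exact_mod_cast hc1
        have hOcard : ((univ.filter (fun i => O i = k)).card : ℝ) ≤ (c k : ℝ) := by
          exact_mod_cast hvO k
        rw [hφk]
        have h1 : ((univ.filter (fun i => O i = k)).card : ℝ) *
            ((∑ i' ∈ univ.filter (fun i' => S i' = k),
              (dist (A i') (F (S i')) + h i')) / ((g : ℝ) * (c k : ℝ)))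
            ≤ (c k : ℝ) * ((∑ i' ∈ univ.filter (fun i' => S i' = k),
              (dist (A i') (F (S i')) + h i')) / ((g : ℝ) * (c k : ℝ))) := by
          apply mul_le_mul_of_nonneg_right hOcard
          apply div_nonneg (hEnn k) (by positivity)
        have h2 : (c k : ℝ) * ((∑ i' ∈ univ.filter (fun i' => S i' = k),
              (dist (A i') (F (S i')) + h i')) / ((g : ℝ) * (c k : ℝ)))
            = (1 / (g:ℝ)) * ∑ i' ∈ univ.filter (fun i' => S i' = k),
              (dist (A i') (F (S i')) + h i') := by
          field_simp
        linarith
  -- sum the per-facility charges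
  have sum_φ : ∑ i, φ (O i) ≤
      (1 / (g:ℝ)) * ∑ i, (dist (A i) (F (S i)) + h i) := by
    calc ∑ i, φ (O i)
        = ∑ k, ∑ i ∈ univ.filter (fun i => O i = k), φ (O i) :=
          (Finset.sum_fiberwise univ O (fun i => φ (O i))).symm
      _ ≤ ∑ k, (1 / (g:ℝ)) * ∑ i' ∈ univ.filter (fun i' => S i' = k),
            (dist (A i') (F (S i')) + h i') :=
          Finset.sum_le_sum fun k _ => φstep k
      _ = (1 / (g:ℝ)) * ∑ k, ∑ i' ∈ univ.filter (fun i' => S i' = k),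
            (dist (A i') (F (S i')) + h i') := by rw [Finset.mul_sum]
      _ = (1 / (g:ℝ)) * ∑ i, (dist (A i) (F (S i)) + h i) := by
          rw [Finset.sum_fiberwise univ S (fun i => dist (A i) (F (S i)) + h i)]
  -- put everything together
  set D := ∑ i, dist (A i) (F (S i)) with hD
  set Oc := ∑ i, dist (A i) (F (O i)) with hOc
  set H := ∑ i, h i with hHH
  have hOcnn : 0 ≤ Oc := Finset.sum_nonneg fun i _ => dist_nonneg
  have hDH : D ≤ H := Finset.sum_le_sum fun i _ => d_le_h i
  have hHbound : H ≤ Oc + (1 / (g:ℝ)) * (D + H) := by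
    have e1 : ∑ i, (dist (A i) (F (S i)) + h i) = D + H := Finset.sum_add_distrib
    have e2 : H ≤ ∑ i, (dist (A i) (F (O i)) + φ (O i)) :=
      Finset.sum_le_sum fun i _ => h_le_oφ i
    have e3 : ∑ i, (dist (A i) (F (O i)) + φ (O i)) = Oc + ∑ i, φ (O i) :=
      Finset.sum_add_distrib
    rw [e1] at sum_φ
    linarith
  have hHg : (g:ℝ) * H ≤ (g:ℝ) * Oc + (D + H) := by
    have := mul_le_mul_of_nonneg_left hHbound (le_of_lt hg0)
    have e : (g:ℝ) * (Oc + (1 / (g:ℝ)) * (D + H)) = (g:ℝ) * Oc + (D + H) := by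
      field_simp
    linarith
  rw [div_mul_eq_mul_div, le_div_iff₀ (by linarith : (0:ℝ) < (g:ℝ) - 2)]
  nlinarith [mul_nonneg (sub_nonneg.2 hDH) (by linarith : (0:ℝ) ≤ (g:ℝ) - 2)]

/-- For any integer augmentation factor `g ≥ 3`, Serial Dictatorship has approximation
ratio at most `g / (g − 2)`: its social cost on the `g`-augmented instance is at most
`g / (g − 2)` times the optimal social cost on the original instance. -/
theorem sd_approx_augmentation_g {X : Type*} [MetricSpace X] {n m : ℕ}
    (g : ℕ) (hg : 3 ≤ g)
    (I : FAInstance X n m) (hcap : n ≤ ∑ j, I.c j)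
    (S : Fin n → Fin m) (hS : IsSDAssignment (I.augment g) S)
    (O : Fin n → Fin m) (hO : ValidAssignment I O) :
    socialCost (I.augment g) S ≤ ((g : ℝ) / ((g : ℝ) - 2)) * socialCost I O := by
  classical
  obtain ⟨σ, hvalid, hgreedy⟩ := hS
  rcases Nat.eq_zero_or_pos n with hn | hn
  · subst hn
    simp [socialCost]
  have hvS : ∀ j, (univ.filter (fun i => S i = j)).card ≤ g * I.c j := fun j => hvalid j
  have hgr : ∀ i k, (univ.filter (fun i' => S i' = k)).card < g * I.c k →
      dist (I.A i) (I.F (S i)) ≤ dist (I.A i) (I.F k) := by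
    intro i k hk
    have hcardlt :
        (univ.filter (fun s : Fin n => s < σ.symm i ∧ S (σ s) = k)).card < g * I.c k := by
      refine lt_of_le_of_lt ?_ hk
      apply Finset.card_le_card_of_injOn (fun s => σ s)
      · intro s hs
        simp only [Finset.mem_coe, Finset.mem_filter, Finset.mem_univ, true_and] at hs ⊢
        exact hs.2
      · exact fun a _ b _ hab => σ.injective hab
    have := hgreedy (σ.symm i) k hcardlt
    simpa [FAInstance.augment] using this
  exact sd_aux g hg I.A I.F I.c hn hcap S O hvS hO hgr
end

section
/- Let g ≥ 2 be an integer, let I be a facility assignment instance with an optimal assignment O, and let S be an assignment produced by Serial Dictatorship applied to the g-augmented instance I_g, such that the triplet (I, O, S) is represented as a directed g-tree T. If T has a path covering x, then SC(S, I_g) ≤ c(x) · SC(O, I), where c(x) is the cost of the path covering x. -/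
/-- In-degree of node `v` in the representation graph of `(O, S)`:
the number of agents assigned to facility `v` by `S`. -/
def inDeg {n m : ℕ} (S : Fin n → Fin m) (v : Fin m) : ℕ :=
  (Finset.univ.filter (fun i => S i = v)).card

/-- Out-degree of node `v` in the representation graph of `(O, S)`:
the number of agents assigned to facility `v` by `O`. -/
def outDeg {n m : ℕ} (O : Fin n → Fin m) (v : Fin m) : ℕ :=
  (Finset.univ.filter (fun i => O i = v)).card

/-- The representation graph of `(O, S)` (edge `i` goes from `O i` to `S i`)
has no directed cycle (no closed directed walk). -/
def NoDirectedCycle {n m : ℕ} (O S : Fin n → Fin m) : Prop :=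
  ∀ (t : ℕ) (f : Fin (t + 1) → Fin n), ¬ (∀ j, S (f j) = O (f (j + 1)))

/-- The representation graph of `(O, S)` is a directed `g`-tree: it is acyclic,
has a root of in-degree 1 and out-degree 0, and every other node has out-degree 1 and
in-degree either 0 (a leaf) or `g` (an intermediate node). -/
def IsDirectedGTree {n m : ℕ} (g : ℕ) (O S : Fin n → Fin m) : Prop :=
  NoDirectedCycle O S ∧
  ∃ r : Fin m, inDeg S r = 1 ∧ outDeg O r = 0 ∧
    ∀ v : Fin m, v ≠ r → outDeg O v = 1 ∧ (inDeg S v = 0 ∨ inDeg S v = g)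
/-- An index for a directed path in a representation graph with `n` edges (agents):
a nonempty sequence of at most `n` edges, given as `⟨t, p⟩` where the path consists of
the `t + 1` edges `p 0, p 1, …, p t`. -/
abbrev PathIdx (n : ℕ) := Σ t : Fin n, (Fin ((t : ℕ) + 1) → Fin n)

/-- `p` is a genuine directed path of the representation graph of `(O, S)`
originating from a leaf: consecutive edges are incident
(the head `S` of each edge is the tail `O` of the next one), and the tail of the
first edge is a leaf, i.e. has in-degree 0. -/
def IsLeafPath {n m : ℕ} (O S : Fin n → Fin m) (p : PathIdx n) : Prop :=
  (∀ j : Fin (p.1 : ℕ), S (p.2 j.castSucc) = O (p.2 j.succ)) ∧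
  ∀ i : Fin n, S i ≠ O (p.2 0)

/-- The path `p` crosses the edge `e`. -/
def Crosses {n : ℕ} (p : PathIdx n) (e : Fin n) : Prop := ∃ j, p.2 j = e

/-- The path `p` terminates with the edge `e`. -/
def EndsAt {n : ℕ} (p : PathIdx n) (e : Fin n) : Prop :=
  p.2 (Fin.last (p.1 : ℕ)) = e

/-- `e` is the edge incident to the root: no edge goes out of its head. -/
def IsRootEdge {n m : ℕ} (O S : Fin n → Fin m) (e : Fin n) : Prop :=
  ∀ i, O i ≠ S e

instance {n m : ℕ} (O S : Fin n → Fin m) : DecidablePred (IsLeafPath O S) := fun p => by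
  unfold IsLeafPath; infer_instance

instance {n : ℕ} (p : PathIdx n) (e : Fin n) : Decidable (Crosses p e) := by
  unfold Crosses; infer_instance

instance {n : ℕ} (p : PathIdx n) (e : Fin n) : Decidable (EndsAt p e) := by
  unfold EndsAt; infer_instance

/-- `∑_{p ∈ 𝒫_e} x_p`: the total value of `x` over leaf-originating paths crossing `e`. -/
noncomputable def crossSum {n m : ℕ} (O S : Fin n → Fin m) (x : PathIdx n → ℝ)
    (e : Fin n) : ℝ :=
  ∑ p ∈ Finset.univ.filter (fun p => IsLeafPath O S p ∧ Crosses p e), x p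

/-- `∑_{p ∈ 𝒫̃_e} x_p`: the total value of `x` over leaf-originating paths terminating
with `e`. -/
noncomputable def endSum {n m : ℕ} (O S : Fin n → Fin m) (x : PathIdx n → ℝ)
    (e : Fin n) : ℝ :=
  ∑ p ∈ Finset.univ.filter (fun p => IsLeafPath O S p ∧ EndsAt p e), x p

/-- `∑_{p ∈ 𝒫_e ∩ 𝒫_f} x_p`: the total value of `x` over leaf-originating paths crossing
both `e` and `f`. -/
noncomputable def crossBothSum {n m : ℕ} (O S : Fin n → Fin m) (x : PathIdx n → ℝ)
    (e f : Fin n) : ℝ :=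
  ∑ p ∈ Finset.univ.filter (fun p => IsLeafPath O S p ∧ Crosses p e ∧ Crosses p f), x p

/-- `x` is a path covering of the tree represented by `(O, S)`:
a nonnegative assignment of values to (leaf-originating) paths with
`∑_{p ∈ 𝒫_{e_r}} x_p ≥ 1` for the root edge `e_r`, and
`∑_{p ∈ 𝒫̃_e} x_p − ∑_{p ∈ 𝒫_e ∩ 𝒫_f} x_p ≥ 1` for every non-root edge `e`
with parent edge `f`. -/
def IsPathCovering {n m : ℕ} (O S : Fin n → Fin m) (x : PathIdx n → ℝ) : Prop :=
  (∀ p, 0 ≤ x p) ∧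
  (∀ e : Fin n, IsRootEdge O S e → 1 ≤ crossSum O S x e) ∧
  (∀ e f : Fin n, ¬ IsRootEdge O S e → O f = S e →
    1 ≤ endSum O S x e - crossBothSum O S x e f)

/-- The cost of a path covering: `c(x) = max_e ∑_{p ∈ 𝒫_e} x_p`. -/
noncomputable def coveringCost {n m : ℕ} (O S : Fin n → Fin m)
    (x : PathIdx n → ℝ) : ℝ :=
  ⨆ e : Fin n, crossSum O S x e

section Aux

variable {n m : ℕ}

/-- The `a`-th edge of a path, with natural-number indexing (mod length). -/
def pedge (p : PathIdx n) (a : ℕ) : Fin n :=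
  p.2 ⟨a % ((p.1 : ℕ) + 1), Nat.mod_lt _ (Nat.succ_pos _)⟩

lemma pedge_val (p : PathIdx n) (j : Fin ((p.1 : ℕ) + 1)) : pedge p (j : ℕ) = p.2 j := by
  unfold pedge
  apply congrArg
  exact Fin.ext (Nat.mod_eq_of_lt j.isLt)

lemma pedge_mk (p : PathIdx n) (a : ℕ) (h : a < (p.1 : ℕ) + 1) :
    pedge p a = p.2 ⟨a, h⟩ := pedge_val p ⟨a, h⟩

lemma pedge_castSucc (p : PathIdx n) (j : Fin (p.1 : ℕ)) :
    pedge p (j : ℕ) = p.2 j.castSucc := by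
  rw [pedge_mk p _ (by omega)]
  rfl

lemma pedge_last (p : PathIdx n) : pedge p (p.1 : ℕ) = p.2 (Fin.last _) := by
  rw [pedge_mk p _ (by omega)]
  rfl

variable {O S : Fin n → Fin m}

lemma adj_pedge {p : PathIdx n} (hp : IsLeafPath O S p) {a : ℕ} (ha : a < (p.1 : ℕ)) :
    S (pedge p a) = O (pedge p (a + 1)) := by
  rw [pedge_mk p a (by omega), pedge_mk p (a + 1) (by omega)]
  exact hp.1 ⟨a, ha⟩

lemma no_repeat (hnc : NoDirectedCycle O S) {p : PathIdx n} (hp : IsLeafPath O S p)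
    {a b : ℕ} (hab : a < b) (hb : b < (p.1 : ℕ) + 1) (heq : pedge p a = pedge p b) :
    False := by
  set L := b - a with hL
  have hL1 : 1 ≤ L := by omega
  apply hnc (L - 1) (fun k => pedge p (a + (k : ℕ)))
  intro k
  have hkk : (k : ℕ) < L - 1 + 1 := k.isLt
  rcases eq_or_ne k (Fin.last (L - 1)) with hk | hk
  · have h0 : ((k + 1 : Fin (L - 1 + 1)) : ℕ) = 0 := by
      rw [Fin.val_add_one, if_pos hk]
    rw [h0, hk]
    simp only [Fin.val_last]
    have h1 : a + (L - 1) = b - 1 := by omega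
    rw [h1, Nat.add_zero, heq]
    have h2 : b - 1 + 1 = b := by omega
    have := adj_pedge hp (a := b - 1) (by omega)
    rw [h2] at this
    exact this
  · have h0 : ((k + 1 : Fin (L - 1 + 1)) : ℕ) = (k : ℕ) + 1 := by
      rw [Fin.val_add_one, if_neg hk]
    rw [h0]
    have hk1 : (k : ℕ) < L - 1 := by
      rcases Nat.lt_or_ge (k : ℕ) (L - 1) with h | h
      · exact h
      · exact absurd (Fin.ext (by omega : (k : ℕ) = L - 1)) hk
    rw [← Nat.add_assoc]
    exact adj_pedge hp (by omega)

lemma path_inj (hnc : NoDirectedCycle O S) {p : PathIdx n} (hp : IsLeafPath O S p) :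
    Function.Injective p.2 := by
  intro j j' h
  rcases lt_trichotomy (j : ℕ) (j' : ℕ) with hlt | he | hlt
  · exact absurd (by rw [pedge_val, pedge_val]; exact h)
      (fun hh => no_repeat hnc hp hlt j'.isLt hh)
  · exact Fin.ext he
  · exact absurd (by rw [pedge_val, pedge_val]; exact h.symm)
      (fun hh => no_repeat hnc hp hlt j.isLt hh)

end Aux
section Aux2

variable {X : Type*} [MetricSpace X] {n m : ℕ} {O S : Fin n → Fin m}

lemma chain_bound (A : Fin n → X) (F : Fin m → X)
    {p : PathIdx n} (hp : IsLeafPath O S p) :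
    ∀ k, k ≤ (p.1 : ℕ) →
      dist (F (O (pedge p k))) (F (O (pedge p 0)))
        ≤ ∑ a ∈ Finset.range k,
            (dist (A (pedge p a)) (F (O (pedge p a)))
              + dist (A (pedge p a)) (F (S (pedge p a)))) := by
  intro k
  induction k with
  | zero => simp
  | succ k ih =>
    intro hk
    rw [Finset.sum_range_succ]
    have h1 := dist_triangle (F (O (pedge p (k + 1)))) (F (O (pedge p k)))
      (F (O (pedge p 0)))
    have h2 : dist (F (O (pedge p (k + 1)))) (F (O (pedge p k)))
        ≤ dist (A (pedge p k)) (F (O (pedge p k)))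
          + dist (A (pedge p k)) (F (S (pedge p k))) := by
      rw [← adj_pedge hp (by omega)]
      have h3 := dist_triangle (F (S (pedge p k))) (A (pedge p k)) (F (O (pedge p k)))
      rw [dist_comm (F (S (pedge p k))) (A (pedge p k))] at h3
      linarith
    have h4 := ih (by omega)
    linarith

lemma per_path_bound {g : ℕ} (hg : 1 ≤ g) {I : FAInstance X n m}
    (hunit : ∀ j, I.c j = 1) {σ : Equiv.Perm (Fin n)}
    (hSD : IsSDWithOrder (I.augment g) σ S)
    {p : PathIdx n} (hp : IsLeafPath O S p) :
    dist (I.A (pedge p (p.1 : ℕ))) (I.F (S (pedge p (p.1 : ℕ))))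
      ≤ (∑ a ∈ Finset.range ((p.1 : ℕ) + 1),
            dist (I.A (pedge p a)) (I.F (O (pedge p a))))
        + ∑ a ∈ Finset.range (p.1 : ℕ),
            dist (I.A (pedge p a)) (I.F (S (pedge p a))) := by
  set i := pedge p (p.1 : ℕ) with hi
  have hleaf : ∀ i' : Fin n, S i' ≠ O (pedge p 0) := by
    intro i'
    have h0 : pedge p 0 = p.2 0 := by
      rw [pedge_mk p 0 (by omega)]
      rfl
    rw [h0]
    exact hp.2 i'
  have leaf_av : dist (I.A i) (I.F (S i)) ≤ dist (I.A i) (I.F (O (pedge p 0))) := by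
    have hfilter : (Finset.univ.filter
        (fun s : Fin n => s < σ.symm i ∧ S (σ s) = O (pedge p 0))) = ∅ := by
      apply Finset.filter_eq_empty_iff.mpr
      intro s _
      rintro ⟨-, h2⟩
      exact hleaf (σ s) h2
    have hcard : (Finset.univ.filter
        (fun s : Fin n => s < σ.symm i ∧ S (σ s) = O (pedge p 0))).card
        < (I.augment g).c (O (pedge p 0)) := by
      rw [hfilter]
      simp only [Finset.card_empty, FAInstance.augment, hunit]
      omega
    have := hSD.2 (σ.symm i) (O (pedge p 0)) hcard
    simpa [FAInstance.augment] using this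
  have tri := dist_triangle (I.A i) (I.F (O i)) (I.F (O (pedge p 0)))
  have hch := chain_bound I.A I.F hp (p.1 : ℕ) le_rfl
  rw [Finset.sum_add_distrib] at hch
  rw [Finset.sum_range_succ]
  rw [← hi] at hch ⊢
  linarith

end Aux2
section Aux3

variable {n m : ℕ} {O S : Fin n → Fin m}

lemma swap_sum (O S : Fin n → Fin m) (x : PathIdx n → ℝ) (dF : Fin n → ℝ)
    (C : PathIdx n → Fin n → Prop) [∀ p e, Decidable (C p e)] :
    ∑ e, dF e * (∑ p ∈ Finset.univ.filter (fun p => IsLeafPath O S p ∧ C p e), x p)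
      = ∑ p ∈ Finset.univ.filter (fun p => IsLeafPath O S p),
          x p * (∑ e ∈ Finset.univ.filter (fun e => C p e), dF e) := by
  simp only [Finset.sum_filter, Finset.mul_sum]
  rw [Finset.sum_comm]
  refine Finset.sum_congr rfl fun p _ => ?_
  by_cases hp : IsLeafPath O S p
  · simp only [hp, true_and, if_true]
    refine Finset.sum_congr rfl fun e _ => ?_
    by_cases hc : C p e <;> simp [hc, mul_comm]
  · simp [hp]

lemma inner_cross (hnc : NoDirectedCycle O S) {p : PathIdx n} (hp : IsLeafPath O S p)
    (dF : Fin n → ℝ) :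
    ∑ e ∈ Finset.univ.filter (fun e => Crosses p e), dF e
      = ∑ a ∈ Finset.range ((p.1 : ℕ) + 1), dF (pedge p a) := by
  have himg : Finset.univ.filter (fun e => Crosses p e)
      = Finset.image p.2 Finset.univ := by
    ext e
    simp [Crosses, eq_comm, Finset.mem_image]
  rw [himg, Finset.sum_image (fun a _ b _ h => path_inj hnc hp h)]
  rw [← Fin.sum_univ_eq_sum_range (fun a => dF (pedge p a)) ((p.1 : ℕ) + 1)]
  exact Finset.sum_congr rfl fun j _ => by rw [pedge_val]

lemma inner_crossNotLast (hnc : NoDirectedCycle O S) {p : PathIdx n}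
    (hp : IsLeafPath O S p) (dF : Fin n → ℝ) :
    ∑ e ∈ Finset.univ.filter (fun e => Crosses p e ∧ ¬ EndsAt p e), dF e
      = ∑ a ∈ Finset.range (p.1 : ℕ), dF (pedge p a) := by
  have himg : Finset.univ.filter (fun e => Crosses p e ∧ ¬ EndsAt p e)
      = Finset.image (fun j : Fin (p.1 : ℕ) => p.2 j.castSucc) Finset.univ := by
    ext e
    simp only [Finset.mem_filter, Finset.mem_univ, true_and, Finset.mem_image]
    constructor
    · rintro ⟨⟨j, hj⟩, hne⟩
      have hjl : (j : ℕ) < (p.1 : ℕ) := by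
        rcases Nat.lt_or_ge (j : ℕ) (p.1 : ℕ) with h | h
        · exact h
        · exfalso
          apply hne
          have hlast : j = Fin.last (p.1 : ℕ) := Fin.ext (by have := j.isLt; simp; omega)
          show p.2 (Fin.last (p.1 : ℕ)) = e
          rw [← hlast]
          exact hj
      refine ⟨⟨(j : ℕ), hjl⟩, ?_⟩
      have hcs : Fin.castSucc (⟨(j : ℕ), hjl⟩ : Fin (p.1 : ℕ)) = j := Fin.ext rfl
      show p.2 (Fin.castSucc ⟨(j : ℕ), hjl⟩) = e
      rw [hcs]
      exact hj
    · rintro ⟨j, -, rfl⟩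
      refine ⟨?_, ?_⟩
      · show ∃ jj, p.2 jj = p.2 j.castSucc
        exact ⟨j.castSucc, rfl⟩
      intro hend
      have hend' : p.2 (Fin.last (p.1 : ℕ)) = p.2 j.castSucc := hend
      have := path_inj hnc hp hend'
      have hv : (p.1 : ℕ) = (j : ℕ) := by
        have := congrArg Fin.val this
        simpa using this
      exact absurd hv (by have := j.isLt; omega)
  rw [himg, Finset.sum_image
    (fun a _ b _ h => Fin.castSucc_injective _ (path_inj hnc hp h))]
  rw [← Fin.sum_univ_eq_sum_range (fun a => dF (pedge p a)) (p.1 : ℕ)]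
  exact Finset.sum_congr rfl fun j _ => by rw [pedge_castSucc]

end Aux3
section Aux4

variable {n m : ℕ} {O S : Fin n → Fin m}

lemma cross_not_last_aux {p : PathIdx n} {e : Fin n}
    (he : Crosses p e) (hne : ¬ EndsAt p e) :
    ∃ a : ℕ, a < (p.1 : ℕ) ∧ pedge p a = e := by
  obtain ⟨j, hj⟩ := he
  have hjl : (j : ℕ) < (p.1 : ℕ) := by
    rcases Nat.lt_or_ge (j : ℕ) (p.1 : ℕ) with h | h
    · exact h
    · exfalso
      apply hne
      have hlast : j = Fin.last (p.1 : ℕ) := Fin.ext (by have := j.isLt; simp; omega)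
      show p.2 (Fin.last (p.1 : ℕ)) = e
      rw [← hlast]
      exact hj
  exact ⟨(j : ℕ), hjl, by rw [pedge_val]; exact hj⟩

lemma coverage {g : ℕ} (htree : IsDirectedGTree g O S) {x : PathIdx n → ℝ}
    (hx : IsPathCovering O S x) (e : Fin n) :
    1 ≤ endSum O S x e
        - ∑ p ∈ Finset.univ.filter
            (fun p => IsLeafPath O S p ∧ Crosses p e ∧ ¬ EndsAt p e), x p := by
  obtain ⟨hnc, r, hrin, hrout, hother⟩ := htree
  by_cases hroot : IsRootEdge O S e
  · have hempty : Finset.univ.filter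
        (fun p => IsLeafPath O S p ∧ Crosses p e ∧ ¬ EndsAt p e) = ∅ := by
      apply Finset.filter_eq_empty_iff.mpr
      rintro p - ⟨hp, hcr, hne⟩
      obtain ⟨a, ha, rfl⟩ := cross_not_last_aux hcr hne
      exact hroot (pedge p (a + 1)) (adj_pedge hp ha).symm
    have heq : endSum O S x e = crossSum O S x e := by
      unfold endSum crossSum
      have hset : Finset.univ.filter (fun p => IsLeafPath O S p ∧ EndsAt p e)
          = Finset.univ.filter (fun p => IsLeafPath O S p ∧ Crosses p e) := by
        ext p
        simp only [Finset.mem_filter, Finset.mem_univ, true_and, and_congr_right_iff]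
        intro hp
        constructor
        · intro hend
          exact ⟨Fin.last _, hend⟩
        · intro hcr
          by_cases hne : EndsAt p e
          · exact hne
          · exfalso
            obtain ⟨a, ha, rfl⟩ := cross_not_last_aux hcr hne
            exact hroot (pedge p (a + 1)) (adj_pedge hp ha).symm
      rw [hset]
    rw [hempty, heq]
    simpa using hx.2.1 e hroot
  · have hex : ∃ f, O f = S e := by
      by_contra hcon
      push_neg at hcon
      exact hroot hcon
    obtain ⟨f, hf⟩ := hex
    have hSe_ne_r : S e ≠ r := by
      intro h
      have hmem : f ∈ Finset.univ.filter (fun i => O i = r) := by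
        simp [hf, h]
      have hc : outDeg O r = 0 := hrout
      unfold outDeg at hc
      rw [Finset.card_eq_zero] at hc
      rw [hc] at hmem
      exact absurd hmem (Finset.notMem_empty f)
    have houtdeg : outDeg O (S e) = 1 := (hother (S e) hSe_ne_r).1
    have hsub : Finset.univ.filter (fun p => IsLeafPath O S p ∧ Crosses p e ∧ ¬ EndsAt p e)
        ⊆ Finset.univ.filter (fun p => IsLeafPath O S p ∧ Crosses p e ∧ Crosses p f) := by
      intro p hp
      simp only [Finset.mem_filter, Finset.mem_univ, true_and] at hp ⊢
      obtain ⟨hpl, hcr, hne⟩ := hp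
      refine ⟨hpl, hcr, ?_⟩
      obtain ⟨a, ha, hae⟩ := cross_not_last_aux hcr hne
      have hOf' : O (pedge p (a + 1)) = S e := by
        rw [← adj_pedge hpl ha, hae]
      have hmem1 : pedge p (a + 1) ∈ Finset.univ.filter (fun i => O i = S e) := by
        simp [hOf']
      have hmem2 : f ∈ Finset.univ.filter (fun i => O i = S e) := by
        simp [hf]
      have hcard : (Finset.univ.filter (fun i => O i = S e)).card ≤ 1 := by
        unfold outDeg at houtdeg
        omega
      have heqf : pedge p (a + 1) = f :=
        Finset.card_le_one.mp hcard _ hmem1 _ hmem2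
      refine ⟨⟨a + 1, by omega⟩, ?_⟩
      rw [← pedge_mk p (a + 1) (by omega), heqf]
    have hle : (∑ p ∈ Finset.univ.filter
          (fun p => IsLeafPath O S p ∧ Crosses p e ∧ ¬ EndsAt p e), x p)
        ≤ crossBothSum O S x e f :=
      Finset.sum_le_sum_of_subset_of_nonneg hsub (fun p _ _ => hx.1 p)
    have hc2 := hx.2.2 e f hroot hf
    linarith

end Aux4
/-- If `(I, O, S)` — with `O` an optimal assignment of the (unit-capacity) instance `I`
and `S` a Serial Dictatorship outcome on the `g`-augmented instance (`g ≥ 2`) — is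
represented as a directed `g`-tree which has a path covering `x`, then
`SC(S, I_g) ≤ c(x) · SC(O, I)`. -/
theorem sd_path_covering_bound {X : Type*} [MetricSpace X] {n m : ℕ}
    (g : ℕ) (hg : 2 ≤ g)
    (I : FAInstance X n m) (hunit : ∀ j, I.c j = 1)
    (O : Fin n → Fin m) (hOvalid : ValidAssignment I O)
    (hOopt : ∀ O' : Fin n → Fin m, ValidAssignment I O' →
      socialCost I O ≤ socialCost I O')
    (S : Fin n → Fin m) (hS : IsSDAssignment (I.augment g) S)
    (htree : IsDirectedGTree g O S)
    (x : PathIdx n → ℝ) (hx : IsPathCovering O S x) :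
    socialCost (I.augment g) S ≤ coveringCost O S x * socialCost I O := by
  classical
  obtain ⟨σ, hSD⟩ := hS
  have hnc : NoDirectedCycle O S := htree.1
  have hg1 : 1 ≤ g := by omega
  rcases Nat.eq_zero_or_pos n with hn | hn
  · subst hn
    simp [socialCost]
  set dS : Fin n → ℝ := fun e => dist (I.A e) (I.F (S e)) with hdS
  set dO : Fin n → ℝ := fun e => dist (I.A e) (I.F (O e)) with hdO
  have hSCS : socialCost (I.augment g) S = ∑ e, dS e := rfl
  have hSCO : socialCost I O = ∑ e, dO e := rfl
  have cov := coverage htree hx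
  have hdSnn : ∀ e, (0 : ℝ) ≤ dS e := fun e => dist_nonneg
  have hdOnn : ∀ e, (0 : ℝ) ≤ dO e := fun e => dist_nonneg
  have step3 : ∑ e, dS e ≤ ∑ e, dS e *
      (endSum O S x e - ∑ p ∈ Finset.univ.filter
        (fun p => IsLeafPath O S p ∧ Crosses p e ∧ ¬ EndsAt p e), x p) :=
    Finset.sum_le_sum fun e _ => le_mul_of_one_le_right (hdSnn e) (cov e)
  have expand : ∑ e, dS e *
      (endSum O S x e - ∑ p ∈ Finset.univ.filter
        (fun p => IsLeafPath O S p ∧ Crosses p e ∧ ¬ EndsAt p e), x p)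
      = (∑ e, dS e * endSum O S x e)
        - ∑ e, dS e * ∑ p ∈ Finset.univ.filter
            (fun p => IsLeafPath O S p ∧ Crosses p e ∧ ¬ EndsAt p e), x p := by
    simp only [mul_sub]
    rw [Finset.sum_sub_distrib]
  have step4 : ∑ e, dS e * endSum O S x e
      = ∑ p ∈ Finset.univ.filter (fun p => IsLeafPath O S p),
          x p * dS (pedge p (p.1 : ℕ)) := by
    unfold endSum
    rw [swap_sum O S x dS (fun p e => EndsAt p e)]
    refine Finset.sum_congr rfl fun p hp => ?_
    congr 1
    have hfil : Finset.univ.filter (fun e => EndsAt p e) = {p.2 (Fin.last _)} := by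
      ext e
      simp only [Finset.mem_filter, Finset.mem_univ, true_and, Finset.mem_singleton]
      exact ⟨fun h => h.symm, fun h => h.symm⟩
    rw [hfil, Finset.sum_singleton, pedge_last]
  have step7 : ∑ e, dS e * ∑ p ∈ Finset.univ.filter
        (fun p => IsLeafPath O S p ∧ Crosses p e ∧ ¬ EndsAt p e), x p
      = ∑ p ∈ Finset.univ.filter (fun p => IsLeafPath O S p),
          x p * ∑ a ∈ Finset.range (p.1 : ℕ), dS (pedge p a) := by
    rw [swap_sum O S x dS (fun p e => Crosses p e ∧ ¬ EndsAt p e)]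
    refine Finset.sum_congr rfl fun p hp => ?_
    congr 1
    exact inner_crossNotLast hnc (Finset.mem_filter.mp hp).2 dS
  have step6 : ∑ e, dO e * crossSum O S x e
      = ∑ p ∈ Finset.univ.filter (fun p => IsLeafPath O S p),
          x p * ∑ a ∈ Finset.range ((p.1 : ℕ) + 1), dO (pedge p a) := by
    unfold crossSum
    rw [swap_sum O S x dO (fun p e => Crosses p e)]
    refine Finset.sum_congr rfl fun p hp => ?_
    congr 1
    exact inner_cross hnc (Finset.mem_filter.mp hp).2 dO
  have step5 : ∑ p ∈ Finset.univ.filter (fun p => IsLeafPath O S p),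
        x p * dS (pedge p (p.1 : ℕ))
      ≤ ∑ p ∈ Finset.univ.filter (fun p => IsLeafPath O S p),
          x p * ((∑ a ∈ Finset.range ((p.1 : ℕ) + 1), dO (pedge p a))
            + ∑ a ∈ Finset.range (p.1 : ℕ), dS (pedge p a)) :=
    Finset.sum_le_sum fun p hp => mul_le_mul_of_nonneg_left
      (per_path_bound hg1 hunit hSD (Finset.mem_filter.mp hp).2) (hx.1 p)
  have hsplit : ∑ p ∈ Finset.univ.filter (fun p => IsLeafPath O S p),
        x p * ((∑ a ∈ Finset.range ((p.1 : ℕ) + 1), dO (pedge p a))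
          + ∑ a ∈ Finset.range (p.1 : ℕ), dS (pedge p a))
      = (∑ p ∈ Finset.univ.filter (fun p => IsLeafPath O S p),
          x p * ∑ a ∈ Finset.range ((p.1 : ℕ) + 1), dO (pedge p a))
        + ∑ p ∈ Finset.univ.filter (fun p => IsLeafPath O S p),
            x p * ∑ a ∈ Finset.range (p.1 : ℕ), dS (pedge p a) := by
    simp only [mul_add]
    exact Finset.sum_add_distrib
  have step8 : ∑ e, dO e * crossSum O S x e
      ≤ coveringCost O S x * ∑ e, dO e := by
    have hb : ∀ e : Fin n, crossSum O S x e ≤ coveringCost O S x := fun e =>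
      le_ciSup (Set.Finite.bddAbove (Set.finite_range _)) e
    calc ∑ e, dO e * crossSum O S x e
        ≤ ∑ e, dO e * coveringCost O S x :=
          Finset.sum_le_sum fun e _ => mul_le_mul_of_nonneg_left (hb e) (hdOnn e)
      _ = coveringCost O S x * ∑ e, dO e := by
          rw [Finset.mul_sum]
          exact Finset.sum_congr rfl fun e _ => mul_comm _ _
  rw [hSCS, hSCO]
  linarith
end

section
/- Let T be a directed 1-tree with at most n edges (equivalently, a directed path from a leaf to a root). Then there exists a path covering of T of cost at most 2^n − 1. -/
namespace OneTreeAux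

open Finset

variable {t m : ℕ} (O S : Fin t → Fin m)

lemma t_pos (htree : IsDirectedGTree 1 O S) : 0 < t := by
  obtain ⟨-, r, hr1, -, -⟩ := htree
  by_contra h
  push_neg at h
  interval_cases t
  simp [inDeg] at hr1

lemma S_inj (htree : IsDirectedGTree 1 O S) : Function.Injective S := by
  obtain ⟨-, r, hr1, -, hv⟩ := htree
  intro i j hij
  by_contra hne
  have h2 : 1 < inDeg S (S i) := by
    apply Finset.one_lt_card.mpr
    exact ⟨i, by simp [inDeg], j, by simp [inDeg, hij], fun h => hne h⟩
  have h1 : inDeg S (S i) ≤ 1 := by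
    by_cases h : S i = r
    · rw [h, hr1]
    · rcases (hv _ h).2 with h0 | h0
      · rw [h0]; omega
      · rw [h0]
  omega

lemma O_inj (htree : IsDirectedGTree 1 O S) : Function.Injective O := by
  obtain ⟨-, r, -, hr0, hv⟩ := htree
  intro i j hij
  by_contra hne
  have h2 : 1 < outDeg O (O i) := by
    apply Finset.one_lt_card.mpr
    exact ⟨i, by simp [outDeg], j, by simp [outDeg, hij], fun h => hne h⟩
  have h1 : outDeg O (O i) ≤ 1 := by
    by_cases h : O i = r
    · rw [h, hr0]; omega
    · rw [(hv _ h).1]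
  omega

/-- From a repeated value along a forward chain we build a directed cycle. -/
lemma no_chain_repeat (hacyc : NoDirectedCycle O S) (g : ℕ → Fin t) (a b : ℕ) (hab : a < b)
    (hchain : ∀ j, a ≤ j → j < b → S (g j) = O (g (j + 1))) (heq : g a = g b) : False := by
  have hL : b - a - 1 + 1 = b - a := by omega
  apply hacyc (b - a - 1) (fun j => g (a + (j : ℕ)))
  intro j
  have hjlt : (j : ℕ) < b - a := by omega
  by_cases hlast : (j : ℕ) = b - a - 1
  · have h1 : ((j + 1 : Fin (b - a - 1 + 1)) : ℕ) = 0 := by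
      simp [Fin.add_def, hlast]
    simp only [h1, hlast, Nat.add_zero]
    have hc := hchain (a + (b - a - 1)) (by omega) (by omega)
    rw [hc]
    have hb : a + (b - a - 1) + 1 = b := by omega
    rw [hb, ← heq]
  · have hjv : (j : ℕ) < b - a - 1 := by omega
    have h1 : ((j + 1 : Fin (b - a - 1 + 1)) : ℕ) = (j : ℕ) + 1 := by
      simp [Fin.add_def, Nat.mod_eq_of_lt (by omega : (j:ℕ) + 1 < b - a - 1 + 1)]
    simp only [h1]
    have hc := hchain (a + (j : ℕ)) (by omega) (by omega)
    have h2 : a + (j : ℕ) + 1 = a + ((j : ℕ) + 1) := by omega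
    rw [hc, h2]

/-- Forward step: follow the unique outgoing edge of the head, if any. -/
noncomputable def stepF (O S : Fin t → Fin m) (e : Fin t) : Fin t :=
  if h : ∃ i, O i = S e then h.choose else e

lemma stepF_spec {e : Fin t} (h : ∃ i, O i = S e) : O (stepF O S e) = S e := by
  rw [stepF, dif_pos h]; exact h.choose_spec

/-- Backward step: follow the unique incoming edge of the tail, if any. -/
noncomputable def stepB (O S : Fin t → Fin m) (e : Fin t) : Fin t :=
  if h : ∃ i, S i = O e then h.choose else e

lemma stepB_spec {e : Fin t} (h : ∃ i, S i = O e) : S (stepB O S e) = O e := by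
  rw [stepB, dif_pos h]; exact h.choose_spec

/-- The forward orbit of any edge reaches a sink edge within `t` steps. -/
lemma reach (htree : IsDirectedGTree 1 O S) (e : Fin t) :
    ∃ s, s < t ∧ ¬∃ i, O i = S ((stepF O S)^[s] e) := by
  have hacyc := htree.1
  by_contra hcon
  push_neg at hcon
  have hchain : ∀ j, j < t → S ((stepF O S)^[j] e) = O ((stepF O S)^[j + 1] e) := by
    intro j hj
    obtain ⟨i, hi⟩ := hcon j hj
    have h1 : (stepF O S)^[j + 1] e = stepF O S ((stepF O S)^[j] e) :=
      Function.iterate_succ_apply' _ _ _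
    rw [h1, stepF_spec O S ⟨i, hi⟩]
  have hinj : Function.Injective (fun s : Fin (t + 1) => (stepF O S)^[(s : ℕ)] e) := by
    intro a b hab
    rcases lt_trichotomy (a : ℕ) (b : ℕ) with h | h | h
    · exact (no_chain_repeat O S hacyc (fun s => (stepF O S)^[s] e) a b h
        (fun j _ hj => hchain j (by have := b.isLt; omega)) hab).elim
    · exact Fin.ext h
    · exact (no_chain_repeat O S hacyc (fun s => (stepF O S)^[s] e) b a h
        (fun j _ hj => hchain j (by have := a.isLt; omega)) hab.symm).elim
  have hcard := Fintype.card_le_of_injective _ hinj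
  simp only [Fintype.card_fin] at hcard
  omega

/-- Every edge is reached by the backward orbit of the sink edge `er`,
with successful backward steps all the way. -/
lemma Bhits (htree : IsDirectedGTree 1 O S) (er : Fin t)
    (hsink : ∀ i : Fin t, (¬∃ j, O j = S i) → i = er) (e : Fin t) :
    ∃ s, s < t ∧ (stepB O S)^[s] er = e ∧
      ∀ j, j < s → ∃ i, S i = O ((stepB O S)^[j] er) := by
  obtain ⟨s1, hs1t, hs1⟩ := reach O S htree e
  have hex : ∃ s, ¬∃ i, O i = S ((stepF O S)^[s] e) := ⟨s1, hs1⟩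
  set s := Nat.find hex with hsdef
  have hsP : ¬∃ i, O i = S ((stepF O S)^[s] e) := Nat.find_spec hex
  have hsle : s ≤ s1 := Nat.find_min' hex hs1
  have hstep : ∀ j, j < s → ∃ i, O i = S ((stepF O S)^[j] e) := by
    intro j hj
    have := Nat.find_min hex hj
    exact not_not.mp this
  have hFs : (stepF O S)^[s] e = er := hsink _ hsP
  have key : ∀ j, j ≤ s → (stepB O S)^[j] er = (stepF O S)^[s - j] e := by
    intro j
    induction j with
    | zero => intro _; simpa using hFs.symm
    | succ j ih =>
      intro hj
      have ihj := ih (by omega)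
      have hit : (stepB O S)^[j + 1] er = stepB O S ((stepB O S)^[j] er) :=
        Function.iterate_succ_apply' _ _ _
      rw [hit, ihj]
      have h1 : s - j = (s - (j + 1)) + 1 := by omega
      have hstepj := hstep (s - (j + 1)) (by omega)
      have h2 : (stepF O S)^[s - j] e = stepF O S ((stepF O S)^[s - (j + 1)] e) := by
        rw [h1]; exact Function.iterate_succ_apply' _ _ _
      have h3 : O ((stepF O S)^[s - j] e) = S ((stepF O S)^[s - (j + 1)] e) := by
        rw [h2]; exact stepF_spec O S hstepj
      have hexB : ∃ i, S i = O ((stepF O S)^[s - j] e) := ⟨_, h3.symm⟩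
      have h4 := stepB_spec O S hexB
      apply S_inj O S htree
      rw [h4, h3]
  refine ⟨s, by omega, ?_, ?_⟩
  · have := key s le_rfl
    simpa using this
  · intro j hj
    rw [key j (by omega)]
    have h1 : s - j = (s - (j + 1)) + 1 := by omega
    have hstepj := hstep (s - (j + 1)) (by omega)
    have h2 : (stepF O S)^[s - j] e = stepF O S ((stepF O S)^[s - (j + 1)] e) := by
      rw [h1]; exact Function.iterate_succ_apply' _ _ _
    exact ⟨_, by rw [h2, stepF_spec O S hstepj]⟩

/-- Enumeration of the edges of the 1-tree from the root edge down to the leaf edge. -/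
lemma exists_enum (htree : IsDirectedGTree 1 O S) :
    ∃ B : ℕ → Fin t,
      (∀ k, k + 1 < t → S (B (k + 1)) = O (B k)) ∧
      (∀ i, S i ≠ O (B (t - 1))) ∧
      (∀ k l, k < t → l < t → B k = B l → k = l) ∧
      (∀ e, ∃ k, k < t ∧ B k = e) ∧
      (∀ i, O i ≠ S (B 0)) := by
  have htree' := htree
  obtain ⟨hacyc, r, hr1, hr0, hv⟩ := htree'
  have hr1' := hr1
  rw [inDeg, Finset.card_eq_one] at hr1'
  obtain ⟨er, her⟩ := hr1'
  have hSer : S er = r := by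
    have h := her ▸ Finset.mem_singleton_self er
    simpa using h
  have huniq : ∀ i, S i = r → i = er := by
    intro i hi
    have h : i ∈ Finset.univ.filter (fun j => S j = r) := by simpa using hi
    rw [her] at h
    simpa using h
  have hout : ∀ v, v ≠ r → ∃ i, O i = v := by
    intro v hvr
    have h1 := (hv v hvr).1
    rw [outDeg, Finset.card_eq_one] at h1
    obtain ⟨i, hi⟩ := h1
    have h := hi ▸ Finset.mem_singleton_self i
    simp only [Finset.mem_filter] at h
    exact ⟨i, h.2⟩
  have hsink : ∀ i : Fin t, (¬∃ j, O j = S i) → i = er := by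
    intro i hi
    apply huniq
    by_contra hne
    exact hi (hout _ hne)
  set B := fun s => (stepB O S)^[s] er with hBdef
  have hhits : ∀ e, ∃ s, s < t ∧ B s = e ∧ ∀ j, j < s → ∃ i, S i = O (B j) :=
    fun e => Bhits O S htree er hsink e
  have hnorep : ∀ a b, a < b → (∀ j, j < b → ∃ i, S i = O (B j)) → B a ≠ B b := by
    intro a b hab hsucc heq
    apply no_chain_repeat O S hacyc (fun j => B (b - j)) 0 (b - a) (by omega)
    · intro j _ hj
      have h1 : b - j = (b - (j + 1)) + 1 := by omega
      have hsj := hsucc (b - (j + 1)) (by omega)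
      have h2 : B (b - j) = stepB O S (B (b - (j + 1))) := by
        show (stepB O S)^[b - j] er = _
        rw [h1]; exact Function.iterate_succ_apply' _ _ _
      rw [h2, stepB_spec O S hsj]
    · have h3 : b - (b - a) = a := by omega
      simp only [Nat.sub_zero, h3]
      exact heq.symm
  have hsucc_all : ∀ j, j + 1 < t → ∃ i, S i = O (B j) := by
    intro j0 hj0
    by_contra hfail
    have hse : ∀ e : Fin t, ∃ s, s ≤ j0 ∧ B s = e := by
      intro e
      obtain ⟨s, hst, hBs, hs⟩ := hhits e
      refine ⟨s, ?_, hBs⟩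
      by_contra hgt
      exact hfail (hs j0 (by omega))
    choose f hf1 hf2 using hse
    have hinjf : Function.Injective (fun e : Fin t => (⟨f e, by have := hf1 e; omega⟩ : Fin (j0 + 1))) := by
      intro e e' h
      have h' : f e = f e' := by simpa [Fin.ext_iff] using h
      rw [← hf2 e, ← hf2 e', h']
    have hcard := Fintype.card_le_of_injective _ hinjf
    simp only [Fintype.card_fin] at hcard
    omega
  have hchain1 : ∀ k, k + 1 < t → S (B (k + 1)) = O (B k) := by
    intro k hk
    have h2 : B (k + 1) = stepB O S (B k) := Function.iterate_succ_apply' _ _ _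
    rw [h2, stepB_spec O S (hsucc_all k hk)]
  have hinj : ∀ k l, k < t → l < t → B k = B l → k = l := by
    intro k l hk hl hkl
    rcases lt_trichotomy k l with h | h | h
    · exact ((hnorep k l h (fun j hj => hsucc_all j (by omega))) hkl).elim
    · exact h
    · exact ((hnorep l k h (fun j hj => hsucc_all j (by omega))) hkl.symm).elim
  have hleaf : ∀ i, S i ≠ O (B (t - 1)) := by
    intro i hi
    have ht0 := t_pos O S htree
    have hsucc' : ∀ j, j < t → ∃ i, S i = O (B j) := by
      intro j hj
      rcases Nat.lt_or_ge (j + 1) t with h | h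
      · exact hsucc_all j h
      · have hjt : j = t - 1 := by omega
        exact hjt ▸ ⟨i, hi⟩
    have hinj2 : Function.Injective (fun s : Fin (t + 1) => B (s : ℕ)) := by
      intro a b hab
      rcases lt_trichotomy (a : ℕ) (b : ℕ) with h | h | h
      · exact ((hnorep a b h (fun j hj => hsucc' j (by have := b.isLt; omega))) hab).elim
      · exact Fin.ext h
      · exact ((hnorep b a h (fun j hj => hsucc' j (by have := a.isLt; omega))) hab.symm).elim
    have hcard := Fintype.card_le_of_injective _ hinj2
    simp only [Fintype.card_fin] at hcard
    omega
  have hroot : ∀ i, O i ≠ S (B 0) := by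
    intro i hi
    have hB0 : B 0 = er := rfl
    rw [hB0, hSer] at hi
    have hmem : i ∈ Finset.univ.filter (fun j => O j = r) := by simpa using hi
    rw [outDeg, Finset.card_eq_zero] at hr0
    rw [hr0] at hmem
    simp at hmem
  exact ⟨B, hchain1, hleaf, hinj,
    fun e => (hhits e).imp (fun s hs => ⟨hs.1, hs.2.1⟩), hroot⟩

/-- The covering: value `2 ^ (t - 1 - length)` on each leaf path, `0` elsewhere. -/
noncomputable def xcov (O S : Fin t → Fin m) (p : PathIdx t) : ℝ :=
  if IsLeafPath O S p then 2 ^ (t - 1 - (p.1 : ℕ)) else 0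

/-- The leaf path of length `k + 1` (in edges), given the enumeration `B`. -/
def LP (B : ℕ → Fin t) (k : Fin t) : PathIdx t :=
  ⟨k, fun j => B (t - 1 - (j : ℕ))⟩

section Enum

variable (B : ℕ → Fin t)

lemma LP_isLeafPath (hB1 : ∀ k, k + 1 < t → S (B (k + 1)) = O (B k))
    (hB2 : ∀ i, S i ≠ O (B (t - 1))) (k : Fin t) : IsLeafPath O S (LP B k) := by
  constructor
  · intro j
    show S (B (t - 1 - ((j.castSucc : Fin _) : ℕ))) = O (B (t - 1 - ((j.succ : Fin _) : ℕ)))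
    have hj : (j : ℕ) < (k : ℕ) := j.isLt
    have hk : (k : ℕ) < t := k.isLt
    simp only [Fin.coe_castSucc, Fin.val_succ]
    have he : t - 1 - (j : ℕ) = (t - 1 - ((j : ℕ) + 1)) + 1 := by omega
    rw [he]
    exact hB1 _ (by omega)
  · intro i
    show S i ≠ O (B (t - 1 - ((0 : Fin ((k : ℕ) + 1)) : ℕ)))
    simp only [Fin.val_zero, Nat.sub_zero]
    exact hB2 i

lemma leafPath_eq (htree : IsDirectedGTree 1 O S)
    (hB1 : ∀ k, k + 1 < t → S (B (k + 1)) = O (B k))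
    (hB2 : ∀ i, S i ≠ O (B (t - 1)))
    (hB3 : ∀ k l, k < t → l < t → B k = B l → k = l)
    (hB4 : ∀ e, ∃ k, k < t ∧ B k = e)
    (p : PathIdx t) (hp : IsLeafPath O S p) :
    ∀ j : Fin ((p.1 : ℕ) + 1), p.2 j = B (t - 1 - (j : ℕ)) := by
  obtain ⟨hp1, hp2⟩ := hp
  intro j
  induction j using Fin.induction with
  | zero =>
    obtain ⟨s, hst, hBs⟩ := hB4 (p.2 0)
    have hs : s = t - 1 := by
      by_contra hne
      have hlt : s + 1 < t := by omega
      exact hp2 (B (s + 1)) (by rw [hB1 s hlt, hBs])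
    simp only [Fin.val_zero, Nat.sub_zero]
    rw [← hs, ← hBs]
  | succ j ih =>
    obtain ⟨s, hst, hBs⟩ := hB4 (p.2 j.succ)
    have hcond := hp1 j
    rw [ih, ← hBs] at hcond
    have hsne : s ≠ t - 1 := by
      intro h
      exact hB2 _ (h ▸ hcond)
    have hlt : s + 1 < t := by omega
    have hchain := hB1 s hlt
    have hBeq : B (s + 1) = B (t - 1 - ((j.castSucc : Fin _) : ℕ)) :=
      S_inj O S htree (hchain.trans hcond.symm)
    have hidx := hB3 _ _ hlt (by omega) hBeq
    rw [← hBs]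
    congr 1
    simp only [Fin.coe_castSucc] at hidx
    simp only [Fin.val_succ]
    omega

lemma isLeafPath_iff_eq (htree : IsDirectedGTree 1 O S)
    (hB1 : ∀ k, k + 1 < t → S (B (k + 1)) = O (B k))
    (hB2 : ∀ i, S i ≠ O (B (t - 1)))
    (hB3 : ∀ k l, k < t → l < t → B k = B l → k = l)
    (hB4 : ∀ e, ∃ k, k < t ∧ B k = e)
    (a : Fin t) (g : Fin ((a : ℕ) + 1) → Fin t) :
    IsLeafPath O S ⟨a, g⟩ ↔ g = fun j : Fin ((a : ℕ) + 1) => B (t - 1 - (j : ℕ)) := by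
  constructor
  · intro h
    funext j
    exact leafPath_eq O S B htree hB1 hB2 hB3 hB4 ⟨a, g⟩ h j
  · rintro rfl
    exact LP_isLeafPath O S B hB1 hB2 a

lemma sum_eval (htree : IsDirectedGTree 1 O S)
    (hB1 : ∀ k, k + 1 < t → S (B (k + 1)) = O (B k))
    (hB2 : ∀ i, S i ≠ O (B (t - 1)))
    (hB3 : ∀ k l, k < t → l < t → B k = B l → k = l)
    (hB4 : ∀ e, ∃ k, k < t ∧ B k = e)
    (Q : PathIdx t → Prop) [DecidablePred Q] :
    ∑ p ∈ Finset.univ.filter (fun p => IsLeafPath O S p ∧ Q p), xcov O S p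
      = ∑ a : Fin t, if Q (LP B a) then (2 : ℝ) ^ (t - 1 - (a : ℕ)) else 0 := by
  classical
  have h1 : ∑ p ∈ Finset.univ.filter (fun p => IsLeafPath O S p ∧ Q p), xcov O S p
      = ∑ p ∈ Finset.univ.filter (fun p => IsLeafPath O S p ∧ Q p),
          (2 : ℝ) ^ (t - 1 - (p.1 : ℕ)) := by
    apply Finset.sum_congr rfl
    intro p hp
    rw [Finset.mem_filter] at hp
    rw [xcov, if_pos hp.2.1]
  rw [h1, Finset.sum_filter, ← Finset.univ_sigma_univ, Finset.sum_sigma]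
  apply Finset.sum_congr rfl
  intro a _
  rw [Finset.sum_eq_single (fun j : Fin ((a : ℕ) + 1) => B (t - 1 - (j : ℕ)))]
  · have hl : IsLeafPath O S ⟨a, fun j => B (t - 1 - (j : ℕ))⟩ :=
      LP_isLeafPath O S B hB1 hB2 a
    simp only [hl, true_and]
    rfl
  · intro g _ hne
    rw [if_neg]
    rintro ⟨hleaf, -⟩
    exact hne ((isLeafPath_iff_eq O S B htree hB1 hB2 hB3 hB4 a g).mp hleaf)
  · intro h
    exact absurd (Finset.mem_univ _) h

lemma sum_indicator (ρ : ℕ) (hρ : ρ < t) :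
    ∑ a : Fin t, (if t - 1 - (a : ℕ) ≤ ρ then (2 : ℝ) ^ (t - 1 - (a : ℕ)) else 0)
      = 2 ^ (ρ + 1) - 1 := by
  calc ∑ a : Fin t, (if t - 1 - (a : ℕ) ≤ ρ then (2 : ℝ) ^ (t - 1 - (a : ℕ)) else 0)
      = ∑ k ∈ Finset.range t,
          (fun k => if t - 1 - k ≤ ρ then (2 : ℝ) ^ (t - 1 - k) else 0) k :=
        Fin.sum_univ_eq_sum_range (fun k => if t - 1 - k ≤ ρ then (2 : ℝ) ^ (t - 1 - k) else 0) t
    _ = ∑ k ∈ Finset.range t, (if k ≤ ρ then (2 : ℝ) ^ k else 0) :=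
        Finset.sum_range_reflect (fun k => if k ≤ ρ then (2 : ℝ) ^ k else 0) t
    _ = ∑ k ∈ (Finset.range t).filter (fun k => k ≤ ρ), (2 : ℝ) ^ k :=
        (Finset.sum_filter _ _).symm
    _ = ∑ k ∈ Finset.range (ρ + 1), (2 : ℝ) ^ k := by
        apply Finset.sum_congr _ (fun _ _ => rfl)
        ext k
        simp only [Finset.mem_filter, Finset.mem_range]
        omega
    _ = 2 ^ (ρ + 1) - 1 := by
        rw [geom_sum_eq (by norm_num : (2 : ℝ) ≠ 1)]
        norm_num

lemma crossSum_eq (htree : IsDirectedGTree 1 O S)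
    (hB1 : ∀ k, k + 1 < t → S (B (k + 1)) = O (B k))
    (hB2 : ∀ i, S i ≠ O (B (t - 1)))
    (hB3 : ∀ k l, k < t → l < t → B k = B l → k = l)
    (hB4 : ∀ e, ∃ k, k < t ∧ B k = e)
    (ρ : ℕ) (hρ : ρ < t) :
    crossSum O S (xcov O S) (B ρ) = 2 ^ (ρ + 1) - 1 := by
  have hcond : ∀ a : Fin t, Crosses (LP B a) (B ρ) ↔ t - 1 - (a : ℕ) ≤ ρ := by
    intro a
    have hfst : ((LP B a).fst : ℕ) = (a : ℕ) := rfl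
    constructor
    · rintro ⟨j, hj⟩
      have hj' : B (t - 1 - (j : ℕ)) = B ρ := hj
      have := hB3 _ _ (by omega) hρ hj'
      have hjl := j.isLt
      omega
    · intro h
      refine ⟨⟨t - 1 - ρ, by omega⟩, ?_⟩
      show B (t - 1 - (t - 1 - ρ)) = B ρ
      congr 1
      omega
  rw [crossSum, sum_eval O S B htree hB1 hB2 hB3 hB4 (fun p => Crosses p (B ρ))]
  rw [Finset.sum_congr rfl (fun a _ => if_congr (hcond a) rfl rfl)]
  exact sum_indicator ρ hρ

lemma endSum_eq (htree : IsDirectedGTree 1 O S)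
    (hB1 : ∀ k, k + 1 < t → S (B (k + 1)) = O (B k))
    (hB2 : ∀ i, S i ≠ O (B (t - 1)))
    (hB3 : ∀ k l, k < t → l < t → B k = B l → k = l)
    (hB4 : ∀ e, ∃ k, k < t ∧ B k = e)
    (ρ : ℕ) (hρ : ρ < t) :
    endSum O S (xcov O S) (B ρ) = 2 ^ ρ := by
  have hcond : ∀ a : Fin t, EndsAt (LP B a) (B ρ) ↔ t - 1 - (a : ℕ) = ρ := by
    intro a
    constructor
    · intro h
      have h' : B (t - 1 - ((Fin.last (a : ℕ) : Fin _) : ℕ)) = B ρ := h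
      simp only [Fin.val_last] at h'
      exact hB3 _ _ (by omega) hρ h'
    · intro h
      show B (t - 1 - ((Fin.last (a : ℕ) : Fin _) : ℕ)) = B ρ
      simp only [Fin.val_last]
      rw [h]
  rw [endSum, sum_eval O S B htree hB1 hB2 hB3 hB4 (fun p => EndsAt p (B ρ))]
  rw [Finset.sum_congr rfl (fun a _ => if_congr (hcond a) rfl rfl)]
  calc ∑ a : Fin t, (if t - 1 - (a : ℕ) = ρ then (2 : ℝ) ^ (t - 1 - (a : ℕ)) else 0)
      = ∑ k ∈ Finset.range t,
          (fun k => if t - 1 - k = ρ then (2 : ℝ) ^ (t - 1 - k) else 0) k :=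
        Fin.sum_univ_eq_sum_range (fun k => if t - 1 - k = ρ then (2 : ℝ) ^ (t - 1 - k) else 0) t
    _ = ∑ k ∈ Finset.range t, (if k = ρ then (2 : ℝ) ^ k else 0) :=
        Finset.sum_range_reflect (fun k => if k = ρ then (2 : ℝ) ^ k else 0) t
    _ = 2 ^ ρ := by
        rw [Finset.sum_ite_eq' (Finset.range t) ρ (fun k => (2 : ℝ) ^ k)]
        rw [if_pos (Finset.mem_range.mpr hρ)]

lemma crossBothSum_eq (htree : IsDirectedGTree 1 O S)
    (hB1 : ∀ k, k + 1 < t → S (B (k + 1)) = O (B k))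
    (hB2 : ∀ i, S i ≠ O (B (t - 1)))
    (hB3 : ∀ k l, k < t → l < t → B k = B l → k = l)
    (hB4 : ∀ e, ∃ k, k < t ∧ B k = e)
    (ρ : ℕ) (hρ : ρ < t) (hρ1 : 1 ≤ ρ) :
    crossBothSum O S (xcov O S) (B ρ) (B (ρ - 1)) = 2 ^ ρ - 1 := by
  have hcross : ∀ (a : Fin t) (σ : ℕ), σ < t →
      (Crosses (LP B a) (B σ) ↔ t - 1 - (a : ℕ) ≤ σ) := by
    intro a σ hσ
    have hfst : ((LP B a).fst : ℕ) = (a : ℕ) := rfl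
    constructor
    · rintro ⟨j, hj⟩
      have hj' : B (t - 1 - (j : ℕ)) = B σ := hj
      have := hB3 _ _ (by omega) hσ hj'
      have hjl := j.isLt
      omega
    · intro h
      refine ⟨⟨t - 1 - σ, by omega⟩, ?_⟩
      show B (t - 1 - (t - 1 - σ)) = B σ
      congr 1
      omega
  have hcond : ∀ a : Fin t,
      (Crosses (LP B a) (B ρ) ∧ Crosses (LP B a) (B (ρ - 1))) ↔
        t - 1 - (a : ℕ) ≤ ρ - 1 := by
    intro a
    rw [hcross a ρ hρ, hcross a (ρ - 1) (by omega)]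
    omega
  rw [crossBothSum,
    sum_eval O S B htree hB1 hB2 hB3 hB4 (fun p => Crosses p (B ρ) ∧ Crosses p (B (ρ - 1)))]
  rw [Finset.sum_congr rfl (fun a _ => if_congr (hcond a) rfl rfl)]
  rw [sum_indicator (ρ - 1) (by omega)]
  congr 2
  omega

end Enum

end OneTreeAux
/-- Every directed 1-tree with at most `n` edges has a path covering of cost at most
`2 ^ n − 1`. -/
theorem one_tree_path_covering (n : ℕ) {t m : ℕ} (ht : t ≤ n)
    (O S : Fin t → Fin m) (htree : IsDirectedGTree 1 O S) :
    ∃ x : PathIdx t → ℝ, IsPathCovering O S x ∧ coveringCost O S x ≤ 2 ^ n - 1 := by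
  classical
  obtain ⟨B, hB1, hB2, hB3, hB4, hB5⟩ := OneTreeAux.exists_enum O S htree
  have ht0 : 0 < t := OneTreeAux.t_pos O S htree
  refine ⟨OneTreeAux.xcov O S, ⟨?_, ?_, ?_⟩, ?_⟩
  · intro p
    rw [OneTreeAux.xcov]
    split
    · positivity
    · exact le_refl 0
  · intro e _
    obtain ⟨ρ, hρ, rfl⟩ := hB4 e
    rw [OneTreeAux.crossSum_eq O S B htree hB1 hB2 hB3 hB4 ρ hρ]
    have h2 : (2 : ℝ) ^ 1 ≤ 2 ^ (ρ + 1) := by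
      apply pow_le_pow_right₀ one_le_two
      omega
    norm_num at h2
    linarith
  · intro e f he hf
    obtain ⟨ρ, hρ, rfl⟩ := hB4 e
    have hρ1 : 1 ≤ ρ := by
      rcases Nat.eq_zero_or_pos ρ with h | h
      · subst h
        exact absurd hB5 he
      · exact h
    have hfeq : f = B (ρ - 1) := by
      apply OneTreeAux.O_inj O S htree
      rw [hf]
      have hc := hB1 (ρ - 1) (by omega)
      rw [show ρ - 1 + 1 = ρ by omega] at hc
      rw [hc]
    rw [hfeq, OneTreeAux.endSum_eq O S B htree hB1 hB2 hB3 hB4 ρ hρ,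
      OneTreeAux.crossBothSum_eq O S B htree hB1 hB2 hB3 hB4 ρ hρ hρ1]
    ring_nf
    norm_num
  · haveI : Nonempty (Fin t) := ⟨⟨0, ht0⟩⟩
    apply ciSup_le
    intro e
    obtain ⟨ρ, hρ, rfl⟩ := hB4 e
    rw [OneTreeAux.crossSum_eq O S B htree hB1 hB2 hB3 hB4 ρ hρ]
    have h2 : (2 : ℝ) ^ (ρ + 1) ≤ 2 ^ n := by
      apply pow_le_pow_right₀ one_le_two
      omega
    linarith
end

section
/- Let g ≥ 3 be an integer and let T be a directed g-tree. Then there exists a path covering of T of cost g/(g−2). -/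
namespace GTreeProof

open Finset Function

variable {n m : ℕ}

def Leaf (O S : Fin n → Fin m) (e : Fin n) : Prop := ∀ i, S i ≠ O e

instance (O S : Fin n → Fin m) : DecidablePred (Leaf O S) := fun _ => by
  unfold Leaf; infer_instance

noncomputable def nx (O S : Fin n → Fin m) (e : Fin n) : Fin n :=
  if h : ∃ f, O f = S e then h.choose else e

noncomputable def dpt (O S : Fin n → Fin m) (r : Fin m) (e : Fin n) : ℕ :=
  sInf {k | S ((nx O S)^[k] e) = r}

def Below (O S : Fin n → Fin m) (r : Fin m) (e₀ e : Fin n) : Prop :=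
  dpt O S r e ≤ dpt O S r e₀ ∧ (nx O S)^[dpt O S r e₀ - dpt O S r e] e₀ = e

noncomputable instance (O S : Fin n → Fin m) (r : Fin m) (e₀ e : Fin n) :
    Decidable (Below O S r e₀ e) := by unfold Below; infer_instance

structure Hyp (g : ℕ) (O S : Fin n → Fin m) (r : Fin m) : Prop where
  acyc : NoDirectedCycle O S
  r1 : inDeg S r = 1
  r0 : outDeg O r = 0
  int : ∀ v, v ≠ r → outDeg O v = 1 ∧ (inDeg S v = 0 ∨ inDeg S v = g)

variable {g : ℕ} {O S : Fin n → Fin m} {r : Fin m}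

lemma O_ne_r (H : Hyp g O S r) (e : Fin n) : O e ≠ r := by
  intro h
  have h0 := H.r0
  unfold outDeg at h0
  rw [Finset.card_eq_zero] at h0
  have : e ∈ Finset.univ.filter (fun i => O i = r) := by simp [h]
  simp [h0] at this

lemma exists_out (H : Hyp g O S r) {e : Fin n} (h : S e ≠ r) : ∃ f, O f = S e := by
  have h1 := (H.int (S e) h).1
  unfold outDeg at h1
  have hne : (Finset.univ.filter (fun i => O i = S e)).Nonempty := by
    rw [← Finset.card_pos, h1]; norm_num
  obtain ⟨f, hf⟩ := hne
  exact ⟨f, (Finset.mem_filter.mp hf).2⟩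

lemma nx_out (H : Hyp g O S r) {e : Fin n} (h : S e ≠ r) : O (nx O S e) = S e := by
  have hex := exists_out H h
  unfold nx; rw [dif_pos hex]; exact hex.choose_spec

lemma nx_unique (H : Hyp g O S r) {e f : Fin n} (h : O f = S e) : nx O S e = f := by
  have hne : S e ≠ r := fun hr => O_ne_r H f (by rw [h, hr])
  have h1 := (H.int (S e) hne).1
  unfold outDeg at h1
  rw [Finset.card_eq_one] at h1
  obtain ⟨a, ha⟩ := h1
  have hf : f ∈ Finset.univ.filter (fun i => O i = S e) := by simp [h]
  have hx : nx O S e ∈ Finset.univ.filter (fun i => O i = S e) := by simp [nx_out H hne]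
  rw [ha] at hf hx
  simp only [Finset.mem_singleton] at hf hx
  rw [hx, hf]

lemma nx_fix (H : Hyp g O S r) {e : Fin n} (h : S e = r) : nx O S e = e := by
  unfold nx; rw [dif_neg]; rintro ⟨f, hf⟩; exact O_ne_r H f (by rw [hf, h])

lemma reach (H : Hyp g O S r) (e : Fin n) : ∃ k < n, S ((nx O S)^[k] e) = r := by
  by_contra hcon
  push_neg at hcon
  have key : ∀ j k : ℕ, j < k → k ≤ n → (nx O S)^[j] e ≠ (nx O S)^[k] e := by
    intro j k hjk hkn heq
    set t : ℕ := k - j - 1 with ht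
    have htk : j + t + 1 = k := by omega
    have hstep : ∀ i : Fin (t + 1),
        (nx O S)^[j + ((i + 1 : Fin (t+1)):ℕ)] e = nx O S ((nx O S)^[j + (i:ℕ)] e) := by
      intro i
      by_cases hi : i = Fin.last t
      · have hv : ((i + 1 : Fin (t+1)) : ℕ) = 0 := by rw [Fin.val_add_one, if_pos hi]
        rw [hv, hi]
        simp only [Fin.val_last, add_zero]
        rw [← Function.iterate_succ_apply' (nx O S) (j + t) e]
        simp only [Nat.succ_eq_add_one]
        rw [htk, heq]
      · have hv : ((i + 1 : Fin (t+1)) : ℕ) = (i : ℕ) + 1 := by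
          rw [Fin.val_add_one, if_neg hi]
        rw [hv, show j + ((i:ℕ)+1) = (j + (i:ℕ)) + 1 by omega,
          Function.iterate_succ_apply' (nx O S) (j + (i:ℕ)) e]
    apply H.acyc t (fun i : Fin (t+1) => (nx O S)^[j + (i:ℕ)] e)
    intro i
    show S ((nx O S)^[j + (i:ℕ)] e) = O ((nx O S)^[j + ((i+1 : Fin (t+1)):ℕ)] e)
    rw [hstep i]
    refine (nx_out H ?_).symm
    exact hcon (j + (i:ℕ)) (by have := i.2; omega)
  have hinj : Function.Injective (fun i : Fin (n+1) => (nx O S)^[(i:ℕ)] e) := by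
    intro i1 i2 h12
    by_contra hne
    rcases Nat.lt_or_ge (i1:ℕ) (i2:ℕ) with hlt | hge
    · exact key i1 i2 hlt (by have := i2.2; omega) h12
    · have hlt2 : (i2:ℕ) < (i1:ℕ) := by
        rcases Nat.lt_or_ge (i2:ℕ) (i1:ℕ) with h | h
        · exact h
        · exact absurd (Fin.ext (by omega)) hne
      exact key i2 i1 hlt2 (by have := i1.2; omega) h12.symm
  have hcard := Fintype.card_le_of_injective _ hinj
  simp only [Fintype.card_fin] at hcard
  omega

lemma dpt_spec (H : Hyp g O S r) (e : Fin n) : S ((nx O S)^[dpt O S r e] e) = r := by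
  obtain ⟨k, -, hk⟩ := reach H e
  have hne : {k | S ((nx O S)^[k] e) = r}.Nonempty := ⟨k, hk⟩
  exact Nat.sInf_mem hne

lemma dpt_lt (H : Hyp g O S r) (e : Fin n) : dpt O S r e < n := by
  obtain ⟨k, hkn, hk⟩ := reach H e
  have hle : dpt O S r e ≤ k := Nat.sInf_le (show k ∈ {k | S ((nx O S)^[k] e) = r} from hk)
  omega

lemma dpt_min (H : Hyp g O S r) {e : Fin n} {k : ℕ} (h : k < dpt O S r e) :
    S ((nx O S)^[k] e) ≠ r :=
  Nat.notMem_of_lt_sInf h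

lemma dpt_zero (H : Hyp g O S r) {e : Fin n} (h : S e = r) : dpt O S r e = 0 :=
  Nat.sInf_eq_zero.mpr (Or.inl (by simpa using h))

lemma dpt_pos (H : Hyp g O S r) {e : Fin n} (h : S e ≠ r) : 0 < dpt O S r e := by
  rcases Nat.eq_zero_or_pos (dpt O S r e) with h0 | h0
  · exfalso; apply h; have := dpt_spec H e; rwa [h0] at this
  · exact h0

lemma dpt_nx (H : Hyp g O S r) {e : Fin n} (h : S e ≠ r) :
    dpt O S r e = dpt O S r (nx O S e) + 1 := by
  have h1 : 0 < dpt O S r e := dpt_pos H h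
  have le1 : dpt O S r (nx O S e) ≤ dpt O S r e - 1 := by
    apply Nat.sInf_le
    show S ((nx O S)^[dpt O S r e - 1] (nx O S e)) = r
    have hs := dpt_spec H e
    rw [show dpt O S r e = (dpt O S r e - 1) + 1 by omega,
      Function.iterate_succ_apply] at hs
    exact hs
  have le2 : dpt O S r e ≤ dpt O S r (nx O S e) + 1 := by
    apply Nat.sInf_le
    show S ((nx O S)^[dpt O S r (nx O S e) + 1] e) = r

    rw [Function.iterate_succ_apply]
    exact dpt_spec H (nx O S e)
  omega

lemma dpt_iter (H : Hyp g O S r) :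
    ∀ (j : ℕ) (e : Fin n), j ≤ dpt O S r e →
      dpt O S r ((nx O S)^[j] e) = dpt O S r e - j := by
  intro j
  induction j with
  | zero => intro e _; simp
  | succ k ih =>
    intro e hj
    have hpos : 0 < dpt O S r e := by omega
    have hS : S e ≠ r := by
      intro hr; rw [dpt_zero H hr] at hpos; omega
    have hd := dpt_nx H hS
    rw [Function.iterate_succ_apply, ih (nx O S e) (by omega)]
    omega

lemma iter_below (H : Hyp g O S r) {e₀ e : Fin n} {j : ℕ}
    (hj : j ≤ dpt O S r e₀) (h : (nx O S)^[j] e₀ = e) :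
    Below O S r e₀ e ∧ j = dpt O S r e₀ - dpt O S r e := by
  have hde : dpt O S r e = dpt O S r e₀ - j := by rw [← h]; exact dpt_iter H j e₀ hj
  have hj' : j = dpt O S r e₀ - dpt O S r e := by omega
  exact ⟨⟨by omega, by rw [← hj']; exact h⟩, hj'⟩

lemma below_self (e : Fin n) : Below O S r e e := ⟨le_rfl, by simp⟩

end GTreeProof
namespace GTreeProof

variable {n m : ℕ} {g : ℕ} {O S : Fin n → Fin m} {r : Fin m}

noncomputable def aval (g : ℕ) (S : Fin n → Fin m) (r : Fin m) (e : Fin n) : ℝ :=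
  if S e = r then (g:ℝ)/((g:ℝ)-2) else ((g:ℝ)-1)/((g:ℝ)-2)

noncomputable def xval (g : ℕ) (S : Fin n → Fin m) (r : Fin m) (p : PathIdx n) : ℝ :=
  aval g S r (p.2 (Fin.last (p.1:ℕ))) * ((g:ℝ)⁻¹)^((p.1:ℕ))

lemma path_chain (H : Hyp g O S r) {p : PathIdx n} (hp : IsLeafPath O S p) :
    ∀ j : Fin ((p.1:ℕ)+1), p.2 j = (nx O S)^[(j:ℕ)] (p.2 0) := by
  suffices h : ∀ (k : ℕ) (hk : k < (p.1:ℕ)+1), p.2 ⟨k, hk⟩ = (nx O S)^[k] (p.2 0) by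
    intro j
    have := h j.1 j.2
    simpa using this
  intro k
  induction k with
  | zero =>
    intro hk
    simp only [Function.iterate_zero, id]
    congr 1
  | succ k ih =>
    intro hk
    have hk' : k < (p.1:ℕ) + 1 := by omega
    have hkp : k < (p.1:ℕ) := by omega
    have hadj := hp.1 ⟨k, hkp⟩
    have h1 : (⟨k, hkp⟩ : Fin (p.1:ℕ)).castSucc = ⟨k, hk'⟩ := rfl
    have h2 : (⟨k, hkp⟩ : Fin (p.1:ℕ)).succ = ⟨k+1, hk⟩ := rfl
    rw [h1, h2] at hadj
    have hu := nx_unique H hadj.symm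
    rw [← hu, ih hk']
    exact (Function.iterate_succ_apply' (nx O S) k (p.2 0)).symm

lemma path_le (H : Hyp g O S r) {p : PathIdx n} (hp : IsLeafPath O S p) :
    (p.1:ℕ) ≤ dpt O S r (p.2 0) := by
  by_contra hlt
  push_neg at hlt
  set D := dpt O S r (p.2 0) with hD
  have hDlt : D < (p.1:ℕ) := hlt
  have hadj := hp.1 ⟨D, hDlt⟩
  have h1 : (⟨D, hDlt⟩ : Fin (p.1:ℕ)).castSucc = ⟨D, by omega⟩ := rfl
  have h2 : (⟨D, hDlt⟩ : Fin (p.1:ℕ)).succ = ⟨D+1, by omega⟩ := rfl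
  rw [h1, h2] at hadj
  have hch := path_chain H hp ⟨D, by omega⟩
  apply O_ne_r H (p.2 ⟨D+1, by omega⟩)
  rw [← hadj, hch]
  exact dpt_spec H (p.2 0)

lemma chain_path (H : Hyp g O S r) {e₀ : Fin n} (hl : Leaf O S e₀) (t : Fin n)
    (ht : (t:ℕ) ≤ dpt O S r e₀) :
    IsLeafPath O S ⟨t, fun j => (nx O S)^[(j:ℕ)] e₀⟩ := by
  constructor
  · intro j
    show S ((nx O S)^[((j.castSucc : Fin ((t:ℕ)+1)):ℕ)] e₀)
        = O ((nx O S)^[((j.succ : Fin ((t:ℕ)+1)):ℕ)] e₀)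
    have hc : ((j.castSucc : Fin ((t:ℕ)+1)):ℕ) = (j:ℕ) := rfl
    have hs : ((j.succ : Fin ((t:ℕ)+1)):ℕ) = (j:ℕ)+1 := rfl
    rw [hc, hs, Function.iterate_succ_apply']
    exact (nx_out H (dpt_min H (lt_of_lt_of_le j.2 ht))).symm
  · intro i
    show S i ≠ O ((nx O S)^[((0 : Fin ((t:ℕ)+1)):ℕ)] e₀)
    simp only [Fin.val_zero, Function.iterate_zero, id]
    exact hl i

lemma path_eta (H : Hyp g O S r) {p : PathIdx n} (hp : IsLeafPath O S p) :
    (⟨p.1, fun j => (nx O S)^[(j:ℕ)] (p.2 0)⟩ : PathIdx n) = p := by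
  have hch := path_chain H hp
  obtain ⟨t, f⟩ := p
  show (⟨t, fun j => (nx O S)^[(j:ℕ)] (f 0)⟩ : PathIdx n) = ⟨t, f⟩
  exact congrArg (fun q => (⟨t, q⟩ : PathIdx n)) (funext fun j => (hch j).symm)

lemma sum_paths (H : Hyp g O S r) (P : PathIdx n → Prop) [DecidablePred P] :
    ∑ p ∈ Finset.univ.filter (fun p => IsLeafPath O S p ∧ P p), xval g S r p
    = ∑ z ∈ Finset.univ.filter
        (fun z : Fin n × Fin n => Leaf O S z.1 ∧ (z.2:ℕ) ≤ dpt O S r z.1 ∧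
          P ⟨z.2, fun j => (nx O S)^[(j:ℕ)] z.1⟩),
        aval g S r ((nx O S)^[((z.2 : Fin n):ℕ)] z.1) * ((g:ℝ)⁻¹)^((z.2 : Fin n):ℕ) := by
  refine Finset.sum_nbij' (i := fun p => ((p.2 0 : Fin n), p.1))
    (j := fun z : Fin n × Fin n => (⟨z.2, fun j => (nx O S)^[(j:ℕ)] z.1⟩ : PathIdx n))
    ?_ ?_ ?_ ?_ ?_
  · intro p hp
    rw [Finset.mem_filter] at hp ⊢
    obtain ⟨-, hgen, hP⟩ := hp
    refine ⟨Finset.mem_univ _, hgen.2, path_le H hgen, ?_⟩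
    rw [path_eta H hgen]
    exact hP
  · intro z hz
    rw [Finset.mem_filter] at hz ⊢
    obtain ⟨-, hleaf, hle, hP⟩ := hz
    exact ⟨Finset.mem_univ _, chain_path H hleaf z.2 hle, hP⟩
  · intro p hp
    rw [Finset.mem_filter] at hp
    exact path_eta H hp.2.1
  · intro z hz
    have : (nx O S)^[((0 : Fin ((z.2:ℕ)+1)):ℕ)] z.1 = z.1 := by
      simp only [Fin.val_zero, Function.iterate_zero, id]
    simp only [this]
  · intro p hp
    rw [Finset.mem_filter] at hp
    unfold xval
    rw [path_chain H hp.2.1 (Fin.last (p.1:ℕ)), Fin.val_last]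

end GTreeProof
namespace GTreeProof

variable {n m : ℕ} {g : ℕ} {O S : Fin n → Fin m} {r : Fin m}

lemma crosses_def (p : PathIdx n) (e : Fin n) : Crosses p e ↔ ∃ j, p.2 j = e := Iff.rfl

lemma endsAt_def (p : PathIdx n) (e : Fin n) : EndsAt p e ↔ p.2 (Fin.last (p.1:ℕ)) = e :=
  Iff.rfl

noncomputable def Lsum (g : ℕ) (O S : Fin n → Fin m) (r : Fin m) (e : Fin n) : ℝ :=
  ∑ e₀ ∈ Finset.univ.filter (fun e₀ => Leaf O S e₀ ∧ Below O S r e₀ e),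
    ((g:ℝ)⁻¹) ^ (dpt O S r e₀ - dpt O S r e)

noncomputable def Gsum (g : ℕ) (O S : Fin n → Fin m) (r : Fin m) (e : Fin n) : ℝ :=
  ∑ s ∈ Finset.range (dpt O S r e + 1), aval g S r ((nx O S)^[s] e) * ((g:ℝ)⁻¹)^s

lemma Ico_sum (H : Hyp g O S r) {e₀ e : Fin n} (hb : Below O S r e₀ e) :
    ∑ tv ∈ Finset.Ico (dpt O S r e₀ - dpt O S r e) (dpt O S r e₀ + 1),
      aval g S r ((nx O S)^[tv] e₀) * ((g:ℝ)⁻¹)^tv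
    = ((g:ℝ)⁻¹)^(dpt O S r e₀ - dpt O S r e) * Gsum g O S r e := by
  rw [Finset.sum_Ico_eq_sum_range]
  have h2 : dpt O S r e₀ + 1 - (dpt O S r e₀ - dpt O S r e) = dpt O S r e + 1 := by
    have := hb.1; omega
  rw [h2]
  unfold Gsum
  rw [Finset.mul_sum]
  apply Finset.sum_congr rfl
  intro i _
  have hit : (nx O S)^[dpt O S r e₀ - dpt O S r e + i] e₀ = (nx O S)^[i] e := by
    rw [add_comm, Function.iterate_add_apply, hb.2]
  rw [hit, pow_add]
  ring

lemma crossSum_eq (H : Hyp g O S r) (e : Fin n) :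
    crossSum O S (xval g S r) e = Lsum g O S r e * Gsum g O S r e := by
  unfold crossSum
  rw [sum_paths H (fun p => Crosses p e), Finset.sum_filter, Fintype.sum_prod_type]
  have hinner : ∀ e₀ : Fin n,
      (∑ t : Fin n, if Leaf O S e₀ ∧ (t:ℕ) ≤ dpt O S r e₀ ∧
          Crosses ⟨t, fun j => (nx O S)^[(j:ℕ)] e₀⟩ e
        then aval g S r ((nx O S)^[(t:ℕ)] e₀) * ((g:ℝ)⁻¹)^(t:ℕ) else 0)
      = if Leaf O S e₀ ∧ Below O S r e₀ e then
          ((g:ℝ)⁻¹)^(dpt O S r e₀ - dpt O S r e) * Gsum g O S r e else 0 := by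
    intro e₀
    by_cases hb : Leaf O S e₀ ∧ Below O S r e₀ e
    · rw [if_pos hb]
      have hcond : ∀ t : Fin n,
          (Leaf O S e₀ ∧ (t:ℕ) ≤ dpt O S r e₀ ∧
            Crosses ⟨t, fun j => (nx O S)^[(j:ℕ)] e₀⟩ e)
          ↔ (dpt O S r e₀ - dpt O S r e ≤ (t:ℕ) ∧ (t:ℕ) < dpt O S r e₀ + 1) := by
        intro t
        rw [crosses_def]
        constructor
        · rintro ⟨-, ht, j, hj⟩
          have hjt : (j:ℕ) < (t:ℕ) + 1 := j.2
          have hj2 : (j:ℕ) ≤ dpt O S r e₀ := by omega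
          have hiter := (iter_below H hj2 (show (nx O S)^[(j:ℕ)] e₀ = e from hj)).2
          omega
        · rintro ⟨hk, ht⟩
          refine ⟨hb.1, by omega,
            ⟨⟨dpt O S r e₀ - dpt O S r e, show _ < (t:ℕ) + 1 by omega⟩, ?_⟩⟩
          exact hb.2.2
      rw [Finset.sum_congr rfl (fun t (_ : t ∈ Finset.univ) => if_congr (hcond t) rfl rfl)]
      rw [Fin.sum_univ_eq_sum_range
        (fun tv : ℕ => if (dpt O S r e₀ - dpt O S r e ≤ tv ∧ tv < dpt O S r e₀ + 1)
          then aval g S r ((nx O S)^[tv] e₀) * ((g:ℝ)⁻¹)^tv else 0) n]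
      rw [← Finset.sum_filter]
      have hfil : (Finset.range n).filter
          (fun tv => dpt O S r e₀ - dpt O S r e ≤ tv ∧ tv < dpt O S r e₀ + 1)
          = Finset.Ico (dpt O S r e₀ - dpt O S r e) (dpt O S r e₀ + 1) := by
        have hlt := dpt_lt H e₀
        ext tv
        simp only [Finset.mem_filter, Finset.mem_range, Finset.mem_Ico]
        omega
      rw [hfil, Ico_sum H hb.2]
    · rw [if_neg hb]
      apply Finset.sum_eq_zero
      intro t _
      rw [if_neg]
      rw [crosses_def]
      rintro ⟨hl, ht, j, hj⟩
      have hjt : (j:ℕ) < (t:ℕ) + 1 := j.2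
      have hj2 : (j:ℕ) ≤ dpt O S r e₀ := by omega
      exact hb ⟨hl, (iter_below H hj2 (show (nx O S)^[(j:ℕ)] e₀ = e from hj)).1⟩
  rw [Finset.sum_congr rfl (fun e₀ (_ : e₀ ∈ Finset.univ) => hinner e₀)]
  rw [← Finset.sum_filter]
  unfold Lsum
  rw [Finset.sum_mul]

end GTreeProof
namespace GTreeProof

variable {n m : ℕ} {g : ℕ} {O S : Fin n → Fin m} {r : Fin m}

lemma endSum_eq (H : Hyp g O S r) (e : Fin n) :
    endSum O S (xval g S r) e = aval g S r e * Lsum g O S r e := by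
  unfold endSum
  rw [sum_paths H (fun p => EndsAt p e), Finset.sum_filter, Fintype.sum_prod_type]
  have hinner : ∀ e₀ : Fin n,
      (∑ t : Fin n, if Leaf O S e₀ ∧ (t:ℕ) ≤ dpt O S r e₀ ∧
          EndsAt ⟨t, fun j => (nx O S)^[(j:ℕ)] e₀⟩ e
        then aval g S r ((nx O S)^[(t:ℕ)] e₀) * ((g:ℝ)⁻¹)^(t:ℕ) else 0)
      = if Leaf O S e₀ ∧ Below O S r e₀ e then
          aval g S r e * ((g:ℝ)⁻¹)^(dpt O S r e₀ - dpt O S r e) else 0 := by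
    intro e₀
    by_cases hb : Leaf O S e₀ ∧ Below O S r e₀ e
    · rw [if_pos hb]
      have hcond : ∀ t : Fin n,
          (Leaf O S e₀ ∧ (t:ℕ) ≤ dpt O S r e₀ ∧
            EndsAt ⟨t, fun j => (nx O S)^[(j:ℕ)] e₀⟩ e)
          ↔ (t:ℕ) = dpt O S r e₀ - dpt O S r e := by
        intro t
        rw [endsAt_def]
        constructor
        · rintro ⟨-, ht, hend⟩
          exact (iter_below H ht (show (nx O S)^[(t:ℕ)] e₀ = e from hend)).2
        · intro h
          have h1 : (t:ℕ) ≤ dpt O S r e₀ := by have := hb.2.1; omega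
          refine ⟨hb.1, h1, ?_⟩
          show (nx O S)^[(t:ℕ)] e₀ = e
          rw [h]; exact hb.2.2
      have hval : ∀ t : Fin n,
          (if Leaf O S e₀ ∧ (t:ℕ) ≤ dpt O S r e₀ ∧
              EndsAt ⟨t, fun j => (nx O S)^[(j:ℕ)] e₀⟩ e
            then aval g S r ((nx O S)^[(t:ℕ)] e₀) * ((g:ℝ)⁻¹)^(t:ℕ) else 0)
          = if (t:ℕ) = dpt O S r e₀ - dpt O S r e then
              aval g S r e * ((g:ℝ)⁻¹)^(dpt O S r e₀ - dpt O S r e) else 0 := by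
        intro t
        by_cases h : (t:ℕ) = dpt O S r e₀ - dpt O S r e
        · rw [if_pos ((hcond t).mpr h), if_pos h, h, hb.2.2]
        · rw [if_neg (fun hc => h ((hcond t).mp hc)), if_neg h]
      rw [Finset.sum_congr rfl (fun t (_ : t ∈ Finset.univ) => hval t)]
      rw [Fin.sum_univ_eq_sum_range
        (fun tv : ℕ => if tv = dpt O S r e₀ - dpt O S r e then
          aval g S r e * ((g:ℝ)⁻¹)^(dpt O S r e₀ - dpt O S r e) else 0) n]
      rw [Finset.sum_ite_eq' (Finset.range n) (dpt O S r e₀ - dpt O S r e)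
        (fun _ => aval g S r e * ((g:ℝ)⁻¹)^(dpt O S r e₀ - dpt O S r e))]
      rw [if_pos]
      rw [Finset.mem_range]
      have := dpt_lt H e₀
      omega
    · rw [if_neg hb]
      apply Finset.sum_eq_zero
      intro t _
      rw [if_neg]
      rw [endsAt_def]
      rintro ⟨hl, ht, hend⟩
      exact hb ⟨hl, (iter_below H ht (show (nx O S)^[(t:ℕ)] e₀ = e from hend)).1⟩
  rw [Finset.sum_congr rfl (fun e₀ (_ : e₀ ∈ Finset.univ) => hinner e₀)]
  rw [← Finset.sum_filter]
  unfold Lsum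
  rw [Finset.mul_sum]

lemma crossBoth_eq (H : Hyp g O S r) (e f : Fin n) (hf : O f = S e) :
    crossBothSum O S (xval g S r) e f
    = Lsum g O S r e * (Gsum g O S r e - aval g S r e) := by
  have hSe : S e ≠ r := fun h => O_ne_r H f (by rw [hf, h])
  have hnf : nx O S e = f := nx_unique H hf
  have hde : dpt O S r e = dpt O S r f + 1 := by
    have := dpt_nx H hSe; rwa [hnf] at this
  unfold crossBothSum
  rw [sum_paths H (fun p => Crosses p e ∧ Crosses p f), Finset.sum_filter,
    Fintype.sum_prod_type]
  have hinner : ∀ e₀ : Fin n,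
      (∑ t : Fin n, if Leaf O S e₀ ∧ (t:ℕ) ≤ dpt O S r e₀ ∧
          (Crosses ⟨t, fun j => (nx O S)^[(j:ℕ)] e₀⟩ e ∧
           Crosses ⟨t, fun j => (nx O S)^[(j:ℕ)] e₀⟩ f)
        then aval g S r ((nx O S)^[(t:ℕ)] e₀) * ((g:ℝ)⁻¹)^(t:ℕ) else 0)
      = if Leaf O S e₀ ∧ Below O S r e₀ e then
          ((g:ℝ)⁻¹)^(dpt O S r e₀ - dpt O S r e) *
            (Gsum g O S r e - aval g S r e) else 0 := by
    intro e₀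
    by_cases hb : Leaf O S e₀ ∧ Below O S r e₀ e
    · rw [if_pos hb]
      have hcond : ∀ t : Fin n,
          (Leaf O S e₀ ∧ (t:ℕ) ≤ dpt O S r e₀ ∧
            (Crosses ⟨t, fun j => (nx O S)^[(j:ℕ)] e₀⟩ e ∧
             Crosses ⟨t, fun j => (nx O S)^[(j:ℕ)] e₀⟩ f))
          ↔ (dpt O S r e₀ - dpt O S r e + 1 ≤ (t:ℕ) ∧ (t:ℕ) < dpt O S r e₀ + 1) := by
        intro t
        rw [crosses_def, crosses_def]
        constructor
        · rintro ⟨-, ht, ⟨je, hje⟩, ⟨jf, hjf⟩⟩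
          have hjet : (je:ℕ) < (t:ℕ) + 1 := je.2
          have hjft : (jf:ℕ) < (t:ℕ) + 1 := jf.2
          have hje2 : (je:ℕ) ≤ dpt O S r e₀ := by omega
          have hjf2 : (jf:ℕ) ≤ dpt O S r e₀ := by omega
          have hit1 := (iter_below H hje2 (show (nx O S)^[(je:ℕ)] e₀ = e from hje)).2
          have hit2 := (iter_below H hjf2 (show (nx O S)^[(jf:ℕ)] e₀ = f from hjf)).2
          have hble := hb.2.1
          omega
        · rintro ⟨hk, ht⟩
          have hble := hb.2.1
          refine ⟨hb.1, by omega, ⟨⟨dpt O S r e₀ - dpt O S r e,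
              show _ < (t:ℕ) + 1 by omega⟩, hb.2.2⟩,
            ⟨⟨dpt O S r e₀ - dpt O S r e + 1, show _ < (t:ℕ) + 1 by omega⟩, ?_⟩⟩
          show (nx O S)^[dpt O S r e₀ - dpt O S r e + 1] e₀ = f
          rw [Function.iterate_succ_apply', hb.2.2, hnf]
      rw [Finset.sum_congr rfl (fun t (_ : t ∈ Finset.univ) => if_congr (hcond t) rfl rfl)]
      rw [Fin.sum_univ_eq_sum_range
        (fun tv : ℕ => if (dpt O S r e₀ - dpt O S r e + 1 ≤ tv ∧ tv < dpt O S r e₀ + 1)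
          then aval g S r ((nx O S)^[tv] e₀) * ((g:ℝ)⁻¹)^tv else 0) n]
      rw [← Finset.sum_filter]
      have hfil : (Finset.range n).filter
          (fun tv => dpt O S r e₀ - dpt O S r e + 1 ≤ tv ∧ tv < dpt O S r e₀ + 1)
          = Finset.Ico (dpt O S r e₀ - dpt O S r e + 1) (dpt O S r e₀ + 1) := by
        have hlt := dpt_lt H e₀
        ext tv
        simp only [Finset.mem_filter, Finset.mem_range, Finset.mem_Ico]
        omega
      rw [hfil]
      -- split off the first term of the bigger interval
      have hins : Finset.Ico (dpt O S r e₀ - dpt O S r e) (dpt O S r e₀ + 1)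
          = insert (dpt O S r e₀ - dpt O S r e)
              (Finset.Ico (dpt O S r e₀ - dpt O S r e + 1) (dpt O S r e₀ + 1)) := by
        have hble := hb.2.1
        ext tv
        simp only [Finset.mem_insert, Finset.mem_Ico]
        omega
      have hnotmem : dpt O S r e₀ - dpt O S r e ∉
          Finset.Ico (dpt O S r e₀ - dpt O S r e + 1) (dpt O S r e₀ + 1) := by
        simp only [Finset.mem_Ico]
        omega
      have hsplit := Ico_sum H hb.2
      rw [hins, Finset.sum_insert hnotmem, hb.2.2] at hsplit
      have : ∑ tv ∈ Finset.Ico (dpt O S r e₀ - dpt O S r e + 1) (dpt O S r e₀ + 1),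
          aval g S r ((nx O S)^[tv] e₀) * ((g:ℝ)⁻¹)^tv
          = ((g:ℝ)⁻¹)^(dpt O S r e₀ - dpt O S r e) * Gsum g O S r e
            - aval g S r e * ((g:ℝ)⁻¹)^(dpt O S r e₀ - dpt O S r e) := by
        rw [← hsplit]; ring
      rw [this]; ring
    · rw [if_neg hb]
      apply Finset.sum_eq_zero
      intro t _
      rw [if_neg]
      rw [crosses_def, crosses_def]
      rintro ⟨hl, ht, ⟨j, hj⟩, -⟩
      have hjt : (j:ℕ) < (t:ℕ) + 1 := j.2
      have hj2 : (j:ℕ) ≤ dpt O S r e₀ := by omega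
      exact hb ⟨hl, (iter_below H hj2 (show (nx O S)^[(j:ℕ)] e₀ = e from hj)).1⟩
  rw [Finset.sum_congr rfl (fun e₀ (_ : e₀ ∈ Finset.univ) => hinner e₀)]
  rw [← Finset.sum_filter]
  unfold Lsum
  rw [Finset.sum_mul]

end GTreeProof
namespace GTreeProof

variable {n m : ℕ} {g : ℕ} {O S : Fin n → Fin m} {r : Fin m}

lemma step_down (H : Hyp g O S r) {e₀ e : Fin n} (hb : Below O S r e₀ e) (hne : e₀ ≠ e) :
    ∃ e', S e' = O e ∧ Below O S r e₀ e' ∧ dpt O S r e' = dpt O S r e + 1 := by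
  set k₀ := dpt O S r e₀ - dpt O S r e with hk
  have hk0 : k₀ ≠ 0 := by
    intro h
    apply hne
    have h2 := hb.2
    rw [← hk] at h2
    rw [h] at h2
    simpa using h2
  have hk1 : k₀ - 1 ≤ dpt O S r e₀ := by omega
  have hd' : dpt O S r ((nx O S)^[k₀-1] e₀) = dpt O S r e₀ - (k₀ - 1) :=
    dpt_iter H _ _ hk1
  have hd'' : dpt O S r ((nx O S)^[k₀-1] e₀) = dpt O S r e + 1 := by
    have := hb.1; omega
  have hS' : S ((nx O S)^[k₀-1] e₀) ≠ r := by
    intro h; rw [dpt_zero H h] at hd''; omega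
  have hnxe : nx O S ((nx O S)^[k₀-1] e₀) = e := by
    have h2 := hb.2
    rw [← hk, show k₀ = (k₀ - 1) + 1 by omega,
      Function.iterate_succ_apply' (nx O S) (k₀ - 1) e₀] at h2
    exact h2
  refine ⟨(nx O S)^[k₀-1] e₀, ?_, ?_, hd''⟩
  · rw [← hnxe]
    exact (nx_out H hS').symm
  · exact (iter_below H hk1 rfl).1

lemma child_nx (H : Hyp g O S r) {e e' : Fin n} (h : S e' = O e) :
    nx O S e' = e ∧ S e' ≠ r ∧ dpt O S r e' = dpt O S r e + 1 := by
  have hS : S e' ≠ r := by rw [h]; exact O_ne_r H e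
  have hnx : nx O S e' = e := nx_unique H (show O e = S e' from h.symm)
  refine ⟨hnx, hS, ?_⟩
  have := dpt_nx H hS
  rwa [hnx] at this

lemma below_trans_child (H : Hyp g O S r) {e₀ e e' : Fin n} (h : S e' = O e)
    (hb : Below O S r e₀ e') : Below O S r e₀ e := by
  obtain ⟨hnx, hS, hd⟩ := child_nx H h
  have hj : dpt O S r e₀ - dpt O S r e' + 1 ≤ dpt O S r e₀ := by
    have := hb.1; omega
  refine (iter_below H hj ?_).1
  rw [Function.iterate_succ_apply', hb.2, hnx]

lemma Lsum_one (H : Hyp g O S r) (hg3 : 3 ≤ g) : ∀ e, Lsum g O S r e = 1 := by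
  have hg0 : (3:ℝ) ≤ (g:ℝ) := by exact_mod_cast hg3
  suffices hsuf : ∀ K, ∀ e : Fin n, n - dpt O S r e ≤ K → Lsum g O S r e = 1 by
    intro e; exact hsuf n e (by omega)
  intro K
  induction K with
  | zero => intro e he; have := dpt_lt H e; omega
  | succ K ih =>
    intro e he
    have hOr : O e ≠ r := O_ne_r H e
    rcases (H.int (O e) hOr).2 with hio | hio
    · have hleafe : Leaf O S e := by
        unfold inDeg at hio
        rw [Finset.card_eq_zero, Finset.filter_eq_empty_iff] at hio
        intro i hi
        exact hio (Finset.mem_univ i) hi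
      have hfil : Finset.univ.filter (fun e₀ => Leaf O S e₀ ∧ Below O S r e₀ e)
          = {e} := by
        ext e₀
        simp only [Finset.mem_filter, Finset.mem_univ, true_and, Finset.mem_singleton]
        constructor
        · rintro ⟨hl, hb⟩
          by_contra hne
          obtain ⟨e', hS', -, -⟩ := step_down H hb hne
          exact hleafe e' hS'
        · intro h
          exact ⟨h ▸ hleafe, h ▸ below_self e₀⟩
      unfold Lsum
      rw [hfil, Finset.sum_singleton, Nat.sub_self, pow_zero]
    · unfold inDeg at hio
      have hnotleaf : ¬ Leaf O S e := by
        intro hl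
        have hpos : 0 < (Finset.univ.filter (fun i => S i = O e)).card := by
          rw [hio]; omega
        obtain ⟨i, hi⟩ := Finset.card_pos.mp hpos
        exact hl i (Finset.mem_filter.mp hi).2
      have hbiu : Finset.univ.filter (fun e₀ => Leaf O S e₀ ∧ Below O S r e₀ e)
          = (Finset.univ.filter (fun e' => S e' = O e)).biUnion
              (fun e' => Finset.univ.filter
                (fun e₀ => Leaf O S e₀ ∧ Below O S r e₀ e')) := by
        ext e₀
        simp only [Finset.mem_filter, Finset.mem_univ, true_and, Finset.mem_biUnion]
        constructor
        · rintro ⟨hl, hb⟩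
          have hne : e₀ ≠ e := fun h => hnotleaf (h ▸ hl)
          obtain ⟨e', hS', hb', -⟩ := step_down H hb hne
          exact ⟨e', hS', hl, hb'⟩
        · rintro ⟨e', hS', hl, hb'⟩
          exact ⟨hl, below_trans_child H hS' hb'⟩
      have hdisj : (((Finset.univ.filter (fun e' => S e' = O e)) :
          Finset (Fin n)) : Set (Fin n)).PairwiseDisjoint
            (fun e' => Finset.univ.filter
              (fun e₀ => Leaf O S e₀ ∧ Below O S r e₀ e')) := by
        intro a ha b hbmem hab
        refine Finset.disjoint_left.mpr ?_
        intro e₀ hea heb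
        exfalso
        apply hab
        have hSa : S a = O e := by
          have := Finset.mem_coe.mp ha
          exact (Finset.mem_filter.mp this).2
        have hSb : S b = O e := by
          have := Finset.mem_coe.mp hbmem
          exact (Finset.mem_filter.mp this).2
        have hba : Below O S r e₀ a := (Finset.mem_filter.mp hea).2.2
        have hbb : Below O S r e₀ b := (Finset.mem_filter.mp heb).2.2
        have hda := (child_nx H hSa).2.2
        have hdb := (child_nx H hSb).2.2
        have hdd : dpt O S r a = dpt O S r b := by omega
        have h1 := hba.2
        have h2 := hbb.2
        rw [hdd] at h1
        exact h1.symm.trans h2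
      unfold Lsum
      rw [hbiu, Finset.sum_biUnion hdisj]
      have hterm : ∀ e' ∈ Finset.univ.filter (fun e' => S e' = O e),
          (∑ e₀ ∈ Finset.univ.filter (fun e₀ => Leaf O S e₀ ∧ Below O S r e₀ e'),
            ((g:ℝ)⁻¹) ^ (dpt O S r e₀ - dpt O S r e)) = (g:ℝ)⁻¹ := by
        intro e' he'
        have hmem := (Finset.mem_filter.mp he').2
        obtain ⟨hnx, hS, hd⟩ := child_nx H hmem
        have hstep : ∀ e₀ ∈ Finset.univ.filter
            (fun e₀ => Leaf O S e₀ ∧ Below O S r e₀ e'),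
            ((g:ℝ)⁻¹) ^ (dpt O S r e₀ - dpt O S r e)
              = (g:ℝ)⁻¹ * ((g:ℝ)⁻¹) ^ (dpt O S r e₀ - dpt O S r e') := by
          intro e₀ h0
          have hb' := (Finset.mem_filter.mp h0).2.2
          have heq : dpt O S r e₀ - dpt O S r e = (dpt O S r e₀ - dpt O S r e') + 1 := by
            have := hb'.1; omega
          rw [heq, pow_succ]
          ring
        rw [Finset.sum_congr rfl hstep, ← Finset.mul_sum]
        have hL : Lsum g O S r e' = 1 := by
          apply ih e'
          have hlt := dpt_lt H e'
          omega
        unfold Lsum at hL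
        rw [hL, mul_one]
      rw [Finset.sum_congr rfl hterm, Finset.sum_const, hio, nsmul_eq_mul]
      field_simp

lemma Gsum_eq (H : Hyp g O S r) (hg3 : 3 ≤ g) :
    ∀ e, Gsum g O S r e = (g:ℝ)/((g:ℝ)-2) := by
  have hg0 : (3:ℝ) ≤ (g:ℝ) := by exact_mod_cast hg3
  have hgne : (g:ℝ) ≠ 0 := by linarith
  have hg2 : (g:ℝ) - 2 ≠ 0 := by linarith
  suffices hsuf : ∀ K, ∀ e : Fin n, dpt O S r e = K →
      Gsum g O S r e = (g:ℝ)/((g:ℝ)-2) by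
    intro e; exact hsuf _ e rfl
  intro K
  induction K with
  | zero =>
    intro e h0
    have hSe : S e = r := by
      have := dpt_spec H e
      rwa [h0, Function.iterate_zero, id_eq] at this
    unfold Gsum aval
    rw [h0]
    simp [hSe]
  | succ K ih =>
    intro e hK
    have hSe : S e ≠ r := by
      intro h; rw [dpt_zero H h] at hK; omega
    have hnxd : dpt O S r (nx O S e) = K := by
      have := dpt_nx H hSe; omega
    unfold Gsum
    rw [hK, Finset.sum_range_succ']
    have hstep : ∀ i, aval g S r ((nx O S)^[i+1] e) * ((g:ℝ)⁻¹)^(i+1)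
        = (g:ℝ)⁻¹ * (aval g S r ((nx O S)^[i] (nx O S e)) * ((g:ℝ)⁻¹)^i) := by
      intro i
      rw [Function.iterate_succ_apply, pow_succ]
      ring
    rw [Finset.sum_congr rfl (fun i _ => hstep i), ← Finset.mul_sum]
    have hG := ih (nx O S e) hnxd
    unfold Gsum at hG
    rw [hnxd] at hG
    rw [hG]
    simp only [Function.iterate_zero, id_eq, pow_zero, mul_one]
    unfold aval
    rw [if_neg hSe]
    field_simp
    ring

end GTreeProof
namespace GTreeProof

theorem main (g : ℕ) (hg : 3 ≤ g) {n m : ℕ} (O S : Fin n → Fin m)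
    (htree : IsDirectedGTree g O S) :
    ∃ x : PathIdx n → ℝ, IsPathCovering O S x ∧
      coveringCost O S x = (g : ℝ) / ((g : ℝ) - 2) := by
  obtain ⟨hacyc, r, hr1, hr0, hint⟩ := htree
  have H : Hyp g O S r := ⟨hacyc, hr1, hr0, hint⟩
  have hg0 : (3:ℝ) ≤ (g:ℝ) := by exact_mod_cast hg
  have hn : 0 < n := by
    have h1 := H.r1
    unfold inDeg at h1
    have h2 := Finset.card_filter_le (Finset.univ : Finset (Fin n)) (fun i => S i = r)
    rw [h1] at h2
    exact Nat.lt_of_lt_of_le Nat.zero_lt_one (by simpa using h2)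
  have hcross : ∀ e, crossSum O S (xval g S r) e = (g:ℝ)/((g:ℝ)-2) := by
    intro e
    rw [crossSum_eq H e, Lsum_one H hg e, one_mul, Gsum_eq H hg e]
  refine ⟨xval g S r, ⟨?_, ?_, ?_⟩, ?_⟩
  · intro p
    unfold xval aval
    apply mul_nonneg
    · split
      · apply div_nonneg <;> linarith
      · apply div_nonneg <;> linarith
    · positivity
  · intro e _
    rw [hcross e, le_div_iff₀ (by linarith)]
    linarith
  · intro e f hnr hf
    have hSe : S e ≠ r := fun h => O_ne_r H f (by rw [hf, h])
    rw [endSum_eq H e, crossBoth_eq H e f hf, Lsum_one H hg e, Gsum_eq H hg e]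
    unfold aval
    rw [if_neg hSe, mul_one, one_mul]
    have h2 : (g:ℝ) - 2 ≠ 0 := by linarith
    have heq : ((g:ℝ)-1)/((g:ℝ)-2) - ((g:ℝ)/((g:ℝ)-2) - ((g:ℝ)-1)/((g:ℝ)-2))
        = ((g:ℝ)-2)/((g:ℝ)-2) := by ring
    rw [heq, div_self h2]
  · unfold coveringCost
    have : Nonempty (Fin n) := ⟨⟨0, hn⟩⟩
    simp only [hcross]
    exact ciSup_const

end GTreeProof
/-- For every integer `g ≥ 3`, every directed `g`-tree has a path covering of cost
`g / (g − 2)`. -/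
theorem g_tree_path_covering (g : ℕ) (hg : 3 ≤ g) {n m : ℕ}
    (O S : Fin n → Fin m) (htree : IsDirectedGTree g O S) :
    ∃ x : PathIdx n → ℝ, IsPathCovering O S x ∧
      coveringCost O S x = (g : ℝ) / ((g : ℝ) - 2) := by
  exact GTreeProof.main g hg O S htree
end

section
/- Let T be a directed 2-tree with N nodes. Then there exists a path covering of T of cost at most log₂ N. -/
namespace TwoTreeProof

open Finset

attribute [local instance] Classical.propDecidable

variable {n m : ℕ} (O S : Fin n → Fin m)

/-- successor edge (the unique out-edge of the head of `e`), or `e` itself if none. -/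
noncomputable def nxt (e : Fin n) : Fin n := if h : ∃ f, O f = S e then h.choose else e

/-- `u` is below `v` (v reachable from u). -/
def LeE (u v : Fin n) : Prop := ∃ k, (nxt O S)^[k] u = v

lemma leE_refl (u : Fin n) : LeE O S u u := ⟨0, rfl⟩

lemma leE_step (u : Fin n) : LeE O S u (nxt O S u) := ⟨1, rfl⟩

lemma leE_trans {u v w : Fin n} (h1 : LeE O S u v) (h2 : LeE O S v w) : LeE O S u w := by
  obtain ⟨k1, rfl⟩ := h1; obtain ⟨k2, rfl⟩ := h2
  exact ⟨k2 + k1, (Function.iterate_add_apply _ _ _ _)⟩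

lemma leE_comparable {d u v : Fin n} (h1 : LeE O S d u) (h2 : LeE O S d v) :
    LeE O S u v ∨ LeE O S v u := by
  obtain ⟨a, rfl⟩ := h1; obtain ⟨b, rfl⟩ := h2
  rcases le_total a b with h | h
  · left; exact ⟨b - a, by rw [← Function.iterate_add_apply, Nat.sub_add_cancel h]⟩
  · right; exact ⟨a - b, by rw [← Function.iterate_add_apply, Nat.sub_add_cancel h]⟩

variable (ht : IsDirectedGTree 2 O S)
include ht

noncomputable def root : Fin m := ht.2.choose

lemma root_in : inDeg S (root O S ht) = 1 := ht.2.choose_spec.1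
lemma root_out : outDeg O (root O S ht) = 0 := ht.2.choose_spec.2.1
lemma deg_spec : ∀ v, v ≠ root O S ht →
    outDeg O v = 1 ∧ (inDeg S v = 0 ∨ inDeg S v = 2) := ht.2.choose_spec.2.2

lemma O_ne_root (i : Fin n) : O i ≠ root O S ht := by
  intro hi
  have h0 : outDeg O (root O S ht) = 0 := root_out O S ht
  rw [outDeg, Finset.card_eq_zero, Finset.filter_eq_empty_iff] at h0
  exact h0 (Finset.mem_univ i) hi

lemma exists_out {v : Fin m} (hv : v ≠ root O S ht) : ∃ i, O i = v := by
  have h1 : outDeg O v = 1 := (deg_spec O S ht v hv).1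
  rw [outDeg, Finset.card_eq_one] at h1
  obtain ⟨a, ha⟩ := h1
  have := Finset.mem_singleton_self a
  rw [← ha, Finset.mem_filter] at this
  exact ⟨a, this.2⟩

lemma out_unique {v : Fin m} (hv : v ≠ root O S ht) {i j : Fin n}
    (hi : O i = v) (hj : O j = v) : i = j := by
  have h1 : outDeg O v = 1 := (deg_spec O S ht v hv).1
  rw [outDeg, Finset.card_eq_one] at h1
  obtain ⟨a, ha⟩ := h1
  have hi' : i ∈ Finset.univ.filter (fun i => O i = v) := by simp [hi]
  have hj' : j ∈ Finset.univ.filter (fun i => O i = v) := by simp [hj]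
  rw [ha, Finset.mem_singleton] at hi' hj'
  rw [hi', hj']

lemma exists_er : ∃ e, S e = root O S ht := by
  have h1 := root_in O S ht
  rw [inDeg, Finset.card_eq_one] at h1
  obtain ⟨a, ha⟩ := h1
  have := Finset.mem_singleton_self a
  rw [← ha, Finset.mem_filter] at this
  exact ⟨a, this.2⟩

/-- the root edge -/
noncomputable def er : Fin n := (exists_er O S ht).choose

lemma S_er : S (er O S ht) = root O S ht := (exists_er O S ht).choose_spec

lemma er_unique {e : Fin n} (he : S e = root O S ht) : e = er O S ht := by
  have h1 := root_in O S ht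
  rw [inDeg, Finset.card_eq_one] at h1
  obtain ⟨a, ha⟩ := h1
  have he' : e ∈ Finset.univ.filter (fun i => S i = root O S ht) := by simp [he]
  have hr' : er O S ht ∈ Finset.univ.filter (fun i => S i = root O S ht) := by
    simp [S_er O S ht]
  rw [ha, Finset.mem_singleton] at he' hr'
  rw [he', hr']

lemma ne_er_iff {e : Fin n} : e ≠ er O S ht ↔ S e ≠ root O S ht := by
  constructor
  · intro h1 h2; exact h1 (er_unique O S ht h2)
  · intro h1 h2; rw [h2] at h1; exact h1 (S_er O S ht)

lemma nxt_eq {e f : Fin n} (hf : O f = S e) : nxt O S e = f := by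
  have hex : ∃ f, O f = S e := ⟨f, hf⟩
  have hne : S e ≠ root O S ht := fun h => O_ne_root O S ht f (by rw [hf, h])
  rw [nxt, dif_pos hex]
  exact out_unique O S ht hne hex.choose_spec hf

lemma nxt_er : nxt O S (er O S ht) = er O S ht := by
  rw [nxt, dif_neg]
  push_neg
  intro f hf
  exact O_ne_root O S ht f (by rw [hf, S_er O S ht])

lemma O_nxt {e : Fin n} (he : e ≠ er O S ht) : O (nxt O S e) = S e := by
  have hne : S e ≠ root O S ht := (ne_er_iff O S ht).1 he
  have hex : ∃ f, O f = S e := exists_out O S ht hne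
  rw [nxt, dif_pos hex]
  exact hex.choose_spec

lemma iter_er (k : ℕ) : (nxt O S)^[k] (er O S ht) = er O S ht :=
  Function.iterate_fixed (nxt_er O S ht) k

lemma iter_cycle {e : Fin n} {c : ℕ} (hc : 0 < c) (h : (nxt O S)^[c] e = e) :
    e = er O S ht := by
  by_contra hne
  -- multiples of the cycle
  have hmul : ∀ k, (nxt O S)^[c * k] e = e := by
    intro k
    induction k with
    | zero => simp
    | succ k ih =>
      rw [Nat.mul_succ, Function.iterate_add_apply, h, ih]
  have hstep : ∀ j, (nxt O S)^[j] e ≠ er O S ht := by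
    intro j hj
    apply hne
    have hK : c * (j + 1) = (c * (j+1) - j) + j := by
      have : j ≤ c * (j + 1) := by nlinarith
      omega
    have : (nxt O S)^[c * (j+1)] e = er O S ht := by
      rw [hK, Function.iterate_add_apply, hj, iter_er]
    rw [hmul (j+1)] at this
    exact this
  apply ht.1 (c - 1) (fun a => (nxt O S)^[a.val] e)
  intro j
  have hcc : c - 1 + 1 = c := Nat.succ_pred_eq_of_pos hc
  have hlast : ((j : Fin (c - 1 + 1)) + 1).val = if j = Fin.last (c-1) then 0 else j.val + 1 :=
    Fin.val_add_one j
  by_cases hj : j = Fin.last (c - 1)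
  · rw [hlast, if_pos hj]
    have h1 : (nxt O S)^[j.val + 1] e = e := by
      rw [hj]; show (nxt O S)^[(c-1) + 1] e = e
      rw [hcc]; exact h
    have h2 : O ((nxt O S)^[j.val + 1] e) = S ((nxt O S)^[j.val] e) := by
      rw [Function.iterate_succ_apply']
      exact O_nxt O S ht (hstep j.val)
    rw [h1] at h2
    simpa using h2.symm
  · rw [hlast, if_neg hj]
    have h2 : O ((nxt O S)^[j.val + 1] e) = S ((nxt O S)^[j.val] e) := by
      rw [Function.iterate_succ_apply']
      exact O_nxt O S ht (hstep j.val)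
    simpa using h2.symm

lemma leE_antisymm {u v : Fin n} (h1 : LeE O S u v) (h2 : LeE O S v u) : u = v := by
  obtain ⟨a, rfl⟩ := h1
  obtain ⟨b, hb⟩ := h2
  rcases Nat.eq_zero_or_pos (b + a) with h | h
  · have : a = 0 := by omega
    rw [this]; rfl
  · have hcyc : (nxt O S)^[b + a] u = u := by
      rw [Function.iterate_add_apply]; exact hb
    have hu : u = er O S ht := iter_cycle O S ht h hcyc
    rw [hu, iter_er]

lemma reach_er (e : Fin n) : ∃ k, (nxt O S)^[k] e = er O S ht := by
  have hcard : Fintype.card (Fin n) < Fintype.card (Fin (n + 1)) := by simp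
  obtain ⟨x, y, hxy, hmap⟩ :=
    Fintype.exists_ne_map_eq_of_card_lt (fun k : Fin (n + 1) => (nxt O S)^[k.val] e) hcard
  rcases lt_or_gt_of_ne (fun h : x.val = y.val => hxy (Fin.ext h)) with h | h
  · have hcyc : (nxt O S)^[y.val - x.val] ((nxt O S)^[x.val] e) = (nxt O S)^[x.val] e := by
      rw [← Function.iterate_add_apply, Nat.sub_add_cancel (le_of_lt h)]
      exact hmap.symm
    have := iter_cycle O S ht (by omega) hcyc
    exact ⟨x.val, this⟩
  · have hcyc : (nxt O S)^[x.val - y.val] ((nxt O S)^[y.val] e) = (nxt O S)^[y.val] e := by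
      rw [← Function.iterate_add_apply, Nat.sub_add_cancel (le_of_lt h)]
      exact hmap
    have := iter_cycle O S ht (by omega) hcyc
    exact ⟨y.val, this⟩

lemma LeE_er (e : Fin n) : LeE O S e (er O S ht) := reach_er O S ht e

lemma LeE_er_eq {e : Fin n} (h : LeE O S (er O S ht) e) : e = er O S ht := by
  obtain ⟨k, rfl⟩ := h
  rw [iter_er]

noncomputable def rank (e : Fin n) : ℕ := Nat.find (reach_er O S ht e)

lemma rank_spec (e : Fin n) : (nxt O S)^[rank O S ht e] e = er O S ht :=
  Nat.find_spec (reach_er O S ht e)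

lemma rank_pos {e : Fin n} (he : e ≠ er O S ht) : 0 < rank O S ht e := by
  rcases Nat.eq_zero_or_pos (rank O S ht e) with h | h
  · exfalso; apply he
    have := rank_spec O S ht e
    rw [h] at this
    exact this
  · exact h

lemma rank_nxt {e : Fin n} (he : e ≠ er O S ht) :
    rank O S ht (nxt O S e) < rank O S ht e := by
  have h1 : 0 < rank O S ht e := rank_pos O S ht he
  have h2 : (nxt O S)^[rank O S ht e - 1] (nxt O S e) = er O S ht := by
    have h3 : (rank O S ht e - 1).succ = rank O S ht e := by omega
    rw [← Function.iterate_succ_apply, h3]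
    exact rank_spec O S ht e
  exact lt_of_le_of_lt (Nat.find_le h2) (Nat.pred_lt (Nat.pos_iff_ne_zero.1 h1))

end TwoTreeProof
namespace TwoTreeProof
attribute [local instance] Classical.propDecidable
variable {n m : ℕ} (O S : Fin n → Fin m) (ht : IsDirectedGTree 2 O S)
include ht

omit ht in
noncomputable def belowSet (e : Fin n) : Finset (Fin n) :=
  Finset.univ.filter (fun u => LeE O S u e)

omit ht in
noncomputable def tE (e : Fin n) : ℕ := (belowSet O S e).card + 1

omit ht in
noncomputable def gE (e : Fin n) : ℝ :=
  (Real.logb 2 m - Real.logb 2 (tE O S e)) / 2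

omit ht in
/-- `d` is a leaf edge. -/
def leafE (d : Fin n) : Prop := ∀ i, S i ≠ O d

lemma card_nodes : m = n + 1 := by
  have h1 : (Finset.univ : Finset (Fin n)).card
      = ∑ v : Fin m, (Finset.univ.filter (fun i => O i = v)).card :=
    Finset.card_eq_sum_card_fiberwise (fun i _ => Finset.mem_univ _)
  have h2 : ∑ v : Fin m, outDeg O v = n := by
    have h1' := h1.symm
    simp only [Finset.card_univ, Fintype.card_fin] at h1'
    calc ∑ v : Fin m, outDeg O v
        = ∑ v : Fin m, (Finset.filter (fun i => O i = v) Finset.univ).card :=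
          Finset.sum_congr rfl (fun v _ => by
            rw [outDeg])
      _ = n := h1'
  have h3 : ∑ v : Fin m, outDeg O v
      = outDeg O (root O S ht) + ∑ v ∈ Finset.univ.erase (root O S ht), outDeg O v :=
    (Finset.add_sum_erase _ _ (Finset.mem_univ _)).symm
  have h4 : ∑ v ∈ Finset.univ.erase (root O S ht), outDeg O v
      = (Finset.univ.erase (root O S ht)).card := by
    rw [Finset.card_eq_sum_ones]
    apply Finset.sum_congr rfl
    intro v hv
    exact (deg_spec O S ht v (Finset.mem_erase.1 hv).1).1
  have h5 : (Finset.univ.erase (root O S ht)).card = m - 1 := by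
    rw [Finset.card_erase_of_mem (Finset.mem_univ _)]
    simp
  have hm : 0 < m := (root O S ht).pos
  rw [h3, root_out, h4, h5] at h2
  omega

lemma n_pos : 0 < n := (er O S ht).pos

omit ht in
lemma mem_belowSet {u e : Fin n} : u ∈ belowSet O S e ↔ LeE O S u e := by
  simp [belowSet]

omit ht in
lemma self_mem_below' (e : Fin n) : e ∈ belowSet O S e :=
  (mem_belowSet O S).2 (leE_refl O S e)



lemma tE_le_m (e : Fin n) : tE O S e ≤ m := by
  have := Finset.card_le_univ (belowSet O S e)
  have h2 := card_nodes O S ht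
  simp only [Finset.card_univ, Fintype.card_fin] at this
  rw [tE]; omega

set_option linter.unusedSectionVars false in
lemma two_le_tE (e : Fin n) : 2 ≤ tE O S e := by
  have : 0 < (belowSet O S e).card :=
    Finset.card_pos.2 ⟨e, self_mem_below' O S e⟩
  rw [tE]; omega

lemma two_le_m : 2 ≤ m := by
  have := card_nodes O S ht; have := n_pos O S ht; omega

lemma below_er : belowSet O S (er O S ht) = Finset.univ := by
  apply Finset.eq_univ_of_forall
  intro u; exact (mem_belowSet O S).2 (LeE_er O S ht u)

lemma tE_er : tE O S (er O S ht) = m := by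
  rw [tE, below_er]
  simp [card_nodes O S ht]

lemma gE_nonneg (e : Fin n) : 0 ≤ gE O S e := by
  rw [gE]
  have h1 : (0:ℝ) < tE O S e := by
    have := two_le_tE O S ht e; positivity
  have h2 : (0:ℝ) < m := by have := two_le_m O S ht; positivity
  have h3 : (tE O S e : ℝ) ≤ m := by exact_mod_cast tE_le_m O S ht e
  have := (Real.logb_le_logb one_lt_two h1 h2).2 h3
  linarith

lemma gE_er : gE O S (er O S ht) = 0 := by
  rw [gE, tE_er]; ring

lemma no_self_loop (e : Fin n) : S e ≠ O e := by
  intro h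
  have h1 : nxt O S e = e := nxt_eq O S ht h.symm
  have h2 : (nxt O S)^[1] e = e := by simpa using h1
  have h3 : e = er O S ht := iter_cycle O S ht one_pos h2
  apply O_ne_root O S ht e
  rw [← h, h3]
  exact S_er O S ht

lemma child_ne {c e : Fin n} (h : S c = O e) : c ≠ e := by
  intro hce; rw [hce] at h; exact no_self_loop O S ht e h

lemma child_le {c e : Fin n} (h : S c = O e) : LeE O S c e := by
  have h1 : nxt O S c = e := nxt_eq O S ht h.symm
  rw [← h1]; exact leE_step O S c

lemma children_of_not_leaf {e : Fin n} (he : ¬ leafE O S e) :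
    ∃ c₁ c₂ : Fin n, c₁ ≠ c₂ ∧ S c₁ = O e ∧ S c₂ = O e ∧
      ∀ c, S c = O e → c = c₁ ∨ c = c₂ := by
  rw [leafE] at he
  push_neg at he
  obtain ⟨i, hi⟩ := he
  have hOe : O e ≠ root O S ht := O_ne_root O S ht e
  have hdeg := (deg_spec O S ht (O e) hOe).2
  have hne0 : inDeg S (O e) ≠ 0 := by
    intro h0
    rw [inDeg, Finset.card_eq_zero, Finset.filter_eq_empty_iff] at h0
    exact h0 (Finset.mem_univ i) hi
  have h2 : inDeg S (O e) = 2 := by tauto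
  rw [inDeg, Finset.card_eq_two] at h2
  obtain ⟨x, y, hxy, hset⟩ := h2
  refine ⟨x, y, hxy, ?_, ?_, ?_⟩
  · have : x ∈ Finset.univ.filter (fun i => S i = O e) := by rw [hset]; simp
    simpa using this
  · have : y ∈ Finset.univ.filter (fun i => S i = O e) := by rw [hset]; simp
    simpa using this
  · intro c hc
    have : c ∈ Finset.univ.filter (fun i => S i = O e) := by simp [hc]
    rw [hset] at this
    simpa using this

omit ht in
noncomputable def sib (e : Fin n) : Fin n :=
  if h : ∃ c, c ≠ e ∧ S c = S e then h.choose else e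

lemma sib_spec {e : Fin n} (he : e ≠ er O S ht) :
    sib S e ≠ e ∧ S (sib S e) = S e := by
  have hne : S e ≠ root O S ht := (ne_er_iff O S ht).1 he
  have hdeg := (deg_spec O S ht (S e) hne).2
  have hne0 : inDeg S (S e) ≠ 0 := by
    intro h0
    rw [inDeg, Finset.card_eq_zero, Finset.filter_eq_empty_iff] at h0
    exact h0 (Finset.mem_univ e) rfl
  have h2 : inDeg S (S e) = 2 := by tauto
  rw [inDeg, Finset.card_eq_two] at h2
  obtain ⟨x, y, hxy, hset⟩ := h2
  have hex : ∃ c, c ≠ e ∧ S c = S e := by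
    have hxmem : x ∈ Finset.univ.filter (fun i => S i = S e) := by rw [hset]; simp
    have hymem : y ∈ Finset.univ.filter (fun i => S i = S e) := by rw [hset]; simp
    simp only [Finset.mem_filter, Finset.mem_univ, true_and] at hxmem hymem
    by_cases hxe : x = e
    · exact ⟨y, by rw [← hxe]; exact hxy.symm, hymem⟩
    · exact ⟨x, hxe, hxmem⟩
  rw [sib, dif_pos hex]
  exact hex.choose_spec

lemma sib_unique {e c : Fin n} (he : e ≠ er O S ht) (h1 : c ≠ e) (h2 : S c = S e) :
    c = sib S e := by
  have hne : S e ≠ root O S ht := (ne_er_iff O S ht).1 he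
  have hdeg := (deg_spec O S ht (S e) hne).2
  have hne0 : inDeg S (S e) ≠ 0 := by
    intro h0
    rw [inDeg, Finset.card_eq_zero, Finset.filter_eq_empty_iff] at h0
    exact h0 (Finset.mem_univ e) rfl
  have hdeg2 : inDeg S (S e) = 2 := by tauto
  rw [inDeg, Finset.card_eq_two] at hdeg2
  obtain ⟨x, y, hxy, hset⟩ := hdeg2
  have hsib := sib_spec O S ht he
  have hmem : ∀ u : Fin n, S u = S e → u = x ∨ u = y := by
    intro u hu
    have : u ∈ Finset.univ.filter (fun i => S i = S e) := by simp [hu]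
    rw [hset] at this
    simpa using this
  rcases hmem e rfl with h | h
  · have hc : c = y := by
      rcases hmem c h2 with h' | h'
      · exact absurd (h'.trans h.symm) h1
      · exact h'
    have hsy : sib S e = y := by
      rcases hmem (sib S e) hsib.2 with h' | h'
      · exact absurd (h'.trans h.symm) hsib.1
      · exact h'
    rw [hc, hsy]
  · have hc : c = x := by
      rcases hmem c h2 with h' | h'
      · exact h'
      · exact absurd (h'.trans h.symm) h1
    have hsy : sib S e = x := by
      rcases hmem (sib S e) hsib.2 with h' | h'
      · exact h'
      · exact absurd (h'.trans h.symm) hsib.1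
    rw [hc, hsy]

lemma sib_ne_er {e : Fin n} (he : e ≠ er O S ht) : sib S e ≠ er O S ht := by
  rw [ne_er_iff O S ht, (sib_spec O S ht he).2]
  exact (ne_er_iff O S ht).1 he

lemma sib_sib {e : Fin n} (he : e ≠ er O S ht) : sib S (sib S e) = e := by
  have hs := sib_spec O S ht he
  exact (sib_unique O S ht (sib_ne_er O S ht he) (Ne.symm hs.1) hs.2.symm).symm

lemma nxt_sib {e : Fin n} (he : e ≠ er O S ht) : nxt O S (sib S e) = nxt O S e := by
  have hs := sib_spec O S ht he
  apply nxt_eq O S ht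
  rw [hs.2]
  exact O_nxt O S ht he

lemma below_step {d e : Fin n} (h : LeE O S d e) (hne : d ≠ e) :
    ∃ c, S c = O e ∧ LeE O S d c := by
  classical
  have hk := h
  set k0 := Nat.find hk with hk0
  have hspec : (nxt O S)^[k0] d = e := Nat.find_spec hk
  have hk0ne : k0 ≠ 0 := by
    intro h0
    apply hne
    rw [h0] at hspec
    exact hspec
  refine ⟨(nxt O S)^[k0 - 1] d, ?_, ⟨k0 - 1, rfl⟩⟩
  have hcne : (nxt O S)^[k0 - 1] d ≠ er O S ht := by
    intro hc
    have h1 : e = er O S ht := by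
      rw [← hspec]
      have : k0 = (k0 - 1) + 1 := by omega
      rw [this, Function.iterate_succ_apply', hc, nxt_er]
    have h2 : (nxt O S)^[k0 - 1] d = e := by rw [hc, ← h1]
    exact Nat.find_min hk (by omega) h2
  have hk1 : k0 - 1 + 1 = k0 := by omega
  have hnn : nxt O S ((nxt O S)^[k0 - 1] d) = e := by
    calc nxt O S ((nxt O S)^[k0 - 1] d) = (nxt O S)^[k0 - 1 + 1] d :=
          (Function.iterate_succ_apply' _ _ _).symm
      _ = e := by rw [hk1]; exact hspec
  have := O_nxt O S ht hcne
  rw [hnn] at this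
  exact this.symm

lemma below_disj {c₁ c₂ e : Fin n} (h1 : S c₁ = O e) (h2 : S c₂ = O e) (hne : c₁ ≠ c₂) :
    ∀ d, LeE O S d c₁ → LeE O S d c₂ → False := by
  intro d hd1 hd2
  have hcomp := leE_comparable O S hd1 hd2
  have key : ∀ a b : Fin n, S a = O e → S b = O e → a ≠ b → ¬ LeE O S a b := by
    intro a b ha hb hab ⟨k, hk⟩
    have hk0 : k ≠ 0 := by intro h0; rw [h0] at hk; exact hab hk
    have hna : nxt O S a = e := nxt_eq O S ht ha.symm
    have hbe : LeE O S e b := by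
      refine ⟨k - 1, ?_⟩
      have hk1 : k - 1 + 1 = k := by omega
      calc (nxt O S)^[k-1] e = (nxt O S)^[k-1] (nxt O S a) := by rw [hna]
        _ = (nxt O S)^[k-1+1] a := (Function.iterate_succ_apply _ _ _).symm
        _ = b := by rw [hk1]; exact hk
    have heb : LeE O S b e := child_le O S ht hb
    have : b = e := leE_antisymm O S ht heb hbe
    exact child_ne O S ht hb this
  rcases hcomp with h | h
  · exact key c₁ c₂ h1 h2 hne h
  · exact key c₂ c₁ h2 h1 hne.symm h

lemma below_split {e c₁ c₂ : Fin n} (h1 : S c₁ = O e) (h2 : S c₂ = O e)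
    (huniq : ∀ c, S c = O e → c = c₁ ∨ c = c₂) {d : Fin n} :
    LeE O S d e ↔ d = e ∨ LeE O S d c₁ ∨ LeE O S d c₂ := by
  constructor
  · intro h
    by_cases hde : d = e
    · exact Or.inl hde
    · obtain ⟨c, hc, hdc⟩ := below_step O S ht h hde
      rcases huniq c hc with rfl | rfl
      · exact Or.inr (Or.inl hdc)
      · exact Or.inr (Or.inr hdc)
  · rintro (rfl | h | h)
    · exact leE_refl O S d
    · exact leE_trans O S h (child_le O S ht h1)
    · exact leE_trans O S h (child_le O S ht h2)

lemma tE_split {e c₁ c₂ : Fin n} (h1 : S c₁ = O e) (h2 : S c₂ = O e) (hne : c₁ ≠ c₂)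
    (huniq : ∀ c, S c = O e → c = c₁ ∨ c = c₂) :
    tE O S e = tE O S c₁ + tE O S c₂ := by
  have henotin : ∀ i : Fin 2, True := fun _ => trivial
  have he1 : e ∉ belowSet O S c₁ := by
    rw [mem_belowSet]
    intro hec
    exact child_ne O S ht h1 (leE_antisymm O S ht (child_le O S ht h1) hec)
  have he2 : e ∉ belowSet O S c₂ := by
    rw [mem_belowSet]
    intro hec
    exact child_ne O S ht h2 (leE_antisymm O S ht (child_le O S ht h2) hec)
  have hdisj : Disjoint (belowSet O S c₁) (belowSet O S c₂) := by
    rw [Finset.disjoint_left]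
    intro d hd1 hd2
    exact below_disj O S ht h1 h2 hne d ((mem_belowSet O S).1 hd1)
      ((mem_belowSet O S).1 hd2)
  have hset : belowSet O S e = insert e (belowSet O S c₁ ∪ belowSet O S c₂) := by
    ext u
    rw [mem_belowSet, Finset.mem_insert, Finset.mem_union, mem_belowSet, mem_belowSet]
    exact below_split O S ht h1 h2 huniq
  have hnotin : e ∉ belowSet O S c₁ ∪ belowSet O S c₂ := by
    rw [Finset.mem_union]; tauto
  rw [tE, tE, tE, hset, Finset.card_insert_of_notMem hnotin, Finset.card_union_of_disjoint hdisj]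
  ring

lemma children_of_nxt {e : Fin n} (he : e ≠ er O S ht) :
    S e = O (nxt O S e) ∧ S (sib S e) = O (nxt O S e) ∧
      ∀ c, S c = O (nxt O S e) → c = e ∨ c = sib S e := by
  have hO : O (nxt O S e) = S e := O_nxt O S ht he
  refine ⟨hO.symm, by rw [hO, (sib_spec O S ht he).2], ?_⟩
  intro c hc
  rw [hO] at hc
  by_cases hce : c = e
  · exact Or.inl hce
  · exact Or.inr (sib_unique O S ht he hce hc)

lemma tE_nxt {e : Fin n} (he : e ≠ er O S ht) :
    tE O S (nxt O S e) = tE O S e + tE O S (sib S e) := by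
  obtain ⟨ha, hb, hu⟩ := children_of_nxt O S ht he
  exact tE_split O S ht ha hb (Ne.symm (sib_spec O S ht he).1) hu

lemma key_ineq {e : Fin n} (he : e ≠ er O S ht) :
    1 + 2 * gE O S (nxt O S e) ≤ gE O S e + gE O S (sib S e) := by
  have hs := tE_nxt O S ht he
  set a := tE O S e with hae
  set b := tE O S (sib S e) with hbe
  have ha2 : 2 ≤ a := two_le_tE O S ht e
  have hb2 : 2 ≤ b := two_le_tE O S ht (sib S e)
  have hpa : (0:ℝ) < a := by positivity
  have hpb : (0:ℝ) < b := by positivity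
  have hkey : 2 + Real.logb 2 a + Real.logb 2 b ≤ 2 * Real.logb 2 ((a:ℝ) + b) := by
    have h4 : Real.logb 2 (4 * (a * b)) ≤ Real.logb 2 (((a:ℝ) + b)^2) := by
      apply (Real.logb_le_logb one_lt_two (by positivity) (by positivity)).2
      nlinarith [sq_nonneg ((a:ℝ) - b)]
    have hL : Real.logb 2 (4 * ((a:ℝ) * b)) = 2 + Real.logb 2 a + Real.logb 2 b := by
      rw [Real.logb_mul (by norm_num) (by positivity), Real.logb_mul (by positivity) (by positivity)]
      have : (4:ℝ) = 2^(2:ℕ) := by norm_num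
      rw [this, Real.logb_pow, Real.logb_self_eq_one (by norm_num : (1:ℝ) < 2)]
      push_cast
      ring
    have hR : Real.logb 2 (((a:ℝ) + b)^2) = 2 * Real.logb 2 ((a:ℝ) + b) := by
      rw [Real.logb_pow]; norm_num
    rw [hL, hR] at h4
    exact h4
  rw [gE, gE, gE, hs]
  push_cast
  linarith

end TwoTreeProof
namespace TwoTreeProof
attribute [local instance] Classical.propDecidable
variable {n m : ℕ} (O S : Fin n → Fin m) (ht : IsDirectedGTree 2 O S)
include ht

noncomputable def bW : Fin n → ℝ := fun e =>
  if e = er O S ht then 0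
  else
    max 0 (min (1 + 2 * bW (nxt O S e))
      ((gE O S e - gE O S (sib S e) + (1 + 2 * bW (nxt O S e))) / 2))
termination_by e => rank O S ht e
decreasing_by all_goals exact rank_nxt O S ht (by assumption)

lemma bW_er : bW O S ht (er O S ht) = 0 := by
  rw [bW]; simp

lemma bW_eq {e : Fin n} (he : e ≠ er O S ht) :
    bW O S ht e = max 0 (min (1 + 2 * bW O S ht (nxt O S e))
      ((gE O S e - gE O S (sib S e) + (1 + 2 * bW O S ht (nxt O S e))) / 2)) := by
  conv_lhs => rw [bW]
  rw [if_neg he]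

lemma bW_nonneg (e : Fin n) : 0 ≤ bW O S ht e := by
  by_cases he : e = er O S ht
  · rw [he, bW_er]
  · rw [bW_eq O S ht he]; exact le_max_left _ _

lemma D_pos (e : Fin n) : (0:ℝ) < 1 + 2 * bW O S ht e := by
  have := bW_nonneg O S ht e; linarith

lemma D_ne (e : Fin n) : (1:ℝ) + 2 * bW O S ht e ≠ 0 := ne_of_gt (D_pos O S ht e)

omit ht in
lemma clamp_add {D x : ℝ} (hD : 0 ≤ D) :
    max 0 (min D x) + max 0 (min D (D - x)) = D := by
  rcases le_total x 0 with h | h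
  · rw [min_eq_right (by linarith : x ≤ D), max_eq_left (by linarith : x ≤ 0),
      min_eq_left (by linarith : D ≤ D - x), max_eq_right hD]
    ring
  · rcases le_total x D with h2 | h2
    · rw [min_eq_right h2, max_eq_right h,
        min_eq_right (by linarith : D - x ≤ D), max_eq_right (by linarith : 0 ≤ D - x)]
      ring
    · rw [min_eq_left h2, max_eq_right hD,
        min_eq_right (by linarith : D - x ≤ D), max_eq_left (by linarith : D - x ≤ 0)]
      ring

lemma bW_sib_sum {e : Fin n} (he : e ≠ er O S ht) :
    bW O S ht e + bW O S ht (sib S e) = 1 + 2 * bW O S ht (nxt O S e) := by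
  have hs := sib_spec O S ht he
  have hse : sib S e ≠ er O S ht := sib_ne_er O S ht he
  rw [bW_eq O S ht he, bW_eq O S ht hse, nxt_sib O S ht he, sib_sib O S ht he]
  set D := 1 + 2 * bW O S ht (nxt O S e) with hD
  have hD0 : 0 ≤ D := le_of_lt (D_pos O S ht _)
  have hx : (gE O S (sib S e) - gE O S e + D) / 2
      = D - (gE O S e - gE O S (sib S e) + D) / 2 := by ring
  rw [hx]
  exact clamp_add hD0

lemma bW_le_gE (e : Fin n) : bW O S ht e ≤ gE O S e := by
  by_cases he : e = er O S ht
  · rw [he, bW_er, gE_er]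
  · have IH : bW O S ht (nxt O S e) ≤ gE O S (nxt O S e) := bW_le_gE (nxt O S e)
    rw [bW_eq O S ht he]
    apply max_le (gE_nonneg O S ht e)
    apply le_trans (min_le_right _ _)
    have hk := key_ineq O S ht he
    linarith
termination_by rank O S ht e
decreasing_by exact rank_nxt O S ht he

lemma cost_bound (e : Fin n) : 1 + 2 * bW O S ht e ≤ Real.logb 2 m := by
  have h1 := bW_le_gE O S ht e
  have h2 : (1:ℝ) ≤ Real.logb 2 (tE O S e) := by
    have h3 : (2:ℝ) ≤ (tE O S e : ℝ) := by exact_mod_cast two_le_tE O S ht e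
    have := (Real.logb_le_logb one_lt_two (by norm_num) (by linarith)).2 h3
    rwa [Real.logb_self_eq_one (by norm_num : (1:ℝ) < 2)] at this
  rw [gE] at h1
  linarith

noncomputable def Q : Fin n → Fin n → ℝ := fun d e =>
  if d = e then 1
  else if d = er O S ht then 0
  else (bW O S ht d / (1 + 2 * bW O S ht (nxt O S d))) * Q (nxt O S d) e
termination_by d _ => rank O S ht d
decreasing_by exact rank_nxt O S ht (by assumption)

lemma Q_self (d : Fin n) : Q O S ht d d = 1 := by
  rw [Q]; simp

lemma Q_step {d e : Fin n} (hne : d ≠ e) (hder : d ≠ er O S ht) :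
    Q O S ht d e = (bW O S ht d / (1 + 2 * bW O S ht (nxt O S d))) * Q O S ht (nxt O S d) e := by
  conv_lhs => rw [Q]
  rw [if_neg hne, if_neg hder]

lemma Q_nonneg (d e : Fin n) : 0 ≤ Q O S ht d e := by
  by_cases hde : d = e
  · rw [hde, Q_self]; norm_num
  · by_cases hder : d = er O S ht
    · rw [Q]; rw [if_neg hde, if_pos hder]
    · rw [Q_step O S ht hde hder]
      have h1 := Q_nonneg (nxt O S d) e
      have h2 := bW_nonneg O S ht d
      have h3 := le_of_lt (D_pos O S ht (nxt O S d))
      positivity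
termination_by rank O S ht d
decreasing_by exact rank_nxt O S ht hder

omit ht in
lemma le_peel {d e : Fin n} (h : LeE O S d e) (hne : d ≠ e) : LeE O S (nxt O S d) e := by
  obtain ⟨k, hk⟩ := h
  have hk0 : k ≠ 0 := fun h0 => hne (by rw [h0] at hk; exact hk)
  refine ⟨k - 1, ?_⟩
  calc (nxt O S)^[k-1] (nxt O S d) = (nxt O S)^[k-1+1] d :=
        (Function.iterate_succ_apply _ _ _).symm
    _ = e := by rw [show k-1+1 = k by omega]; exact hk

lemma Q_trans {d e e' : Fin n} (h1 : LeE O S d e) (h2 : LeE O S e e') :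
    Q O S ht d e' = Q O S ht d e * Q O S ht e e' := by
  by_cases hde : d = e
  · subst hde; rw [Q_self]; ring
  · have hder : d ≠ er O S ht := by
      intro h; subst h
      exact hde (LeE_er_eq O S ht h1).symm
    have hdee' : d ≠ e' := by
      intro h; subst h
      exact hde (leE_antisymm O S ht h1 h2)
    have hpe : LeE O S (nxt O S d) e := le_peel O S h1 hde
    have IH := Q_trans (d := nxt O S d) hpe h2
    rw [Q_step O S ht hdee' hder, Q_step O S ht hde hder, IH]
    ring
termination_by rank O S ht d
decreasing_by exact rank_nxt O S ht hder

omit ht in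
noncomputable def aboveSet (e : Fin n) : Finset (Fin n) :=
  Finset.univ.filter (fun e' => LeE O S e e')

omit ht in
lemma mem_aboveSet {e e' : Fin n} : e' ∈ aboveSet O S e ↔ LeE O S e e' := by
  simp [aboveSet]

lemma above_er : aboveSet O S (er O S ht) = {er O S ht} := by
  ext e'
  rw [mem_aboveSet, Finset.mem_singleton]
  constructor
  · intro h; exact LeE_er_eq O S ht h
  · rintro rfl; exact leE_refl O S _

lemma not_self_above {e : Fin n} (he : e ≠ er O S ht) : e ∉ aboveSet O S (nxt O S e) := by
  rw [mem_aboveSet]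
  intro h
  have h2 : e = nxt O S e := leE_antisymm O S ht (leE_step O S e) h
  apply he
  exact iter_cycle O S ht one_pos (by simpa using h2.symm)

lemma above_eq {e : Fin n} (he : e ≠ er O S ht) :
    aboveSet O S e = insert e (aboveSet O S (nxt O S e)) := by
  ext e'
  rw [Finset.mem_insert, mem_aboveSet, mem_aboveSet]
  constructor
  · intro h
    by_cases hee' : e = e'
    · exact Or.inl hee'.symm
    · exact Or.inr (le_peel O S h hee')
  · rintro (rfl | h)
    · exact leE_refl O S _
    · exact leE_trans O S (leE_step O S e) h

lemma sum_above (e : Fin n) :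
    ∑ e' ∈ aboveSet O S e, (1 + bW O S ht e') * Q O S ht e e' = 1 + 2 * bW O S ht e := by
  by_cases he : e = er O S ht
  · subst he
    rw [above_er, Finset.sum_singleton, Q_self, bW_er]
    norm_num
  · rw [above_eq O S ht he, Finset.sum_insert (not_self_above O S ht he)]
    have hstep : ∑ e' ∈ aboveSet O S (nxt O S e), (1 + bW O S ht e') * Q O S ht e e'
        = (bW O S ht e / (1 + 2 * bW O S ht (nxt O S e)))
          * ∑ e' ∈ aboveSet O S (nxt O S e), (1 + bW O S ht e') * Q O S ht (nxt O S e) e' := by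
      rw [Finset.mul_sum]
      apply Finset.sum_congr rfl
      intro e' he'
      have hmem : LeE O S (nxt O S e) e' := (mem_aboveSet O S).1 he'
      have hnee' : e ≠ e' := by
        rintro rfl
        exact not_self_above O S ht he ((mem_aboveSet O S).2 hmem)
      rw [Q_step O S ht hnee' he]
      ring
    have IH := sum_above (nxt O S e)
    rw [hstep, IH, Q_self, div_mul_cancel₀ _ (D_ne O S ht (nxt O S e))]
    ring
termination_by rank O S ht e
decreasing_by exact rank_nxt O S ht he

lemma child_ne_er {c e : Fin n} (hc : S c = O e) : c ≠ er O S ht := by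
  rintro rfl
  exact O_ne_root O S ht e (by rw [← hc]; exact S_er O S ht)

lemma child_nxt {c e : Fin n} (hc : S c = O e) : nxt O S c = e :=
  nxt_eq O S ht hc.symm

lemma below_card_lt {c e : Fin n} (hc : S c = O e) :
    (belowSet O S c).card < (belowSet O S e).card := by
  apply Finset.card_lt_card
  rw [Finset.ssubset_iff_of_subset]
  · refine ⟨e, self_mem_below' O S e, ?_⟩
    rw [mem_belowSet]
    intro hec
    exact child_ne O S ht hc (leE_antisymm O S ht (child_le O S ht hc) hec)
  · intro d hd
    rw [mem_belowSet] at hd ⊢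
    exact leE_trans O S hd (child_le O S ht hc)

lemma sum_leaf (e : Fin n) :
    ∑ d ∈ Finset.univ.filter (fun d => leafE O S d ∧ LeE O S d e), Q O S ht d e = 1 := by
  by_cases hl : leafE O S e
  · have hset : Finset.univ.filter (fun d => leafE O S d ∧ LeE O S d e) = {e} := by
      ext d
      simp only [Finset.mem_filter, Finset.mem_univ, true_and, Finset.mem_singleton]
      constructor
      · rintro ⟨hld, hle⟩
        by_contra hne
        obtain ⟨c, hc, -⟩ := below_step O S ht hle hne
        exact hl c hc
      · rintro rfl
        exact ⟨hl, leE_refl O S _⟩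
    rw [hset, Finset.sum_singleton, Q_self]
  · obtain ⟨c₁, c₂, hc12, h1, h2, huniq⟩ := children_of_not_leaf O S ht hl
    have hsplit : Finset.univ.filter (fun d => leafE O S d ∧ LeE O S d e)
        = Finset.univ.filter (fun d => leafE O S d ∧ LeE O S d c₁)
          ∪ Finset.univ.filter (fun d => leafE O S d ∧ LeE O S d c₂) := by
      ext d
      simp only [Finset.mem_filter, Finset.mem_univ, true_and, Finset.mem_union]
      constructor
      · rintro ⟨hld, hle⟩
        rcases (below_split O S ht h1 h2 huniq).1 hle with rfl | h | h
        · exact absurd hld hl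
        · exact Or.inl ⟨hld, h⟩
        · exact Or.inr ⟨hld, h⟩
      · rintro (⟨hld, h⟩ | ⟨hld, h⟩)
        · exact ⟨hld, leE_trans O S h (child_le O S ht h1)⟩
        · exact ⟨hld, leE_trans O S h (child_le O S ht h2)⟩
    have hdisj : Disjoint (Finset.univ.filter (fun d => leafE O S d ∧ LeE O S d c₁))
        (Finset.univ.filter (fun d => leafE O S d ∧ LeE O S d c₂)) := by
      rw [Finset.disjoint_left]
      intro d hd1 hd2
      simp only [Finset.mem_filter, Finset.mem_univ, true_and] at hd1 hd2
      exact below_disj O S ht h1 h2 hc12 d hd1.2 hd2.2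
    have hterm : ∀ c, S c = O e →
        ∑ d ∈ Finset.univ.filter (fun d => leafE O S d ∧ LeE O S d c), Q O S ht d e
          = bW O S ht c / (1 + 2 * bW O S ht e) := by
      intro c hc
      have hQc : ∀ d ∈ Finset.univ.filter (fun d => leafE O S d ∧ LeE O S d c),
          Q O S ht d e = Q O S ht d c * Q O S ht c e := by
        intro d hd
        simp only [Finset.mem_filter, Finset.mem_univ, true_and] at hd
        exact Q_trans O S ht hd.2 (child_le O S ht hc)
      rw [Finset.sum_congr rfl hQc, ← Finset.sum_mul]
      have IH : ∑ d ∈ Finset.univ.filter (fun d => leafE O S d ∧ LeE O S d c),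
          Q O S ht d c = 1 := sum_leaf c
      rw [IH, one_mul, Q_step O S ht (child_ne O S ht hc) (child_ne_er O S ht hc),
        child_nxt O S ht hc, Q_self]
      ring
    rw [hsplit, Finset.sum_union hdisj, hterm c₁ h1, hterm c₂ h2, ← add_div]
    have hsum : bW O S ht c₁ + bW O S ht c₂ = 1 + 2 * bW O S ht e := by
      have hc1er : c₁ ≠ er O S ht := child_ne_er O S ht h1
      have hsib : c₂ = sib S c₁ := by
        apply sib_unique O S ht hc1er hc12.symm
        rw [h1, h2]
      have := bW_sib_sum O S ht hc1er
      rw [← hsib, child_nxt O S ht h1] at this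
      exact this
    rw [hsum, div_self (D_ne O S ht e)]
termination_by (belowSet O S e).card
decreasing_by
  all_goals exact below_card_lt O S ht (by assumption)

end TwoTreeProof
namespace TwoTreeProof
attribute [local instance] Classical.propDecidable
variable {n m : ℕ} (O S : Fin n → Fin m) (ht : IsDirectedGTree 2 O S)
include ht

lemma path_iter {p : PathIdx n} (hp : IsLeafPath O S p) :
    ∀ k (hk : k < (p.1 : ℕ) + 1), p.2 ⟨k, hk⟩ = (nxt O S)^[k] (p.2 0) := by
  intro k
  induction k with
  | zero =>
    intro hk
    have h0 : (⟨0, hk⟩ : Fin ((p.1 : ℕ) + 1)) = 0 := by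
      apply Fin.ext; simp
    rw [h0]
    simp
  | succ k ih =>
    intro hk
    have hk' : k < (p.1 : ℕ) + 1 := by omega
    have hkp : k < (p.1 : ℕ) := by omega
    have hcons := hp.1 ⟨k, hkp⟩
    have hcs : (⟨k, hkp⟩ : Fin (p.1 : ℕ)).castSucc = ⟨k, hk'⟩ := by
      apply Fin.ext; simp
    have hsc : (⟨k, hkp⟩ : Fin (p.1 : ℕ)).succ = ⟨k + 1, hk⟩ := by
      apply Fin.ext; simp
    rw [hcs, hsc] at hcons
    have hnx : nxt O S (p.2 ⟨k, hk'⟩) = p.2 ⟨k + 1, hk⟩ :=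
      nxt_eq O S ht hcons.symm
    rw [← hnx, ih hk']
    exact (Function.iterate_succ_apply' _ _ _).symm

lemma path_last (p : PathIdx n) (hp : IsLeafPath O S p) :
    p.2 (Fin.last (p.1 : ℕ)) = (nxt O S)^[(p.1 : ℕ)] (p.2 0) := by
  have := path_iter O S ht hp (p.1 : ℕ) (by omega)
  rw [← this]
  congr 1

lemma path_ne_er {p : PathIdx n} (hp : IsLeafPath O S p) {k : ℕ} (hk : k < (p.1 : ℕ)) :
    p.2 ⟨k, by omega⟩ ≠ er O S ht := by
  intro hEq
  have hcons := hp.1 ⟨k, hk⟩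
  have hcs : (⟨k, hk⟩ : Fin (p.1 : ℕ)).castSucc = ⟨k, by omega⟩ := by
    apply Fin.ext; simp
  rw [hcs, hEq, S_er O S ht] at hcons
  exact O_ne_root O S ht _ hcons.symm

lemma path_first_le {p : PathIdx n} (hp : IsLeafPath O S p) :
    LeE O S (p.2 0) (p.2 (Fin.last (p.1 : ℕ))) :=
  ⟨(p.1 : ℕ), (path_last O S ht p hp).symm⟩

lemma path_eq {p q : PathIdx n} (hp : IsLeafPath O S p) (hq : IsLeafPath O S q)
    (h0 : p.2 0 = q.2 0) (h1 : p.2 (Fin.last (p.1 : ℕ)) = q.2 (Fin.last (q.1 : ℕ))) :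
    p = q := by
  have key : ∀ p q : PathIdx n, IsLeafPath O S p → IsLeafPath O S q →
      p.2 0 = q.2 0 → p.2 (Fin.last (p.1 : ℕ)) = q.2 (Fin.last (q.1 : ℕ)) →
      (p.1 : ℕ) ≤ (q.1 : ℕ) → p = q := by
    intro p q hp hq h0 h1 hle
    have hteq : (p.1 : ℕ) = (q.1 : ℕ) := by
      by_contra hne
      have hlt : (p.1 : ℕ) < (q.1 : ℕ) := by omega
      have hcyc : (nxt O S)^[(q.1 : ℕ) - (p.1 : ℕ)] (p.2 (Fin.last (p.1 : ℕ)))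
          = p.2 (Fin.last (p.1 : ℕ)) := by
        conv_lhs => rw [path_last O S ht p hp, h0, ← Function.iterate_add_apply]
        rw [Nat.sub_add_cancel hle, ← path_last O S ht q hq, ← h1]
      have her : p.2 (Fin.last (p.1 : ℕ)) = er O S ht :=
        iter_cycle O S ht (by omega) hcyc
      -- q has er strictly before its last position
      have hq_at : q.2 ⟨(p.1 : ℕ), by omega⟩ = er O S ht := by
        rw [path_iter O S ht hq (p.1 : ℕ) (by omega), ← h0,
          ← path_last O S ht p hp, her]
      exact path_ne_er O S ht hq hlt hq_at
    obtain ⟨t1, f1⟩ := p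
    obtain ⟨t2, f2⟩ := q
    simp only at h0 h1 hteq
    have ht12 : t1 = t2 := Fin.ext hteq
    subst ht12
    have hfun : f1 = f2 := by
      funext j
      have hj := j.isLt
      have hj1 : f1 j = (nxt O S)^[(j : ℕ)] (f1 0) := by
        have := path_iter O S ht (p := ⟨t1, f1⟩) hp (j : ℕ) hj
        simpa using this
      have hj2 : f2 j = (nxt O S)^[(j : ℕ)] (f2 0) := by
        have := path_iter O S ht (p := ⟨t1, f2⟩) hq (j : ℕ) hj
        simpa using this
      rw [hj1, hj2, h0]
    rw [hfun]
  rcases le_total (p.1 : ℕ) (q.1 : ℕ) with h | h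
  · exact key p q hp hq h0 h1 h
  · exact (key q p hq hp h0.symm h1.symm h).symm

omit ht in
noncomputable def distE {d e : Fin n} (h : LeE O S d e) : ℕ := Nat.find h

omit ht in
lemma distE_spec {d e : Fin n} (h : LeE O S d e) : (nxt O S)^[distE O S h] d = e :=
  Nat.find_spec h

lemma distE_lt_n {d e : Fin n} (h : LeE O S d e) : distE O S h < n := by
  have key : ∀ a b : Fin (distE O S h + 1), (a : ℕ) < (b : ℕ) →
      (nxt O S)^[(a : ℕ)] d = (nxt O S)^[(b : ℕ)] d → False := by
    intro a b hab2 hab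
    have hble : (b : ℕ) ≤ distE O S h := by omega
    have heq2 : (nxt O S)^[distE O S h - (b : ℕ) + (a : ℕ)] d = e := by
      rw [Function.iterate_add_apply, hab, ← Function.iterate_add_apply,
        Nat.sub_add_cancel hble]
      exact distE_spec O S h
    have hlt : distE O S h - (b : ℕ) + (a : ℕ) < distE O S h := by omega
    exact Nat.find_min h hlt heq2
  have hinj : Function.Injective (fun j : Fin (distE O S h + 1) => (nxt O S)^[j.val] d) := by
    intro a b hab
    by_contra hne
    have hne2 : (a : ℕ) ≠ (b : ℕ) := fun hc => hne (Fin.ext hc)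
    simp only at hab
    rcases lt_or_gt_of_ne hne2 with hlt | hlt
    · exact key a b hlt hab
    · exact key b a hlt hab.symm
  have := Fintype.card_le_of_injective _ hinj
  simp only [Fintype.card_fin] at this
  have hn := n_pos O S ht
  omega

noncomputable def mkPath {d e : Fin n} (h : LeE O S d e) : PathIdx n :=
  ⟨⟨distE O S h, distE_lt_n O S ht h⟩, fun j => (nxt O S)^[j.val] d⟩

lemma mkPath_fst {d e : Fin n} (h : LeE O S d e) : (mkPath O S ht h).2 0 = d := by
  have h0 : (mkPath O S ht h).2 0 = (nxt O S)^[((0 : Fin (distE O S h + 1)) : ℕ)] d := rfl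
  rw [h0, Fin.val_zero, Function.iterate_zero_apply]

lemma mkPath_iter_ne_er {d e : Fin n} (h : LeE O S d e) {k : ℕ} (hk : k < distE O S h) :
    (nxt O S)^[k] d ≠ er O S ht := by
  intro hEq
  have hkk : (nxt O S)^[k] d = e := by
    have h2 : (nxt O S)^[distE O S h] d = e := distE_spec O S h
    have h3 : distE O S h = (distE O S h - k) + k := by omega
    rw [h3, Function.iterate_add_apply, hEq, iter_er] at h2
    rw [hEq, h2]
  exact Nat.find_min h hk hkk

lemma mkPath_last {d e : Fin n} (h : LeE O S d e) :
    (mkPath O S ht h).2 (Fin.last _) = e := by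
  show (nxt O S)^[(Fin.last (distE O S h)).val] d = e
  rw [Fin.val_last]
  exact distE_spec O S h

lemma mkPath_isLeafPath {d e : Fin n} (h : LeE O S d e) (hd : leafE O S d) :
    IsLeafPath O S (mkPath O S ht h) := by
  constructor
  · intro j
    show S ((nxt O S)^[(j.castSucc : ℕ)] d) = O ((nxt O S)^[(j.succ : ℕ)] d)
    rw [Fin.coe_castSucc, Fin.val_succ, Function.iterate_succ_apply']
    exact (O_nxt O S ht (mkPath_iter_ne_er O S ht h j.isLt)).symm
  · intro i
    rw [mkPath_fst O S ht h]
    exact hd i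

lemma crosses_iff {p : PathIdx n} (hp : IsLeafPath O S p) (e : Fin n) :
    Crosses p e ↔ (LeE O S (p.2 0) e ∧ LeE O S e (p.2 (Fin.last (p.1 : ℕ)))) := by
  constructor
  · rintro ⟨j, hj⟩
    have hji : p.2 j = (nxt O S)^[(j : ℕ)] (p.2 0) := by
      have := path_iter O S ht hp (j : ℕ) j.isLt
      rw [← this]
    constructor
    · exact ⟨(j : ℕ), by rw [← hji, hj]⟩
    · refine ⟨(p.1 : ℕ) - (j : ℕ), ?_⟩
      rw [← hj, hji, ← Function.iterate_add_apply,
        Nat.sub_add_cancel (by omega : (j : ℕ) ≤ (p.1 : ℕ)), ← path_last O S ht p hp]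
  · rintro ⟨⟨k, hk⟩, h2⟩
    by_cases hkt : k ≤ (p.1 : ℕ)
    · refine ⟨⟨k, by omega⟩, ?_⟩
      rw [path_iter O S ht hp k (by omega), hk]
    · have hlast : LeE O S (p.2 (Fin.last (p.1 : ℕ))) e := by
        refine ⟨k - (p.1 : ℕ), ?_⟩
        rw [path_last O S ht p hp, ← Function.iterate_add_apply,
          Nat.sub_add_cancel (by omega)]
        exact hk
      have : e = p.2 (Fin.last (p.1 : ℕ)) := leE_antisymm O S ht h2 hlast
      exact ⟨Fin.last _, this.symm⟩

noncomputable def xFun : PathIdx n → ℝ := fun p =>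
  if IsLeafPath O S p then
    (1 + bW O S ht (p.2 (Fin.last (p.1 : ℕ)))) * Q O S ht (p.2 0) (p.2 (Fin.last (p.1 : ℕ)))
  else 0

lemma xFun_nonneg (p : PathIdx n) : 0 ≤ xFun O S ht p := by
  rw [xFun]
  split
  · have h1 := bW_nonneg O S ht (p.2 (Fin.last (p.1 : ℕ)))
    have h2 := Q_nonneg O S ht (p.2 0) (p.2 (Fin.last (p.1 : ℕ)))
    positivity
  · exact le_refl 0

lemma sum_reindex (C : PathIdx n → Prop) (Rq : Fin n × Fin n → Prop)
    [instC : DecidablePred (fun p => IsLeafPath O S p ∧ C p)]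
    (hC : ∀ p, IsLeafPath O S p → (C p ↔ Rq (p.2 0, p.2 (Fin.last (p.1 : ℕ)))))
    (hR : ∀ q : Fin n × Fin n, Rq q → leafE O S q.1 ∧ LeE O S q.1 q.2) :
    ∑ p ∈ Finset.univ.filter (fun p => IsLeafPath O S p ∧ C p), xFun O S ht p
      = ∑ q ∈ (Finset.univ ×ˢ Finset.univ).filter Rq,
          (1 + bW O S ht q.2) * Q O S ht q.1 q.2 := by
  apply Finset.sum_bij (i := fun p _ => (p.2 0, p.2 (Fin.last (p.1 : ℕ))))
  · intro p hp
    rw [Finset.mem_filter] at hp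
    obtain ⟨-, hlp, hc⟩ := hp
    rw [Finset.mem_filter]
    exact ⟨Finset.mem_product.2 ⟨Finset.mem_univ _, Finset.mem_univ _⟩, (hC p hlp).1 hc⟩
  · intro p hp1 q hq1 hpq
    rw [Finset.mem_filter] at hp1 hq1
    rw [Prod.mk.injEq] at hpq
    exact path_eq O S ht hp1.2.1 hq1.2.1 hpq.1 hpq.2
  · intro q hq
    rw [Finset.mem_filter] at hq
    obtain ⟨-, hRq⟩ := hq
    obtain ⟨hleaf, hle⟩ := hR q hRq
    refine ⟨mkPath O S ht hle, ?_, ?_⟩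
    · rw [Finset.mem_filter]
      have hlp := mkPath_isLeafPath O S ht hle hleaf
      refine ⟨Finset.mem_univ _, hlp, ?_⟩
      apply (hC _ hlp).2
      rw [mkPath_fst O S ht hle, mkPath_last O S ht hle]
      exact hRq
    · have h1 := mkPath_fst O S ht hle
      have h2 := mkPath_last O S ht hle
      exact Prod.ext h1 h2
  · intro p hp
    rw [Finset.mem_filter] at hp
    rw [xFun, if_pos hp.2.1]

end TwoTreeProof
namespace TwoTreeProof
attribute [local instance] Classical.propDecidable
variable {n m : ℕ} (O S : Fin n → Fin m) (ht : IsDirectedGTree 2 O S)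
include ht

omit ht in
lemma sum_inst {α : Type*} (s : Finset α) (p : α → Prop) (h1 h2 : DecidablePred p)
    (f : α → ℝ) : (@Finset.filter _ p h1 s).sum f = (@Finset.filter _ p h2 s).sum f := by
  rw [Subsingleton.elim h1 h2]

omit ht in
lemma pair_sum (P1 P2 : Fin n → Prop) (F : Fin n → Fin n → ℝ) :
    ∑ q ∈ (Finset.univ ×ˢ Finset.univ).filter
        (fun q : Fin n × Fin n => P1 q.1 ∧ P2 q.2), F q.1 q.2
      = ∑ d ∈ Finset.univ.filter P1, ∑ e' ∈ Finset.univ.filter P2, F d e' := by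
  rw [Finset.filter_product, Finset.sum_product]

lemma inner_above {d e : Fin n} (hde : LeE O S d e) :
    ∑ e' ∈ aboveSet O S e, (1 + bW O S ht e') * Q O S ht d e'
      = Q O S ht d e * (1 + 2 * bW O S ht e) := by
  have hcng : ∀ e' ∈ aboveSet O S e,
      (1 + bW O S ht e') * Q O S ht d e'
        = Q O S ht d e * ((1 + bW O S ht e') * Q O S ht e e') := by
    intro e' he'
    rw [Q_trans O S ht hde ((mem_aboveSet O S).1 he')]
    ring
  rw [Finset.sum_congr rfl hcng, ← Finset.mul_sum, sum_above O S ht e]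

lemma inner_above' {d e : Fin n} (hde : LeE O S d e)
    (h : DecidablePred (fun e' => LeE O S e e')) :
    ∑ e' ∈ @Finset.filter _ (fun e' => LeE O S e e') h Finset.univ,
        (1 + bW O S ht e') * Q O S ht d e'
      = Q O S ht d e * (1 + 2 * bW O S ht e) :=
  Eq.trans (sum_inst _ _ _ _ _) (inner_above O S ht hde)

omit ht in
lemma sum_eq_filter' (e : Fin n) (F : Fin n → ℝ) (h : DecidablePred (fun e' : Fin n => e' = e)) :
    ∑ e' ∈ @Finset.filter _ (fun e' => e' = e) h Finset.univ, F e' = F e := by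
  have hset : @Finset.filter _ (fun e' => e' = e) h Finset.univ = {e} := by
    ext u
    simp only [Finset.mem_filter, Finset.mem_univ, true_and, Finset.mem_singleton]
  rw [hset, Finset.sum_singleton]

lemma sum_leaf' (e : Fin n) (h : DecidablePred (fun d => leafE O S d ∧ LeE O S d e)) :
    ∑ d ∈ @Finset.filter _ (fun d => leafE O S d ∧ LeE O S d e) h Finset.univ,
        Q O S ht d e = 1 :=
  Eq.trans (sum_inst _ _ _ _ _) (sum_leaf O S ht e)

lemma crossSum_eq (e : Fin n) :
    crossSum O S (xFun O S ht) e = 1 + 2 * bW O S ht e := by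
  rw [crossSum]
  refine Eq.trans (sum_reindex O S ht (fun p => Crosses p e)
      (fun q => (leafE O S q.1 ∧ LeE O S q.1 e) ∧ LeE O S e q.2)
      (fun p hp => ?_) (fun q hq => ?_)) ?_
  · constructor
    · intro hc
      obtain ⟨h1, h2⟩ := (crosses_iff O S ht hp e).1 hc
      exact ⟨⟨hp.2, h1⟩, h2⟩
    · rintro ⟨⟨-, h1⟩, h2⟩
      exact (crosses_iff O S ht hp e).2 ⟨h1, h2⟩
  · exact ⟨hq.1.1, leE_trans O S hq.1.2 hq.2⟩
  refine Eq.trans (Eq.trans (sum_inst _ _ _ _ _) (pair_sum (fun d => leafE O S d ∧ LeE O S d e) (fun e' => LeE O S e e') (fun d e' => (1 + bW O S ht e') * Q O S ht d e'))) ?_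
  refine Eq.trans (Finset.sum_congr (g := fun d => Q O S ht d e * (1 + 2 * bW O S ht e))
      rfl (fun d hd => ?_)) ?_
  · simp only [Finset.mem_filter] at hd
    exact inner_above' O S ht hd.2.2 _
  · rw [← Finset.sum_mul]
    refine Eq.trans (congrArg (fun t => t * (1 + 2 * bW O S ht e)) (sum_leaf' O S ht e _)) ?_
    exact one_mul _

lemma endSum_eq (e : Fin n) :
    endSum O S (xFun O S ht) e = 1 + bW O S ht e := by
  rw [endSum]
  refine Eq.trans (sum_reindex O S ht (fun p => EndsAt p e)
      (fun q => (leafE O S q.1 ∧ LeE O S q.1 e) ∧ q.2 = e)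
      (fun p hp => ?_) (fun q hq => ?_)) ?_
  · constructor
    · intro hend
      have hend' : p.2 (Fin.last (p.1 : ℕ)) = e := hend
      have hfl := path_first_le O S ht hp
      rw [hend'] at hfl
      exact ⟨⟨hp.2, hfl⟩, hend'⟩
    · rintro ⟨-, h2⟩
      exact h2
  · exact ⟨hq.1.1, by rw [hq.2]; exact hq.1.2⟩
  refine Eq.trans (Eq.trans (sum_inst _ _ _ _ _) (pair_sum (fun d => leafE O S d ∧ LeE O S d e) (fun e' : Fin n => e' = e) (fun d e' => (1 + bW O S ht e') * Q O S ht d e'))) ?_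
  refine Eq.trans (Finset.sum_congr (g := fun d => (1 + bW O S ht e) * Q O S ht d e)
      rfl (fun d _ => sum_eq_filter' e
        (fun e' => (1 + bW O S ht e') * Q O S ht d e') _)) ?_
  rw [← Finset.mul_sum]
  refine Eq.trans (congrArg (fun t => (1 + bW O S ht e) * t) (sum_leaf' O S ht e _)) ?_
  exact mul_one _

lemma crossBoth_eq {e : Fin n} (he : e ≠ er O S ht) :
    crossBothSum O S (xFun O S ht) e (nxt O S e) = bW O S ht e := by
  have hstep : LeE O S e (nxt O S e) := leE_step O S e
  have hef : e ≠ nxt O S e := by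
    intro h
    exact he (iter_cycle O S ht one_pos (by simpa using h.symm))
  rw [crossBothSum]
  refine Eq.trans (sum_reindex O S ht
      (fun p => Crosses p e ∧ Crosses p (nxt O S e))
      (fun q => (leafE O S q.1 ∧ LeE O S q.1 e) ∧ LeE O S (nxt O S e) q.2)
      (fun p hp => ?_) (fun q hq => ?_)) ?_
  · constructor
    · rintro ⟨ce, cf⟩
      exact ⟨⟨hp.2, ((crosses_iff O S ht hp e).1 ce).1⟩,
        ((crosses_iff O S ht hp (nxt O S e)).1 cf).2⟩
    · rintro ⟨⟨-, hde⟩, hfe'⟩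
      exact ⟨(crosses_iff O S ht hp e).2 ⟨hde, leE_trans O S hstep hfe'⟩,
        (crosses_iff O S ht hp (nxt O S e)).2 ⟨leE_trans O S hde hstep, hfe'⟩⟩
  · exact ⟨hq.1.1, leE_trans O S hq.1.2 (leE_trans O S hstep hq.2)⟩
  refine Eq.trans (Eq.trans (sum_inst _ _ _ _ _) (pair_sum (fun d => leafE O S d ∧ LeE O S d e) (fun e' => LeE O S (nxt O S e) e') (fun d e' => (1 + bW O S ht e') * Q O S ht d e'))) ?_
  have hQef : Q O S ht e (nxt O S e)
      = bW O S ht e / (1 + 2 * bW O S ht (nxt O S e)) := by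
    rw [Q_step O S ht hef he, Q_self]
    ring
  refine Eq.trans (Finset.sum_congr (g := fun d => Q O S ht d e * bW O S ht e)
      rfl (fun d hd => ?_)) ?_
  · simp only [Finset.mem_filter] at hd
    have h1 : LeE O S d (nxt O S e) := leE_trans O S hd.2.2 hstep
    refine Eq.trans (inner_above' O S ht (e := nxt O S e) h1 _) ?_
    rw [Q_trans O S ht hd.2.2 hstep, hQef, mul_assoc,
      div_mul_cancel₀ _ (D_ne O S ht (nxt O S e))]
  · rw [← Finset.sum_mul]
    refine Eq.trans (congrArg (fun t => t * bW O S ht e) (sum_leaf' O S ht e _)) ?_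
    exact one_mul _

lemma isRootEdge_iff {e : Fin n} : IsRootEdge O S e ↔ e = er O S ht := by
  constructor
  · intro hre
    by_contra hne
    have hSe : S e ≠ root O S ht := (ne_er_iff O S ht).1 hne
    obtain ⟨i, hi⟩ := exists_out O S ht hSe
    exact hre i hi
  · rintro rfl
    intro i
    rw [S_er O S ht]
    exact O_ne_root O S ht i

end TwoTreeProof
/-- Every directed 2-tree with `m` nodes has a path covering of cost at most `log₂ m`. -/
theorem two_tree_path_covering {n m : ℕ} (O S : Fin n → Fin m)
    (htree : IsDirectedGTree 2 O S) :
    ∃ x : PathIdx n → ℝ, IsPathCovering O S x ∧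
      coveringCost O S x ≤ Real.logb 2 m := by
  refine ⟨TwoTreeProof.xFun O S htree, ⟨?_, ?_, ?_⟩, ?_⟩
  · exact TwoTreeProof.xFun_nonneg O S htree
  · intro e _
    rw [TwoTreeProof.crossSum_eq O S htree e]
    have := TwoTreeProof.bW_nonneg O S htree e
    linarith
  · intro e f hnre hOf
    have he : e ≠ TwoTreeProof.er O S htree :=
      fun h => hnre ((TwoTreeProof.isRootEdge_iff O S htree).2 h)
    have hf : f = TwoTreeProof.nxt O S e := (TwoTreeProof.nxt_eq O S htree hOf).symm
    rw [TwoTreeProof.endSum_eq O S htree e, hf, TwoTreeProof.crossBoth_eq O S htree he]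
    linarith
  · rw [coveringCost]
    haveI : Nonempty (Fin n) := ⟨TwoTreeProof.er O S htree⟩
    apply ciSup_le
    intro e
    rw [TwoTreeProof.crossSum_eq O S htree e]
    exact TwoTreeProof.cost_bound O S htree e
end
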